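/- arXiv:2311.07436 — 3 statements merged into one kernel-verified Lean document; each statement's English description precedes it below -/
import Mathlib

section
/- Suppose σ is a compactly supported Borel probability measure on ℝ^d, T is nonzero, and 1 < p < q < ∞ is a valid pair for the convolution operator T. Then there is a function η ↦ δ(η) with δ(η) → 0 as η → 0⁺ such that for all sufficiently small η > 0 there exists R > 0 such that: for every f ∈ L^p(ℝ^d) with ‖Tf‖_q > (1−η)‖T‖_{p,q}‖f‖_p, there exists x₀ ∈ ℝ^d with ‖f · 1_{ℝ^d \ B(x₀, R)}‖_p ≤ δ(η) ‖f‖_p. -/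
open MeasureTheory Metric Filter
open scoped ENNReal Topology

noncomputable section

/-- Euclidean space `ℝ^d`. -/
abbrev Euc (d : ℕ) := EuclideanSpace ℝ (Fin d)

/-- The convolution operator `T f x = ∫ f (x - y) dσ(y)`. -/
def convOp {d : ℕ} {F : Type*} [NormedAddCommGroup F] [NormedSpace ℝ F]
    (σ : Measure (Euc d)) (f : Euc d → F) (x : Euc d) : F :=
  ∫ y, f (x - y) ∂σ

/-- The adjoint operator `T* g x = ∫ g (x + y) dσ(y)`. -/
def adjOp {d : ℕ} {F : Type*} [NormedAddCommGroup F] [NormedSpace ℝ F]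
    (σ : Measure (Euc d)) (g : Euc d → F) (x : Euc d) : F :=
  ∫ y, g (x + y) ∂σ

/-- The operator norm of an operator `T` acting on functions, from `L^p` to `L^q`,
as an extended nonnegative real. -/
def opNorm {d : ℕ} {F G : Type*} [NormedAddCommGroup F] [NormedAddCommGroup G]
    (T : (Euc d → F) → Euc d → G) (p q : ℝ≥0∞) : ℝ≥0∞ :=
  ⨆ (f : Euc d → F) (_ : MemLp f p volume) (_ : eLpNorm f p volume ≠ 0),
    eLpNorm (T f) q volume / eLpNorm f p volume

/-- The Fourier decay hypothesis: `|σ̂(ξ)| ≤ C (1+|ξ|)^{-α}` for some `C < ∞`, `α > 0`,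
where `σ̂(ξ) = ∫ e^{-2πi x·ξ} dσ(x)`. -/
def FourierDecay {d : ℕ} (σ : Measure (Euc d)) : Prop :=
  ∃ C : ℝ, ∃ α : ℝ, 0 < α ∧ ∀ ξ : Euc d,
    ‖∫ x, Complex.exp (-(2 * Real.pi * (inner ℝ x ξ : ℝ)) * Complex.I) ∂σ‖
      ≤ C * (1 + ‖ξ‖) ^ (-α)

/-- `(1/p, 1/q)` lies in the interior, relative to `[0,1]²`, of the set
`R(T) = {(1/r,1/s) ∈ [0,1]² : ‖T‖_{r,s} < ∞}` (reciprocal `u = 0` corresponds to the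
exponent `∞` via `(ENNReal.ofReal u)⁻¹`). -/
def NonEndpoint {d : ℕ} (σ : Measure (Euc d)) (p q : ℝ) : Prop :=
  ∃ ε > 0, ∀ u v : ℝ, u ∈ Set.Icc (0:ℝ) 1 → v ∈ Set.Icc (0:ℝ) 1 →
    |u - 1/p| < ε → |v - 1/q| < ε →
      opNorm (convOp (F := ℂ) σ) (ENNReal.ofReal u)⁻¹ (ENNReal.ofReal v)⁻¹ < ⊤

namespace locAux

variable {d : ℕ}

lemma ae_null_translate (σ : Measure (Euc d)) [IsProbabilityMeasure σ]
    {G : Set (Euc d)} (hG : MeasurableSet G) (hG0 : volume G = 0) :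
    ∀ᵐ x ∂(volume : Measure (Euc d)), σ {y | x - y ∈ G} = 0 := by
  have hm : Measurable fun p : Euc d × Euc d => p.1 - p.2 := measurable_fst.sub measurable_snd
  have hmeas : Measurable fun p : Euc d × Euc d =>
      G.indicator (fun _ => (1:ℝ≥0∞)) (p.1 - p.2) :=
    (measurable_const.indicator hG).comp hm
  have h1 : ∀ x : Euc d, σ {y | x - y ∈ G}
      = ∫⁻ y, G.indicator (fun _ => (1:ℝ≥0∞)) (x - y) ∂σ := by
    intro x
    have hpre : MeasurableSet ((fun y : Euc d => x - y) ⁻¹' G) :=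
      hG.preimage (measurable_const.sub measurable_id)
    have : (fun y : Euc d => G.indicator (fun _ => (1:ℝ≥0∞)) (x - y))
        = ((fun y : Euc d => x - y) ⁻¹' G).indicator (fun _ => (1:ℝ≥0∞)) := by
      funext y; by_cases h : x - y ∈ G <;> simp [Set.indicator, h]
    rw [this, lintegral_indicator hpre, setLIntegral_one]
    rfl
  have key : ∫⁻ x, σ {y | x - y ∈ G} ∂(volume : Measure (Euc d)) = 0 := by
    simp only [h1]
    rw [lintegral_lintegral_swap hmeas.aemeasurable]
    have : ∀ y : Euc d, ∫⁻ x, G.indicator (fun _ => (1:ℝ≥0∞)) (x - y)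
        ∂(volume : Measure (Euc d)) = 0 := by
      intro y
      have hpre : MeasurableSet ((fun x : Euc d => x - y) ⁻¹' G) :=
        hG.preimage (measurable_id.sub measurable_const)
      have heq : (fun x : Euc d => G.indicator (fun _ => (1:ℝ≥0∞)) (x - y))
          = ((fun x : Euc d => x - y) ⁻¹' G).indicator (fun _ => (1:ℝ≥0∞)) := by
        funext x; by_cases h : x - y ∈ G <;> simp [Set.indicator, h]
      rw [heq, lintegral_indicator hpre, setLIntegral_one]
      have : (fun x : Euc d => x - y) ⁻¹' G = (fun x : Euc d => x + (-y)) ⁻¹' G := by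
        simp [sub_eq_add_neg]
      rw [this, measure_preimage_add_right, hG0]
    simp only [this, lintegral_zero]
  have hmeas2 : Measurable fun x : Euc d =>
      ∫⁻ y, G.indicator (fun _ => (1:ℝ≥0∞)) (x - y) ∂σ :=
    hmeas.lintegral_prod_right'
  have hmeas3 : Measurable fun x : Euc d => σ {y | x - y ∈ G} := by
    have : (fun x : Euc d => σ {y | x - y ∈ G})
        = fun x => ∫⁻ y, G.indicator (fun _ => (1:ℝ≥0∞)) (x - y) ∂σ := funext h1
    rw [this]; exact hmeas2
  exact (lintegral_eq_zero_iff hmeas3).1 key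

lemma ae_slice (σ : Measure (Euc d)) [IsProbabilityMeasure σ]
    {f g : Euc d → ℂ} (h : f =ᵐ[(volume : Measure (Euc d))] g) :
    ∀ᵐ x ∂(volume : Measure (Euc d)),
      (fun y => f (x - y)) =ᵐ[σ] (fun y => g (x - y)) := by
  have hnull : volume {z : Euc d | f z ≠ g z} = 0 := h
  obtain ⟨G, hsub, hGm, hG0⟩ := exists_measurable_superset_of_null hnull
  filter_upwards [ae_null_translate σ hGm hG0] with x hx
  have : {y : Euc d | f (x - y) ≠ g (x - y)} ⊆ {y | x - y ∈ G} := fun y hy => hsub hy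
  exact measure_mono_null this hx

lemma aesm_convOp (σ : Measure (Euc d)) [IsProbabilityMeasure σ]
    {f : Euc d → ℂ} (hf : AEStronglyMeasurable f (volume : Measure (Euc d))) :
    AEStronglyMeasurable (convOp σ f) (volume : Measure (Euc d)) := by
  obtain ⟨g, hg, hfg⟩ := hf
  refine ⟨convOp σ g, ?_, ?_⟩
  · have : StronglyMeasurable fun p : Euc d × Euc d => g (p.1 - p.2) :=
      hg.comp_measurable (measurable_fst.sub measurable_snd)
    exact this.integral_prod_right'
  · filter_upwards [ae_slice σ hfg] with x hx
    exact integral_congr_ae hx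

lemma convOp_ae_zero (σ : Measure (Euc d)) [IsProbabilityMeasure σ]
    {f : Euc d → ℂ} (hf : f =ᵐ[(volume : Measure (Euc d))] 0) :
    convOp σ f =ᵐ[(volume : Measure (Euc d))] 0 := by
  filter_upwards [ae_slice σ hf] with x hx
  have : (fun y => f (x - y)) =ᵐ[σ] 0 := by
    filter_upwards [hx] with y hy using hy
  simpa [convOp] using integral_eq_zero_of_ae this

lemma convOp_vanish (σ : Measure (Euc d)) {ρ : ℝ}
    (hσρ : σ (closedBall (0:Euc d) ρ)ᶜ = 0)
    {s : Set (Euc d)} {f : Euc d → ℂ} (hf : ∀ z, z ∉ s → f z = 0)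
    {x : Euc d} (hx : ∀ y ∈ closedBall (0:Euc d) ρ, x - y ∉ s) :
    convOp σ f x = 0 := by
  have hae : ∀ᵐ y ∂σ, y ∈ closedBall (0:Euc d) ρ := by
    rw [ae_iff]
    exact hσρ
  have : (fun y => f (x - y)) =ᵐ[σ] 0 := by
    filter_upwards [hae] with y hy
    exact hf _ (hx y hy)
  simpa [convOp] using integral_eq_zero_of_ae this

end locAux

namespace locAux

variable {d : ℕ}

lemma convOp_norm_le (σ : Measure (Euc d)) [IsProbabilityMeasure σ]
    {P Q : ℝ≥0∞} (hP : P ≠ 0) {f : Euc d → ℂ} (hf : MemLp f P volume) :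
    eLpNorm (convOp σ f) Q volume
      ≤ opNorm (convOp (F := ℂ) σ) P Q * eLpNorm f P volume := by
  by_cases h0 : eLpNorm f P volume = 0
  · have hf0 : f =ᵐ[volume] 0 := (eLpNorm_eq_zero_iff hf.1 hP).1 h0
    have hz := convOp_ae_zero σ hf0
    rw [eLpNorm_congr_ae hz, h0, mul_zero, eLpNorm_zero]
  · have hle : eLpNorm (convOp σ f) Q volume / eLpNorm f P volume
        ≤ opNorm (convOp (F := ℂ) σ) P Q := by
      have s1 : eLpNorm (convOp σ f) Q volume / eLpNorm f P volume
          ≤ ⨆ (_ : eLpNorm f P volume ≠ 0),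
              eLpNorm (convOp σ f) Q volume / eLpNorm f P volume :=
        le_iSup (fun _ => eLpNorm (convOp σ f) Q volume / eLpNorm f P volume) h0
      have s2 : (⨆ (_ : eLpNorm f P volume ≠ 0),
              eLpNorm (convOp σ f) Q volume / eLpNorm f P volume)
          ≤ ⨆ (_ : MemLp f P volume) (_ : eLpNorm f P volume ≠ 0),
              eLpNorm (convOp σ f) Q volume / eLpNorm f P volume :=
        le_iSup (fun _ => ⨆ (_ : eLpNorm f P volume ≠ 0),
          eLpNorm (convOp σ f) Q volume / eLpNorm f P volume) hf
      refine (s1.trans s2).trans ?_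
      exact le_iSup (fun g => ⨆ (_ : MemLp g P volume) (_ : eLpNorm g P volume ≠ 0),
        eLpNorm (convOp σ g) Q volume / eLpNorm g P volume) f
    rw [ENNReal.div_le_iff_le_mul (Or.inl h0) (Or.inl hf.2.ne)] at hle
    exact hle

lemma eLpNorm_indicator_rpow (p : ℝ) (hp : 0 < p) {f : Euc d → ℂ}
    {s : Set (Euc d)} (hs : MeasurableSet s) :
    eLpNorm (s.indicator f) (ENNReal.ofReal p) volume
      = ((volume : Measure (Euc d)).withDensity
          (fun x => (‖f x‖₊ : ℝ≥0∞) ^ p) s) ^ (1/p) := by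
  rw [eLpNorm_indicator_eq_eLpNorm_restrict hs,
    eLpNorm_eq_lintegral_rpow_enorm_toReal
      (by simpa [ENNReal.ofReal_eq_zero] using hp) ENNReal.ofReal_ne_top,
    ENNReal.toReal_ofReal hp.le, withDensity_apply _ hs]
  rfl

lemma eLpNorm_rpow (p : ℝ) (hp : 0 < p) (f : Euc d → ℂ) :
    eLpNorm f (ENNReal.ofReal p) volume
      = ((volume : Measure (Euc d)).withDensity
          (fun x => (‖f x‖₊ : ℝ≥0∞) ^ p) Set.univ) ^ (1/p) := by
  have := eLpNorm_indicator_rpow (d := d) p hp (f := f) MeasurableSet.univ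
  simpa [Set.indicator_univ] using this

lemma coord_le_norm (x : Euc d) (i : Fin d) : |x i| ≤ ‖x‖ := by
  rw [EuclideanSpace.norm_eq]
  have h1 : |x i| = Real.sqrt (‖x i‖ ^ 2) := by
    rw [Real.sqrt_sq_eq_abs]; simp [Real.norm_eq_abs]
  rw [h1]
  apply Real.sqrt_le_sqrt
  exact Finset.single_le_sum (f := fun j => ‖x j‖ ^ 2)
    (fun j _ => sq_nonneg _) (Finset.mem_univ i)

lemma norm_le_of_coords {x : Euc d} {c : ℝ} (hc : 0 ≤ c) (h : ∀ i, |x i| ≤ c) :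
    ‖x‖ ≤ c * (d + 1) := by
  rw [EuclideanSpace.norm_eq]
  have h1 : ∑ i, ‖x i‖ ^ 2 ≤ (c * (d+1))^2 := by
    calc ∑ i, ‖x i‖ ^ 2 ≤ ∑ _i : Fin d, c^2 := by
          apply Finset.sum_le_sum
          intro i _
          have := h i
          rw [Real.norm_eq_abs]
          nlinarith [abs_nonneg (x i)]
      _ = d * c^2 := by simp [mul_comm]
      _ ≤ (c * (d+1))^2 := by nlinarith [sq_nonneg c]
  calc Real.sqrt (∑ i, ‖x i‖ ^ 2) ≤ Real.sqrt ((c * (d+1))^2) := Real.sqrt_le_sqrt h1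
    _ = c * (d+1) := Real.sqrt_sq (by positivity)

end locAux

namespace locAux

lemma eLpNorm_ofReal_eq {d : ℕ} (q : ℝ) (hq : 0 < q) (g : Euc d → ℂ) :
    eLpNorm g (ENNReal.ofReal q) volume
      = (∫⁻ x, (‖g x‖₊ : ℝ≥0∞) ^ q ∂(volume : Measure (Euc d))) ^ (1/q) := by
  rw [eLpNorm_eq_lintegral_rpow_enorm_toReal
      (by simp [ENNReal.ofReal_eq_zero, not_le, hq]) ENNReal.ofReal_ne_top,
    ENNReal.toReal_ofReal hq.le]
  rfl

lemma eLpNorm_ofReal_pow {d : ℕ} (q : ℝ) (hq : 0 < q) (g : Euc d → ℂ) :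
    eLpNorm g (ENNReal.ofReal q) volume ^ q
      = ∫⁻ x, (‖g x‖₊ : ℝ≥0∞) ^ q ∂(volume : Measure (Euc d)) := by
  rw [eLpNorm_ofReal_eq q hq g, ← ENNReal.rpow_mul, one_div, inv_mul_cancel₀ hq.ne',
    ENNReal.rpow_one]

end locAux

namespace locAux

variable {d : ℕ}

/-- Step 1: a near-extremizer has a ball of bounded radius carrying a definite
fraction of its `L^p` mass. -/
lemma exists_heavy_ball (σ : Measure (Euc d)) [IsProbabilityMeasure σ]
    {ρ : ℝ} (hρ1 : 1 ≤ ρ) (hσρ : σ (closedBall (0:Euc d) ρ)ᶜ = 0)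
    {p q : ℝ} (hp : 1 < p) (hpq : p < q)
    (hvalid : opNorm (convOp (F := ℂ) σ) (ENNReal.ofReal p) (ENNReal.ofReal q) < ⊤)
    {f : Euc d → ℂ} (hf : MemLp f (ENNReal.ofReal p) volume)
    (hf0 : eLpNorm f (ENNReal.ofReal p) volume ≠ 0)
    {η : ℝ} (hη0 : 0 < η) (hη : η ≤ 1/2)
    (hnear : ENNReal.ofReal (1 - η)
        * opNorm (convOp (F := ℂ) σ) (ENNReal.ofReal p) (ENNReal.ofReal q)
        * eLpNorm f (ENNReal.ofReal p) volume
      < eLpNorm (convOp σ f) (ENNReal.ofReal q) volume) :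
    ∃ x₀ : Euc d,
      ENNReal.ofReal (((2:ℝ) ^ (-q - d*q)) ^ (p/(q-p)))
          * (volume : Measure (Euc d)).withDensity (fun x => (‖f x‖₊ : ℝ≥0∞) ^ p) Set.univ
        < (volume : Measure (Euc d)).withDensity (fun x => (‖f x‖₊ : ℝ≥0∞) ^ p)
            (closedBall x₀ (2*ρ*(d+1))) := by
  classical
  have hp0 : (0:ℝ) < p := lt_trans one_pos hp
  have hq0 : (0:ℝ) < q := lt_trans hp0 hpq
  have hρ0 : (0:ℝ) < ρ := lt_of_lt_of_le one_pos hρ1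
  set P := ENNReal.ofReal p with hPdef
  set Q := ENNReal.ofReal q with hQdef
  have hP0 : P ≠ 0 := by simp [hPdef, ENNReal.ofReal_eq_zero, not_le, hp0]
  have hQ0 : Q ≠ 0 := by simp [hQdef, ENNReal.ofReal_eq_zero, not_le, hq0]
  set A := opNorm (convOp (F := ℂ) σ) P Q with hAdef
  set μf := (volume : Measure (Euc d)).withDensity (fun x => (‖f x‖₊ : ℝ≥0∞) ^ p) with hμfdef
  set I := μf Set.univ with hIdef
  have hIsnorm : eLpNorm f P volume = I ^ (1/p) := eLpNorm_rpow p hp0 f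
  have hItop : I ≠ ⊤ := by
    intro h
    have := hf.2
    rw [hIsnorm, h, ENNReal.top_rpow_of_pos (by positivity)] at this
    exact (lt_irrefl _ this).elim
  have hI0 : I ≠ 0 := by
    intro h
    apply hf0
    rw [hIsnorm, h, ENNReal.zero_rpow_of_pos (by positivity)]
  set s : ℝ := 2*ρ with hsdef
  have hs0 : (0:ℝ) < s := by positivity
  -- the lattice of cubes
  set key : Euc d → (Fin d → ℤ) := fun x i => ⌊x i / s⌋ with hkeydef
  have hkeym : Measurable key := by
    apply measurable_pi_lambda
    intro i
    exact Int.measurable_floor.comp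
      (((EuclideanSpace.proj i : Euc d →L[ℝ] ℝ).continuous.measurable).div_const s)
  set cube : (Fin d → ℤ) → Set (Euc d) := fun k => key ⁻¹' {k} with hcubedef
  have hcubem : ∀ k, MeasurableSet (cube k) := fun k =>
    hkeym (measurableSet_singleton k)
  have hcube_mem : ∀ (x : Euc d) (k), x ∈ cube k ↔ key x = k := by
    intro x k; simp [hcubedef]
  have hdisj : Pairwise (Function.onFun Disjoint cube) := by
    intro k k' hkk'
    rw [Function.onFun, Set.disjoint_left]
    intro x hx hx'
    exact hkk' (((hcube_mem x k).1 hx).symm.trans ((hcube_mem x k').1 hx'))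
  have hcover : (⋃ k, cube k) = Set.univ := by
    ext x
    simp only [Set.mem_iUnion, Set.mem_univ, iff_true]
    exact ⟨key x, (hcube_mem x (key x)).2 rfl⟩
  have htsum : ∑' k, μf (cube k) = I := by
    rw [hIdef, ← hcover, measure_iUnion hdisj hcubem]
  -- pieces
  set fk : (Fin d → ℤ) → Euc d → ℂ := fun k => (cube k).indicator f with hfkdef
  have hfk : ∀ k, MemLp (fk k) P volume := fun k => hf.indicator (hcubem k)
  have hfkaesm : ∀ k, AEStronglyMeasurable (convOp σ (fk k)) volume :=
    fun k => aesm_convOp σ (hfk k).1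
  -- the finite set of relevant cubes
  set S : Euc d → Finset (Fin d → ℤ) := fun x =>
    Fintype.piFinset fun i => ({⌊(x i + ρ)/s⌋ - 1, ⌊(x i + ρ)/s⌋} : Finset ℤ) with hSdef
  have hSne : ∀ x, (S x).Nonempty := by
    intro x
    exact ⟨fun i => ⌊(x i + ρ)/s⌋, by simp [hSdef]⟩
  have hScard : ∀ x, ((S x).card : ℝ≥0∞) ≤ (2:ℝ≥0∞)^(d:ℕ) := by
    intro x
    have h1 : (S x).card ≤ 2^d := by
      rw [hSdef]
      simp only [Fintype.card_piFinset]
      calc ∏ i : Fin d, ({⌊(x i + ρ)/s⌋ - 1, ⌊(x i + ρ)/s⌋} : Finset ℤ).card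
          ≤ 2 ^ (Finset.univ : Finset (Fin d)).card :=
            Finset.prod_le_pow_card _ _ 2 (fun i _ => Finset.card_insert_le _ _)
        _ = 2^d := by simp
    exact_mod_cast h1
  have hSx : ∀ (x y : Euc d), y ∈ closedBall (0:Euc d) ρ → key (x - y) ∈ S x := by
    intro x y hy
    have hynorm : ‖y‖ ≤ ρ := by rwa [mem_closedBall, dist_zero_right] at hy
    rw [hSdef, Fintype.mem_piFinset]
    intro i
    have hyi : |y i| ≤ ρ := (coord_le_norm y i).trans hynorm
    have hyi1 : y i ≤ ρ := (le_abs_self _).trans hyi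
    have hyi2 : -ρ ≤ y i := neg_le_of_abs_le hyi
    have hsub : (x - y) i = x i - y i := rfl
    have hup : key (x - y) i ≤ ⌊(x i + ρ)/s⌋ := by
      apply Int.floor_le_floor
      rw [hsub]
      exact (div_le_div_iff_of_pos_right hs0).2 (by linarith)
    have hlow : ⌊(x i + ρ)/s⌋ - 1 ≤ key (x - y) i := by
      have h1 : ((⌊(x i + ρ)/s⌋ - 1 : ℤ) : ℝ) ≤ (x i - y i)/s := by
        push_cast
        have h2 : (⌊(x i + ρ)/s⌋ : ℝ) ≤ (x i + ρ)/s := Int.floor_le _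
        have h3 : (x i + ρ)/s - 1 ≤ (x i - y i)/s := by
          have hss : s/s = 1 := div_self hs0.ne'
          rw [← hss, div_sub_div_same]
          exact (div_le_div_iff_of_pos_right hs0).2 (by linarith [hsdef.le, hsdef.ge])
        linarith
      have := Int.le_floor.2 h1
      exact this
    simp only [Finset.mem_insert, Finset.mem_singleton]
    omega
  -- pointwise decomposition bound
  have hptw : ∀ x : Euc d, (‖convOp σ f x‖₊ : ℝ≥0∞)
      ≤ ∑ k ∈ S x, (‖convOp σ (fk k) x‖₊ : ℝ≥0∞) := by
    intro x
    by_cases hint : Integrable (fun y => f (x - y)) σ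
    · have hae : ∀ᵐ y ∂σ, y ∈ closedBall (0:Euc d) ρ := by
        rw [ae_iff]; exact hσρ
      have hdecomp : ∀ᵐ y ∂σ, f (x - y) = ∑ k ∈ S x, fk k (x - y) := by
        filter_upwards [hae] with y hy
        have hkmem : key (x - y) ∈ S x := hSx x y hy
        rw [Finset.sum_eq_single (key (x - y))]
        · rw [hfkdef]
          simp only
          rw [Set.indicator_of_mem ((hcube_mem (x - y) _).2 rfl)]
        · intro k hk hne
          rw [hfkdef]
          simp only
          rw [Set.indicator_of_notMem]
          intro hmem
          exact hne (((hcube_mem (x - y) k).1 hmem) ▸ rfl)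
        · intro h; exact absurd hkmem h
      have hintk : ∀ k ∈ S x, Integrable (fun y => fk k (x - y)) σ := by
        intro k _
        have heq : (fun y => fk k (x - y))
            = fun y => ((fun y : Euc d => x - y) ⁻¹' cube k).indicator
                (fun y => f (x - y)) y := by
          funext y
          by_cases h : x - y ∈ cube k <;>
            simp [hfkdef, Set.indicator, h, Set.mem_preimage]
        rw [heq]
        exact hint.indicator ((hcubem k).preimage (measurable_const.sub measurable_id))
      have hTeq : convOp σ f x = ∑ k ∈ S x, convOp σ (fk k) x := by
        rw [convOp, integral_congr_ae hdecomp, integral_finset_sum _ hintk]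
        rfl
      rw [hTeq, ← ENNReal.coe_finset_sum]
      exact ENNReal.coe_le_coe.2 (nnnorm_sum_le _ _)
    · rw [convOp, integral_undef hint]
      simp
  -- pointwise q-th power bound
  have hptw2 : ∀ x : Euc d, (‖convOp σ f x‖₊ : ℝ≥0∞) ^ q
      ≤ ((2:ℝ≥0∞)^(d:ℕ)) ^ q * ∑ k ∈ S x, (‖convOp σ (fk k) x‖₊ : ℝ≥0∞) ^ q := by
    intro x
    obtain ⟨k0, hk0, hk0eq⟩ := Finset.exists_mem_eq_sup (S x) (hSne x)
      (fun k => (‖convOp σ (fk k) x‖₊ : ℝ≥0∞))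
    have h1 : (‖convOp σ f x‖₊ : ℝ≥0∞)
        ≤ (2:ℝ≥0∞)^(d:ℕ) * (‖convOp σ (fk k0) x‖₊ : ℝ≥0∞) := by
      refine (hptw x).trans ?_
      calc ∑ k ∈ S x, (‖convOp σ (fk k) x‖₊ : ℝ≥0∞)
          ≤ (S x).card • (‖convOp σ (fk k0) x‖₊ : ℝ≥0∞) := by
            refine Finset.sum_le_card_nsmul _ _ _ (fun k hk => ?_)
            have h2 : (‖convOp σ (fk k) x‖₊ : ℝ≥0∞)
                ≤ (S x).sup (fun k => (‖convOp σ (fk k) x‖₊ : ℝ≥0∞)) :=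
              Finset.le_sup (f := fun k => (‖convOp σ (fk k) x‖₊ : ℝ≥0∞)) hk
            rw [hk0eq] at h2
            exact h2
        _ = ((S x).card : ℝ≥0∞) * (‖convOp σ (fk k0) x‖₊ : ℝ≥0∞) := by rw [nsmul_eq_mul]
        _ ≤ (2:ℝ≥0∞)^(d:ℕ) * (‖convOp σ (fk k0) x‖₊ : ℝ≥0∞) :=
            mul_le_mul_left (hScard x) _
    have h2 : (‖convOp σ (fk k0) x‖₊ : ℝ≥0∞) ^ q
        ≤ ∑ k ∈ S x, (‖convOp σ (fk k) x‖₊ : ℝ≥0∞) ^ q :=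
      Finset.single_le_sum (f := fun k => (‖convOp σ (fk k) x‖₊ : ℝ≥0∞) ^ q)
        (fun k _ => zero_le) hk0
    calc (‖convOp σ f x‖₊ : ℝ≥0∞) ^ q
        ≤ ((2:ℝ≥0∞)^(d:ℕ) * (‖convOp σ (fk k0) x‖₊ : ℝ≥0∞)) ^ q :=
          ENNReal.rpow_le_rpow h1 hq0.le
      _ = ((2:ℝ≥0∞)^(d:ℕ)) ^ q * ((‖convOp σ (fk k0) x‖₊ : ℝ≥0∞)) ^ q :=
          ENNReal.mul_rpow_of_nonneg _ _ hq0.le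
      _ ≤ ((2:ℝ≥0∞)^(d:ℕ)) ^ q * ∑ k ∈ S x, (‖convOp σ (fk k) x‖₊ : ℝ≥0∞) ^ q :=
          mul_le_mul_right h2 _
  -- L^q norm to the q-th power as an integral
  have hJ : ∀ g : Euc d → ℂ, eLpNorm g Q volume ^ q
      = ∫⁻ x, (‖g x‖₊ : ℝ≥0∞) ^ q ∂(volume : Measure (Euc d)) := by
    intro g
    rw [hQdef, eLpNorm_eq_lintegral_rpow_enorm_toReal
        (by simp [ENNReal.ofReal_eq_zero, not_le, hq0]) ENNReal.ofReal_ne_top,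
      ENNReal.toReal_ofReal hq0.le, ← ENNReal.rpow_mul, one_div,
      inv_mul_cancel₀ hq0.ne', ENNReal.rpow_one]
    rfl
  -- per-piece bound
  have hpiece : ∀ k, (∫⁻ x, (‖convOp σ (fk k) x‖₊ : ℝ≥0∞) ^ q ∂volume)
      ≤ A ^ q * (μf (cube k)) ^ (q/p) := by
    intro k
    rw [← hJ]
    have h1 : eLpNorm (convOp σ (fk k)) Q volume ≤ A * (μf (cube k)) ^ (1/p) := by
      have h2 := convOp_norm_le (P := P) (Q := Q) σ hP0 (hfk k)
      have h3 : eLpNorm (fk k) P volume = (μf (cube k)) ^ (1/p) := by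
        rw [hPdef, hμfdef]
        exact eLpNorm_indicator_rpow p hp0 (hcubem k)
      rw [h3] at h2
      exact h2
    have hexp : (1/p) * q = q/p := by field_simp
    calc eLpNorm (convOp σ (fk k)) Q volume ^ q
        ≤ (A * (μf (cube k)) ^ (1/p)) ^ q := ENNReal.rpow_le_rpow h1 hq0.le
      _ = A ^ q * ((μf (cube k)) ^ (1/p)) ^ q := ENNReal.mul_rpow_of_nonneg _ _ hq0.le
      _ = A ^ q * (μf (cube k)) ^ (q/p) := by rw [← ENNReal.rpow_mul, hexp]
  -- sup of cube masses
  set B := ⨆ k, μf (cube k) with hBdef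
  have htsum_le : ∑' k, (μf (cube k)) ^ (q/p) ≤ B ^ ((q-p)/p) * I := by
    have h1 : ∀ k, (μf (cube k)) ^ (q/p) ≤ B ^ ((q-p)/p) * μf (cube k) := by
      intro k
      have hexp : q/p = (q-p)/p + 1 := by rw [sub_div, div_self hp0.ne']; ring
      rw [hexp, ENNReal.rpow_add_of_nonneg _ _ (div_nonneg (by linarith) hp0.le)
        zero_le_one, ENNReal.rpow_one]
      exact mul_le_mul_left
        (ENNReal.rpow_le_rpow (le_iSup _ k) (div_nonneg (by linarith) hp0.le)) _
    calc ∑' k, (μf (cube k)) ^ (q/p)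
        ≤ ∑' k, B ^ ((q-p)/p) * μf (cube k) := ENNReal.tsum_le_tsum h1
      _ = B ^ ((q-p)/p) * ∑' k, μf (cube k) := ENNReal.tsum_mul_left
      _ = B ^ ((q-p)/p) * I := by rw [htsum]
  -- main chain
  have haemeas : ∀ k, AEMeasurable
      (fun x => (‖convOp σ (fk k) x‖₊ : ℝ≥0∞) ^ q) (volume : Measure (Euc d)) :=
    fun k => ((hfkaesm k).enorm).pow_const q
  have hC0top : ((2:ℝ≥0∞)^(d:ℕ)) ^ q ≠ ⊤ := by
    apply ENNReal.rpow_ne_top_of_nonneg hq0.le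
    exact ENNReal.pow_ne_top ENNReal.ofNat_ne_top
  have hchain : eLpNorm (convOp σ f) Q volume ^ q
      ≤ ((2:ℝ≥0∞)^(d:ℕ)) ^ q * (A ^ q * (B ^ ((q-p)/p) * I)) := by
    calc eLpNorm (convOp σ f) Q volume ^ q
        = ∫⁻ x, (‖convOp σ f x‖₊ : ℝ≥0∞) ^ q ∂volume := hJ _
      _ ≤ ∫⁻ x, ((2:ℝ≥0∞)^(d:ℕ)) ^ q
            * ∑' k, (‖convOp σ (fk k) x‖₊ : ℝ≥0∞) ^ q ∂volume := by
          apply lintegral_mono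
          intro x
          exact (hptw2 x).trans (mul_le_mul_right (ENNReal.sum_le_tsum _) _)
      _ = ((2:ℝ≥0∞)^(d:ℕ)) ^ q
            * ∫⁻ x, ∑' k, (‖convOp σ (fk k) x‖₊ : ℝ≥0∞) ^ q ∂volume :=
          lintegral_const_mul' _ _ hC0top
      _ = ((2:ℝ≥0∞)^(d:ℕ)) ^ q
            * ∑' k, ∫⁻ x, (‖convOp σ (fk k) x‖₊ : ℝ≥0∞) ^ q ∂volume := by
          rw [lintegral_tsum haemeas]
      _ ≤ ((2:ℝ≥0∞)^(d:ℕ)) ^ q * (A ^ q * (B ^ ((q-p)/p) * I)) := by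
          apply mul_le_mul_right
          calc (∑' k, ∫⁻ x, (‖convOp σ (fk k) x‖₊ : ℝ≥0∞) ^ q ∂volume)
              ≤ ∑' k, A ^ q * (μf (cube k)) ^ (q/p) := ENNReal.tsum_le_tsum hpiece
            _ = A ^ q * ∑' k, (μf (cube k)) ^ (q/p) := ENNReal.tsum_mul_left
            _ ≤ A ^ q * (B ^ ((q-p)/p) * I) := mul_le_mul_right htsum_le _
  -- conclude: the sup of cube masses is large
  by_contra hcon
  push_neg at hcon
  -- every cube is inside a ball of radius 2ρ(d+1) around its center
  have hcube_sub : ∀ k, cube k ⊆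
      closedBall ((WithLp.equiv 2 (Fin d → ℝ)).symm
        (fun i => (k i : ℝ) * s + s/2) : Euc d) (2*ρ*(d+1)) := by
    intro k x hx
    set c : Euc d := (WithLp.equiv 2 (Fin d → ℝ)).symm (fun i => (k i : ℝ) * s + s/2)
      with hcdef
    have hkey : ∀ i, (k i : ℝ) * s ≤ x i ∧ x i < (k i : ℝ) * s + s := by
      intro i
      have h1 : key x = k := (hcube_mem x k).1 hx
      have h2 : ⌊x i / s⌋ = k i := congrFun h1 i
      constructor
      · have := (Int.floor_eq_iff.1 h2).1
        calc (k i : ℝ) * s = (k i : ℝ) * s := rfl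
          _ ≤ x i := by
            have := (Int.floor_eq_iff.1 h2).1
            calc (k i : ℝ) * s ≤ (x i / s) * s := by
                  apply mul_le_mul_of_nonneg_right this hs0.le
              _ = x i := div_mul_cancel₀ _ hs0.ne'
      · have := (Int.floor_eq_iff.1 h2).2
        calc x i = (x i / s) * s := (div_mul_cancel₀ _ hs0.ne').symm
          _ < ((k i : ℝ) + 1) * s := by
            apply mul_lt_mul_of_pos_right this hs0
          _ = (k i : ℝ) * s + s := by ring
    rw [mem_closedBall, dist_eq_norm]
    have hcoords : ∀ i, |(x - c) i| ≤ s := by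
      intro i
      have h1 : (x - c) i = x i - ((k i : ℝ) * s + s/2) := by
        have : c i = (k i : ℝ) * s + s/2 := rfl
        rw [show (x - c) i = x i - c i from rfl, this]
      rw [h1]
      rw [abs_le]
      obtain ⟨ha, hb⟩ := hkey i
      constructor <;> [linarith; linarith]
    calc ‖x - c‖ ≤ s * (d + 1) := norm_le_of_coords hs0.le hcoords
      _ = 2*ρ*(d+1) := by rw [hsdef]
  have hBle : B ≤ ENNReal.ofReal (((2:ℝ) ^ (-q - d*q)) ^ (p/(q-p))) * I := by
    apply iSup_le
    intro k
    exact (measure_mono (hcube_sub k)).trans (hcon _)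
  -- numeric contradiction
  have hnearq : (ENNReal.ofReal (1-η) * A * eLpNorm f P volume) ^ q
      < eLpNorm (convOp σ f) Q volume ^ q :=
    ENNReal.rpow_lt_rpow hnear hq0
  have hLHS : (ENNReal.ofReal (1-η) * A * eLpNorm f P volume) ^ q
      = ENNReal.ofReal ((1-η)^q) * (A ^ q * I ^ (q/p)) := by
    rw [hIsnorm]
    rw [ENNReal.mul_rpow_of_nonneg _ _ hq0.le, ENNReal.mul_rpow_of_nonneg _ _ hq0.le]
    rw [← ENNReal.rpow_mul, ENNReal.ofReal_rpow_of_pos (by linarith)]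
    have hexp : (1/p) * q = q/p := by field_simp
    rw [hexp, mul_assoc]
  have hexpnn : (0:ℝ) ≤ (q-p)/p := div_nonneg (by linarith) hp0.le
  have hm0exp : (((2:ℝ) ^ (-q - d*q)) ^ (p/(q-p))) ^ ((q-p)/p) = (2:ℝ) ^ (-q - d*q) := by
    rw [← Real.rpow_mul (by positivity)]
    have h1 : (p/(q-p)) * ((q-p)/p) = 1 := by
      have hqp : q - p ≠ 0 := sub_ne_zero.2 (ne_of_gt hpq)
      field_simp
    rw [h1, Real.rpow_one]
  have hBpow : B ^ ((q-p)/p)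
      ≤ ENNReal.ofReal ((2:ℝ)^(-q - d*q)) * I ^ ((q-p)/p) := by
    calc B ^ ((q-p)/p)
        ≤ (ENNReal.ofReal (((2:ℝ)^(-q - d*q))^(p/(q-p))) * I) ^ ((q-p)/p) :=
          ENNReal.rpow_le_rpow hBle hexpnn
      _ = ENNReal.ofReal (((2:ℝ)^(-q - d*q))^(p/(q-p))) ^ ((q-p)/p) * I ^ ((q-p)/p) :=
          ENNReal.mul_rpow_of_nonneg _ _ hexpnn
      _ = ENNReal.ofReal ((2:ℝ)^(-q - d*q)) * I ^ ((q-p)/p) := by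
          rw [ENNReal.ofReal_rpow_of_pos (by positivity), hm0exp]
  have hIpow : I ^ ((q-p)/p) * I = I ^ (q/p) := by
    have hexp : q/p = (q-p)/p + 1 := by rw [sub_div, div_self hp0.ne']; ring
    rw [hexp, ENNReal.rpow_add_of_nonneg _ _ hexpnn zero_le_one, ENNReal.rpow_one]
  have hconst : ((2:ℝ≥0∞)^(d:ℕ)) ^ q * ENNReal.ofReal ((2:ℝ)^(-q - d*q))
      ≤ ENNReal.ofReal ((1-η)^q) := by
    have h2 : ((2:ℝ≥0∞)^(d:ℕ)) ^ q = ENNReal.ofReal (((2:ℝ)^(d:ℕ)) ^ q) := by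
      rw [show ((2:ℝ≥0∞)) = ENNReal.ofReal 2 by simp, ← ENNReal.ofReal_pow (by norm_num),
        ENNReal.ofReal_rpow_of_pos (by positivity)]
    rw [h2, ← ENNReal.ofReal_mul (by positivity)]
    apply ENNReal.ofReal_le_ofReal
    have h3 : ((2:ℝ)^(d:ℕ)) ^ q = (2:ℝ) ^ ((d:ℝ)*q) := by
      rw [← Real.rpow_natCast 2 d, ← Real.rpow_mul (by norm_num)]
    rw [h3, ← Real.rpow_add (by norm_num)]
    have h4 : (d:ℝ)*q + (-q - d*q) = -q := by ring
    rw [h4]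
    have h5 : (2:ℝ)^(-q:ℝ) = ((1:ℝ)/2)^q := by
      rw [Real.rpow_neg (by norm_num : (0:ℝ) ≤ 2), one_div,
        Real.inv_rpow (by norm_num : (0:ℝ) ≤ 2)]
    rw [h5]
    exact Real.rpow_le_rpow (by norm_num) (by linarith) hq0.le
  have hfinal : ((2:ℝ≥0∞)^(d:ℕ)) ^ q * (A ^ q * (B ^ ((q-p)/p) * I))
      ≤ ENNReal.ofReal ((1-η)^q) * (A ^ q * I ^ (q/p)) := by
    calc ((2:ℝ≥0∞)^(d:ℕ)) ^ q * (A ^ q * (B ^ ((q-p)/p) * I))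
        ≤ ((2:ℝ≥0∞)^(d:ℕ)) ^ q
            * (A ^ q * ((ENNReal.ofReal ((2:ℝ)^(-q - d*q)) * I ^ ((q-p)/p)) * I)) := by
          exact mul_le_mul_right (mul_le_mul_right (mul_le_mul_left hBpow _) _) _
      _ = (((2:ℝ≥0∞)^(d:ℕ)) ^ q * ENNReal.ofReal ((2:ℝ)^(-q - d*q)))
            * (A ^ q * (I ^ ((q-p)/p) * I)) := by ring
      _ ≤ ENNReal.ofReal ((1-η)^q) * (A ^ q * (I ^ ((q-p)/p) * I)) :=
          mul_le_mul_left hconst _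
      _ = ENNReal.ofReal ((1-η)^q) * (A ^ q * I ^ (q/p)) := by rw [hIpow]
  exact absurd (hnearq.trans_le (hchain.trans (hfinal.trans_eq hLHS.symm)))
    (lt_irrefl _)

end locAux

set_option maxHeartbeats 2000000 in
/-- Spatial localization of near-extremizers (Lemma 2.2). -/
theorem spatial_localization
    (d : ℕ) (hd : 1 ≤ d)
    (σ : Measure (Euc d)) [IsProbabilityMeasure σ]
    (hcpt : ∃ K : Set (Euc d), IsCompact K ∧ σ Kᶜ = 0)
    (p q : ℝ) (hp : 1 < p) (hpq : p < q)
    (hT : opNorm (convOp (F := ℂ) σ) (ENNReal.ofReal p) (ENNReal.ofReal q) ≠ 0)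
    (hvalid : opNorm (convOp (F := ℂ) σ) (ENNReal.ofReal p) (ENNReal.ofReal q) < ⊤) :
    ∃ δ : ℝ → ℝ, Tendsto δ (𝓝[>] (0:ℝ)) (𝓝 0) ∧
      ∃ η₀ : ℝ, 0 < η₀ ∧ ∀ η : ℝ, 0 < η → η < η₀ →
        ∃ R : ℝ, 0 < R ∧
          ∀ f : Euc d → ℂ, MemLp f (ENNReal.ofReal p) volume →
            ENNReal.ofReal (1 - η)
                * opNorm (convOp (F := ℂ) σ) (ENNReal.ofReal p) (ENNReal.ofReal q)
                * eLpNorm f (ENNReal.ofReal p) volume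
              < eLpNorm (convOp σ f) (ENNReal.ofReal q) volume →
            ∃ x₀ : Euc d,
              eLpNorm ((Metric.ball x₀ R)ᶜ.indicator f) (ENNReal.ofReal p) volume
                ≤ ENNReal.ofReal (δ η) * eLpNorm f (ENNReal.ofReal p) volume := by
  classical
  obtain ⟨K, hK, hK0⟩ := hcpt
  obtain ⟨ρ₀, hρ₀⟩ := hK.isBounded.subset_closedBall (0 : Euc d)
  set ρ : ℝ := max ρ₀ 1 with hρdef
  have hρ1 : (1:ℝ) ≤ ρ := le_max_right _ _
  have hρ0 : (0:ℝ) < ρ := lt_of_lt_of_le one_pos hρ1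
  have hσρ : σ (closedBall (0:Euc d) ρ)ᶜ = 0 := by
    apply measure_mono_null _ hK0
    apply Set.compl_subset_compl.2
    exact hρ₀.trans (closedBall_subset_closedBall (le_max_left _ _))
  have hp0 : (0:ℝ) < p := lt_trans one_pos hp
  have hq0 : (0:ℝ) < q := lt_trans hp0 hpq
  set θ : ℝ := (q - p)/(p*q) with hθdef
  have hθ0 : 0 < θ := div_pos (by linarith) (by positivity)
  set m₀ : ℝ := ((2:ℝ) ^ (-q - d*q)) ^ (p/(q-p)) with hm₀def
  have hm₀0 : 0 < m₀ := by positivity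
  -- the localization gauge function
  set δ : ℝ → ℝ := fun η => (1 - (1 - 2*η) ^ (1/θ)) ^ (1/p) with hδdef
  have hcont1 : Tendsto (fun η : ℝ => (1 - 2*η) ^ (1/θ)) (𝓝 0) (𝓝 1) := by
    have hc : ContinuousAt (fun η : ℝ => (1 - 2*η) ^ (1/θ)) 0 := by
      apply ContinuousAt.rpow_const
      · fun_prop
      · left; norm_num
    have h0 : ((1:ℝ) - 2*(0:ℝ)) ^ ((1:ℝ)/θ) = 1 := by
      norm_num
    simpa [h0] using hc.tendsto
  have hcont2 : Tendsto (fun η : ℝ => 1 - (1 - 2*η) ^ (1/θ)) (𝓝 0) (𝓝 0) := by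
    have := tendsto_const_nhds (x := (1:ℝ)) |>.sub hcont1
    simpa using this
  have hδtendsto : Tendsto δ (𝓝 0) (𝓝 0) := by
    have h3 : ContinuousAt (fun t : ℝ => t ^ ((1:ℝ)/p)) 0 :=
      Real.continuousAt_rpow_const 0 (1/p) (Or.inr (by positivity))
    have h4 := h3.tendsto.comp hcont2
    rw [hδdef]
    simpa [Function.comp_def, one_div,
      Real.zero_rpow (show ((p:ℝ)⁻¹) ≠ 0 by positivity)] using h4
  refine ⟨δ, hδtendsto.mono_left nhdsWithin_le_nhds, ?_⟩
  -- choose η₀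
  have hev : ∀ᶠ η in 𝓝 (0:ℝ), (1 - (1 - 2*η) ^ (1/θ) < m₀ ∧ η < 1/4) := by
    have h1 : ∀ᶠ η in 𝓝 (0:ℝ), 1 - (1 - 2*η) ^ (1/θ) < m₀ :=
      hcont2.eventually (Filter.Tendsto.eventually_lt_const hm₀0 tendsto_id) |>.mono
        (fun _ h => h)
    have h2 : ∀ᶠ η in 𝓝 (0:ℝ), η < 1/4 :=
      Filter.Tendsto.eventually_lt_const (by norm_num) tendsto_id
    exact h1.and h2
  obtain ⟨η₀, hη₀0, hη₀⟩ := Metric.eventually_nhds_iff_ball.1 hev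
  refine ⟨η₀, hη₀0, ?_⟩
  intro η hη1 hη2
  have hηprop : 1 - (1 - 2*η) ^ (1/θ) < m₀ ∧ η < 1/4 := by
    apply hη₀
    simp [Real.dist_eq, abs_of_pos hη1, hη2]
  obtain ⟨hηm, hη4⟩ := hηprop
  -- derived quantities
  set mη : ℝ := 1 - (1 - 2*η) ^ (1/θ) with hmηdef
  have h2η : (0:ℝ) < 1 - 2*η := by linarith
  have hmη0 : 0 ≤ mη := by
    rw [hmηdef]
    have : (1 - 2*η) ^ ((1:ℝ)/θ) ≤ 1 :=
      Real.rpow_le_one h2η.le (by linarith) (by positivity)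
    linarith
  have hmη1 : mη ≤ 1 := by
    rw [hmηdef]
    have : (0:ℝ) ≤ (1 - 2*η) ^ ((1:ℝ)/θ) := Real.rpow_nonneg h2η.le _
    linarith
  set N : ℕ := ⌈(η⁻¹) ^ p⌉₊ with hNdef
  have hN0 : 0 < N := Nat.ceil_pos.2 (by positivity)
  have hNℝ : (1:ℝ) ≤ η^p * N := by
    have h1 : (η⁻¹)^p ≤ (N:ℝ) := Nat.le_ceil _
    calc (1:ℝ) = η^p * (η⁻¹)^p := by
          rw [← Real.mul_rpow hη1.le (by positivity), mul_inv_cancel₀ hη1.ne',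
            Real.one_rpow]
      _ ≤ η^p * N := by
          apply mul_le_mul_of_nonneg_left h1 (Real.rpow_nonneg hη1.le _)
  set R₁ : ℝ := 2*ρ*(d+1) with hR₁def
  have hR₁0 : 0 < R₁ := by positivity
  refine ⟨R₁ + 2*ρ*(N:ℝ) + 2*ρ + 1, by positivity, ?_⟩
  intro f hf hnear
  -- trivial case : f vanishes a.e.
  by_cases hf0 : eLpNorm f (ENNReal.ofReal p) volume = 0
  · refine ⟨0, ?_⟩
    calc eLpNorm ((Metric.ball (0:Euc d) (R₁ + 2*ρ*(N:ℝ) + 2*ρ + 1))ᶜ.indicator f)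
          (ENNReal.ofReal p) volume
        ≤ eLpNorm f (ENNReal.ofReal p) volume := eLpNorm_indicator_le f
      _ = 0 := hf0
      _ ≤ ENNReal.ofReal (δ η) * eLpNorm f (ENNReal.ofReal p) volume := zero_le
  -- main case
  set A := opNorm (convOp (F := ℂ) σ) (ENNReal.ofReal p) (ENNReal.ofReal q) with hAdef
  set μf := (volume : Measure (Euc d)).withDensity (fun x => (‖f x‖₊ : ℝ≥0∞) ^ p)
    with hμfdef
  set I := μf Set.univ with hIdef
  have hIsnorm : eLpNorm f (ENNReal.ofReal p) volume = I ^ (1/p) := by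
    rw [hIdef, hμfdef]; exact locAux.eLpNorm_rpow p hp0 f
  have hItop : I ≠ ⊤ := by
    intro h
    have h2 := hf.2
    rw [hIsnorm, h, ENNReal.top_rpow_of_pos (by positivity)] at h2
    exact (lt_irrefl _ h2).elim
  -- heavy ball from Step 1
  obtain ⟨x₀, hx₀⟩ := locAux.exists_heavy_ball σ hρ1 hσρ hp hpq hvalid hf hf0 hη1
    (by linarith : η ≤ 1/2) hnear
  refine ⟨x₀, ?_⟩
  by_contra hcon
  push_neg at hcon
  -- ball complement has large mass
  set TailSet : Set (Euc d) := (Metric.ball x₀ (R₁ + 2*ρ*(N:ℝ) + 2*ρ + 1))ᶜ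
    with hTraildef
  have hTailm : MeasurableSet TailSet := measurableSet_ball.compl
  have hδofReal : ENNReal.ofReal (δ η) * eLpNorm f (ENNReal.ofReal p) volume
      = (ENNReal.ofReal mη * I) ^ (1/p) := by
    rw [hIsnorm]
    simp only [hδdef]
    rw [← hmηdef, ← ENNReal.ofReal_rpow_of_nonneg hmη0 (by positivity : (0:ℝ) ≤ 1/p),
      ENNReal.mul_rpow_of_nonneg _ _ (by positivity : (0:ℝ) ≤ 1/p)]
  have hTailnorm : eLpNorm (TailSet.indicator f) (ENNReal.ofReal p) volume
      = (μf TailSet) ^ (1/p) := by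
    rw [hμfdef]; exact locAux.eLpNorm_indicator_rpow p hp0 hTailm
  have hMlt : ENNReal.ofReal mη * I < μf TailSet := by
    by_contra hle
    push_neg at hle
    have hb : eLpNorm (TailSet.indicator f) (ENNReal.ofReal p) volume
        ≤ ENNReal.ofReal (δ η) * eLpNorm f (ENNReal.ofReal p) volume := by
      rw [hTailnorm, hδofReal]
      exact ENNReal.rpow_le_rpow hle (by positivity)
    exact hb.not_gt hcon
  -- pigeonhole over shells
  set Sh : ℕ → Set (Euc d) := fun j =>
    closedBall x₀ (R₁ + 2*ρ*(j:ℝ) + 2*ρ) \ closedBall x₀ (R₁ + 2*ρ*(j:ℝ)) with hShdef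
  have hShm : ∀ j, MeasurableSet (Sh j) :=
    fun j => measurableSet_closedBall.diff measurableSet_closedBall
  have hShdisj : ∀ j j' : ℕ, j < j' → Disjoint (Sh j) (Sh j') := by
    intro j j' hjj'
    rw [Set.disjoint_left]
    intro z hz hz'
    have h1 : dist z x₀ ≤ R₁ + 2*ρ*(j:ℝ) + 2*ρ := hz.1
    have h2 : ¬ dist z x₀ ≤ R₁ + 2*ρ*(j':ℝ) := hz'.2
    apply h2
    have h3 : (j:ℝ) + 1 ≤ (j':ℝ) := by exact_mod_cast hjj'
    nlinarith
  have hShsum : (Finset.range N).sum (fun j => μf (Sh j)) ≤ I := by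
    rw [← measure_biUnion_finset ?_ (fun j _ => hShm j)]
    · exact measure_mono (Set.subset_univ _)
    · intro j _ j' _ hne
      rcases lt_or_gt_of_ne hne with h | h
      · exact hShdisj j j' h
      · exact (hShdisj j' j h).symm
  obtain ⟨jm, hjm, hjmin⟩ := Finset.exists_min_image (Finset.range N)
    (fun j => μf (Sh j)) ⟨0, Finset.mem_range.2 hN0⟩
  have hNEm : (N:ℝ≥0∞) * μf (Sh jm) ≤ I := by
    calc (N:ℝ≥0∞) * μf (Sh jm) = (Finset.range N).card • μf (Sh jm) := by
          simp [nsmul_eq_mul]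
      _ ≤ (Finset.range N).sum (fun j => μf (Sh j)) :=
          Finset.card_nsmul_le_sum _ _ _ (fun j hj => hjmin j hj)
      _ ≤ I := hShsum
  set r : ℝ := R₁ + 2*ρ*(jm:ℝ) with hrdef
  have hrR₁ : R₁ ≤ r := by
    rw [hrdef]
    have : (0:ℝ) ≤ (jm:ℝ) := Nat.cast_nonneg _
    nlinarith
  have hjmN : (jm:ℝ) ≤ (N:ℝ) := by
    exact_mod_cast (Finset.mem_range.1 hjm).le
  -- the three pieces
  set g : Euc d → ℂ := (closedBall x₀ r).indicator f with hgdef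
  set e : Euc d → ℂ := (closedBall x₀ (r+2*ρ) \ closedBall x₀ r).indicator f with hedef
  set h : Euc d → ℂ := ((closedBall x₀ (r+2*ρ))ᶜ).indicator f with hhdef
  have hgm : MemLp g (ENNReal.ofReal p) volume := hf.indicator measurableSet_closedBall
  have hem : MemLp e (ENNReal.ofReal p) volume :=
    hf.indicator (measurableSet_closedBall.diff measurableSet_closedBall)
  have hhm : MemLp h (ENNReal.ofReal p) volume :=
    hf.indicator measurableSet_closedBall.compl
  have hsum : ∀ z, f z = g z + e z + h z := by
    intro z
    by_cases h1 : z ∈ closedBall x₀ r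
    · have h2 : z ∈ closedBall x₀ (r+2*ρ) :=
        closedBall_subset_closedBall (by linarith) h1
      simp [hgdef, hedef, hhdef, Set.indicator, h1, h2]
    · by_cases h2 : z ∈ closedBall x₀ (r+2*ρ)
      · simp [hgdef, hedef, hhdef, Set.indicator, h1, h2]
      · simp [hgdef, hedef, hhdef, Set.indicator, h1, h2]
  -- supports of the convolved pieces
  have hTg : ∀ x, x ∉ closedBall x₀ (r+ρ) → convOp σ g x = 0 := by
    intro x hx
    apply locAux.convOp_vanish σ hσρ (s := closedBall x₀ r)
    · intro z hz
      exact Set.indicator_of_notMem hz f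
    · intro y hy
      rw [mem_closedBall, dist_zero_right] at hy
      rw [mem_closedBall, not_le] at hx ⊢
      have h1 : dist x x₀ - ‖y‖ ≤ dist (x - y) x₀ := by
        rw [dist_eq_norm, dist_eq_norm]
        have h2 : x - x₀ - (x - y - x₀) = y := by abel
        have := norm_sub_norm_le (x - x₀) (x - y - x₀)
        rw [h2] at this
        linarith
      linarith
  have hTh : ∀ x, x ∈ closedBall x₀ (r+ρ) → convOp σ h x = 0 := by
    intro x hx
    apply locAux.convOp_vanish σ hσρ (s := (closedBall x₀ (r+2*ρ))ᶜ)
    · intro z hz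
      exact Set.indicator_of_notMem hz f
    · intro y hy
      rw [mem_closedBall, dist_zero_right] at hy
      rw [mem_closedBall] at hx
      simp only [Set.not_notMem, Set.mem_compl_iff, not_not]
      rw [mem_closedBall]
      have h1 : dist (x - y) x₀ ≤ dist x x₀ + ‖y‖ := by
        rw [dist_eq_norm, dist_eq_norm]
        have h2 : x - y - x₀ = (x - x₀) - y := by abel
        rw [h2]
        exact norm_sub_le _ _
      linarith
  -- splitting inequality (pointwise)
  have hind : ∀ (t : Set (Euc d)), MeasurableSet t → ∀ x : Euc d,
      Integrable (fun y => f (x - y)) σ →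
      Integrable (fun y => (t.indicator f) (x - y)) σ := by
    intro t ht x hint
    have heq : (fun y => t.indicator f (x - y))
        = fun y => ((fun y : Euc d => x - y) ⁻¹' t).indicator
            (fun y => f (x - y)) y := by
      funext y
      by_cases hmem : x - y ∈ t <;> simp [Set.indicator, hmem, Set.mem_preimage]
    rw [heq]
    exact hint.indicator (ht.preimage (measurable_const.sub measurable_id))
  have hsplit : ∀ x, ‖convOp σ f x‖
      ≤ ‖(convOp σ g x + convOp σ h x) + convOp σ e x‖ := by
    intro x
    by_cases hint : Integrable (fun y => f (x - y)) σ
    · have hig : Integrable (fun y => g (x - y)) σ :=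
        hind _ measurableSet_closedBall x hint
      have hie : Integrable (fun y => e (x - y)) σ :=
        hind _ (measurableSet_closedBall.diff measurableSet_closedBall) x hint
      have hih : Integrable (fun y => h (x - y)) σ :=
        hind _ measurableSet_closedBall.compl x hint
      have heq2 : convOp σ f x = (convOp σ g x + convOp σ h x) + convOp σ e x := by
        have heq : (fun y => f (x - y))
            = fun y => (g (x - y) + e (x - y)) + h (x - y) := by
          funext y; rw [hsum (x - y)]
        have i1 : ∫ y, (g (x - y) + e (x - y)) + h (x - y) ∂σ
            = (∫ y, g (x - y) + e (x - y) ∂σ) + ∫ y, h (x - y) ∂σ :=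
          integral_add (hig.add hie) hih
        have i2 : ∫ y, g (x - y) + e (x - y) ∂σ
            = (∫ y, g (x - y) ∂σ) + ∫ y, e (x - y) ∂σ := integral_add hig hie
        rw [convOp, heq, i1, i2, convOp, convOp, convOp]
        ring
      rw [heq2]
    · rw [convOp, integral_undef hint, norm_zero]
      exact norm_nonneg _
  -- disjoint supports: additivity of the q-integrals
  have hTgaesm : AEStronglyMeasurable (convOp σ g) (volume : Measure (Euc d)) :=
    locAux.aesm_convOp σ hgm.1
  have hThaesm : AEStronglyMeasurable (convOp σ h) (volume : Measure (Euc d)) :=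
    locAux.aesm_convOp σ hhm.1
  have hTeaesm : AEStronglyMeasurable (convOp σ e) (volume : Measure (Euc d)) :=
    locAux.aesm_convOp σ hem.1
  have hdisjnorm : (∫⁻ x, (‖convOp σ g x + convOp σ h x‖₊ : ℝ≥0∞) ^ q
        ∂(volume : Measure (Euc d)))
      = (∫⁻ x, (‖convOp σ g x‖₊ : ℝ≥0∞) ^ q ∂(volume : Measure (Euc d)))
        + ∫⁻ x, (‖convOp σ h x‖₊ : ℝ≥0∞) ^ q ∂(volume : Measure (Euc d)) := by
    have hpt : ∀ x, (‖convOp σ g x + convOp σ h x‖₊ : ℝ≥0∞) ^ q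
        = (‖convOp σ g x‖₊ : ℝ≥0∞) ^ q + (‖convOp σ h x‖₊ : ℝ≥0∞) ^ q := by
      intro x
      by_cases hx : x ∈ closedBall x₀ (r+ρ)
      · rw [hTh x hx]
        simp [ENNReal.zero_rpow_of_pos hq0]
      · rw [hTg x hx]
        simp [ENNReal.zero_rpow_of_pos hq0]
    rw [lintegral_congr hpt]
    exact lintegral_add_left' (hTgaesm.enorm.pow_const q) _
  -- masses
  set Gm := μf (closedBall x₀ r) with hGmdef
  set Hm := μf ((closedBall x₀ (r+2*ρ))ᶜ) with hHmdef
  set Em := μf (closedBall x₀ (r+2*ρ) \ closedBall x₀ r) with hEmdef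
  have hEmSh : Em = μf (Sh jm) := by rw [hEmdef, hShdef, hrdef]
  have hGH : Gm + Hm ≤ I := by
    have hdisjGH : Disjoint (closedBall x₀ r) ((closedBall x₀ (r+2*ρ))ᶜ) := by
      rw [Set.disjoint_left]
      intro z hz hz'
      rw [Set.mem_compl_iff, mem_closedBall, not_le] at hz'
      rw [mem_closedBall] at hz
      linarith
    calc Gm + Hm = μf (closedBall x₀ r ∪ (closedBall x₀ (r+2*ρ))ᶜ) :=
          (measure_union hdisjGH measurableSet_closedBall.compl).symm
      _ ≤ I := measure_mono (Set.subset_univ _)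
  have hGmI : Gm ≤ I := le_trans le_add_self (le_trans (le_of_eq (add_comm _ _)) hGH)
  have hHmI : Hm ≤ I := le_trans le_add_self hGH
  -- lower bounds on Gm and Hm
  have hMle : ENNReal.ofReal mη * I ≤ ENNReal.ofReal m₀ * I :=
    mul_le_mul_left (ENNReal.ofReal_le_ofReal hηm.le) _
  have hGmlow : ENNReal.ofReal mη * I ≤ Gm := by
    refine hMle.trans ?_
    refine le_trans hx₀.le (measure_mono (closedBall_subset_closedBall ?_))
    rw [hR₁def] at hrR₁
    exact hrR₁
  have hHmlow : ENNReal.ofReal mη * I ≤ Hm := by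
    refine hMlt.le.trans (measure_mono ?_)
    rw [hTraildef]
    apply Set.compl_subset_compl.2
    intro z hz
    rw [mem_closedBall] at hz
    rw [mem_ball]
    have : 2*ρ*(jm:ℝ) ≤ 2*ρ*(N:ℝ) := by nlinarith
    rw [hrdef] at hz
    linarith
  -- key scalar inequality
  have hsubM : ∀ X Y : ℝ≥0∞, X + Y ≤ I → ENNReal.ofReal mη * I ≤ Y →
      X ≤ ENNReal.ofReal (1 - mη) * I := by
    intro X Y hXY hMY
    have h1 : X + ENNReal.ofReal mη * I ≤ I :=
      le_trans (add_le_add_right hMY X) hXY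
    have h2 : I ≤ ENNReal.ofReal (1 - mη) * I + ENNReal.ofReal mη * I := by
      rw [← add_mul, ← ENNReal.ofReal_add (by linarith) hmη0]
      simp
    calc X ≤ I - ENNReal.ofReal mη * I := by
          exact ENNReal.le_sub_of_add_le_right
            (ENNReal.mul_ne_top ENNReal.ofReal_ne_top hItop) h1
      _ ≤ ENNReal.ofReal (1 - mη) * I := by
          apply tsub_le_iff_right.2 h2
  have hGmub : Gm ≤ ENNReal.ofReal (1 - mη) * I := hsubM Gm Hm hGH hHmlow
  have hHmub : Hm ≤ ENNReal.ofReal (1 - mη) * I :=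
    hsubM Hm Gm (by rwa [add_comm]) hGmlow
  have hqp_nn : (0:ℝ) ≤ (q-p)/p := div_nonneg (by linarith) hp0.le
  have hpow_bound : ∀ X : ℝ≥0∞, X ≤ ENNReal.ofReal (1 - mη) * I →
      X ^ (q/p) ≤ (ENNReal.ofReal (1 - mη) * I) ^ ((q-p)/p) * X := by
    intro X hX
    have hexp : q/p = (q-p)/p + 1 := by rw [sub_div, div_self hp0.ne']; ring
    rw [hexp, ENNReal.rpow_add_of_nonneg _ _ hqp_nn zero_le_one, ENNReal.rpow_one]
    exact mul_le_mul_left (ENNReal.rpow_le_rpow hX hqp_nn) _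
  have hGHsum : Gm ^ (q/p) + Hm ^ (q/p)
      ≤ (ENNReal.ofReal (1 - mη) * I) ^ ((q-p)/p) * I := by
    calc Gm ^ (q/p) + Hm ^ (q/p)
        ≤ (ENNReal.ofReal (1 - mη) * I) ^ ((q-p)/p) * Gm
            + (ENNReal.ofReal (1 - mη) * I) ^ ((q-p)/p) * Hm :=
          add_le_add (hpow_bound Gm hGmub) (hpow_bound Hm hHmub)
      _ = (ENNReal.ofReal (1 - mη) * I) ^ ((q-p)/p) * (Gm + Hm) := by rw [mul_add]
      _ ≤ (ENNReal.ofReal (1 - mη) * I) ^ ((q-p)/p) * I := mul_le_mul_right hGH _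
  -- norms of pieces
  have hgnorm : eLpNorm g (ENNReal.ofReal p) volume = Gm ^ (1/p) := by
    rw [hgdef, hGmdef, hμfdef]
    exact locAux.eLpNorm_indicator_rpow p hp0 measurableSet_closedBall
  have hhnorm : eLpNorm h (ENNReal.ofReal p) volume = Hm ^ (1/p) := by
    rw [hhdef, hHmdef, hμfdef]
    exact locAux.eLpNorm_indicator_rpow p hp0 measurableSet_closedBall.compl
  have henorm : eLpNorm e (ENNReal.ofReal p) volume = Em ^ (1/p) := by
    rw [hedef, hEmdef, hμfdef]
    exact locAux.eLpNorm_indicator_rpow p hp0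
      (measurableSet_closedBall.diff measurableSet_closedBall)
  have hP0 : (ENNReal.ofReal p) ≠ 0 := by
    simp [ENNReal.ofReal_eq_zero, not_le, hp0]
  -- q-integral bounds for the convolved pieces
  have hqint : ∀ (u : Euc d → ℂ), MemLp u (ENNReal.ofReal p) volume →
      ∀ X : ℝ≥0∞, eLpNorm u (ENNReal.ofReal p) volume = X ^ (1/p) →
      (∫⁻ x, (‖convOp σ u x‖₊ : ℝ≥0∞) ^ q ∂(volume : Measure (Euc d)))
        ≤ A ^ q * X ^ (q/p) := by
    intro u hu X hX
    rw [← locAux.eLpNorm_ofReal_pow q hq0]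
    have h1 : eLpNorm (convOp σ u) (ENNReal.ofReal q) volume ≤ A * X ^ (1/p) := by
      have h2 := locAux.convOp_norm_le (Q := ENNReal.ofReal q) σ hP0 hu
      rw [hX] at h2
      exact h2
    have hexp : (1/p) * q = q/p := by field_simp
    calc eLpNorm (convOp σ u) (ENNReal.ofReal q) volume ^ q
        ≤ (A * X ^ (1/p)) ^ q := ENNReal.rpow_le_rpow h1 hq0.le
      _ = A ^ q * (X ^ (1/p)) ^ q := ENNReal.mul_rpow_of_nonneg _ _ hq0.le
      _ = A ^ q * X ^ (q/p) := by rw [← ENNReal.rpow_mul, hexp]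
  -- bound on the main part
  have hmain : eLpNorm (fun x => convOp σ g x + convOp σ h x) (ENNReal.ofReal q) volume
      ≤ A * (ENNReal.ofReal (1 - 2*η) * I ^ (1/p)) := by
    have h1 : eLpNorm (fun x => convOp σ g x + convOp σ h x) (ENNReal.ofReal q) volume
        = ((∫⁻ x, (‖convOp σ g x‖₊ : ℝ≥0∞) ^ q ∂(volume : Measure (Euc d)))
            + ∫⁻ x, (‖convOp σ h x‖₊ : ℝ≥0∞) ^ q ∂(volume : Measure (Euc d))) ^ (1/q) := by
      rw [locAux.eLpNorm_ofReal_eq q hq0, ← hdisjnorm]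
    rw [h1]
    have h2 : (∫⁻ x, (‖convOp σ g x‖₊ : ℝ≥0∞) ^ q ∂(volume : Measure (Euc d)))
          + (∫⁻ x, (‖convOp σ h x‖₊ : ℝ≥0∞) ^ q ∂(volume : Measure (Euc d)))
        ≤ A ^ q * ((ENNReal.ofReal (1 - mη) * I) ^ ((q-p)/p) * I) := by
      calc (∫⁻ x, (‖convOp σ g x‖₊ : ℝ≥0∞) ^ q ∂(volume : Measure (Euc d)))
            + (∫⁻ x, (‖convOp σ h x‖₊ : ℝ≥0∞) ^ q ∂(volume : Measure (Euc d)))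
          ≤ A ^ q * Gm ^ (q/p) + A ^ q * Hm ^ (q/p) :=
            add_le_add (hqint g hgm Gm hgnorm) (hqint h hhm Hm hhnorm)
        _ = A ^ q * (Gm ^ (q/p) + Hm ^ (q/p)) := by rw [mul_add]
        _ ≤ A ^ q * ((ENNReal.ofReal (1 - mη) * I) ^ ((q-p)/p) * I) :=
            mul_le_mul_right hGHsum _
    calc ((∫⁻ x, (‖convOp σ g x‖₊ : ℝ≥0∞) ^ q ∂(volume : Measure (Euc d)))
            + ∫⁻ x, (‖convOp σ h x‖₊ : ℝ≥0∞) ^ q ∂(volume : Measure (Euc d))) ^ (1/q)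
        ≤ (A ^ q * ((ENNReal.ofReal (1 - mη) * I) ^ ((q-p)/p) * I)) ^ (1/q) :=
          ENNReal.rpow_le_rpow h2 (by positivity)
      _ = A * (ENNReal.ofReal (1 - 2*η) * I ^ (1/p)) := by
          rw [ENNReal.mul_rpow_of_nonneg _ _ (by positivity : (0:ℝ) ≤ 1/q),
            ENNReal.mul_rpow_of_nonneg _ _ (by positivity : (0:ℝ) ≤ 1/q),
            ← ENNReal.rpow_mul A, ← ENNReal.rpow_mul (ENNReal.ofReal (1-mη) * I),
            ENNReal.mul_rpow_of_nonneg _ _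
              (by positivity : (0:ℝ) ≤ (q-p)/p * (1/q))]
          have he1 : q * (1/q) = 1 := by field_simp
          have he2 : (q-p)/p * (1/q) = θ := by
            rw [hθdef]; field_simp
          rw [he1, he2, ENNReal.rpow_one]
          have hmηc : (1:ℝ) - mη = (1 - 2*η) ^ ((1:ℝ)/θ) := by
            rw [hmηdef]; ring
          have h1mη : (0:ℝ) < 1 - mη := by
            rw [hmηc]; exact Real.rpow_pos_of_pos h2η _
          have he3 : ENNReal.ofReal (1 - mη) ^ θ = ENNReal.ofReal (1 - 2*η) := by
            rw [ENNReal.ofReal_rpow_of_pos h1mη]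
            congr 1
            rw [hmηc, ← Real.rpow_mul h2η.le, one_div, inv_mul_cancel₀ hθ0.ne',
              Real.rpow_one]
          rw [he3]
          have he4 : I ^ θ * I ^ ((1:ℝ)/q) = I ^ ((1:ℝ)/p) := by
            rw [← ENNReal.rpow_add_of_nonneg _ _ hθ0.le (by positivity)]
            congr 1
            rw [hθdef]
            field_simp
            ring
          rw [mul_assoc, he4]
  -- bound on the error part
  have herr : eLpNorm (convOp σ e) (ENNReal.ofReal q) volume
      ≤ A * (ENNReal.ofReal η * I ^ (1/p)) := by
    have h1 := locAux.convOp_norm_le (Q := ENNReal.ofReal q) σ hP0 hem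
    rw [henorm] at h1
    have h2 : Em ≤ ENNReal.ofReal (η^p) * I := by
      calc Em = 1 * Em := (one_mul _).symm
        _ ≤ (ENNReal.ofReal (η^p) * N) * Em := by
            apply mul_le_mul_left
            rw [← ENNReal.ofReal_natCast N, ← ENNReal.ofReal_mul (by positivity)]
            exact ENNReal.one_le_ofReal.2 hNℝ
        _ = ENNReal.ofReal (η^p) * ((N:ℝ≥0∞) * μf (Sh jm)) := by
            rw [hEmSh, mul_assoc]
        _ ≤ ENNReal.ofReal (η^p) * I := mul_le_mul_right hNEm _
    have h3 : Em ^ ((1:ℝ)/p) ≤ ENNReal.ofReal η * I ^ ((1:ℝ)/p) := by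
      calc Em ^ ((1:ℝ)/p) ≤ (ENNReal.ofReal (η^p) * I) ^ ((1:ℝ)/p) :=
            ENNReal.rpow_le_rpow h2 (by positivity)
        _ = ENNReal.ofReal η * I ^ ((1:ℝ)/p) := by
            rw [ENNReal.mul_rpow_of_nonneg _ _ (by positivity : (0:ℝ) ≤ 1/p)]
            congr 1
            rw [ENNReal.ofReal_rpow_of_pos (by positivity), ← Real.rpow_mul hη1.le,
              mul_one_div, div_self hp0.ne', Real.rpow_one]
    calc eLpNorm (convOp σ e) (ENNReal.ofReal q) volume ≤ A * Em ^ (1/p) := h1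
      _ ≤ A * (ENNReal.ofReal η * I ^ (1/p)) := mul_le_mul_right h3 _
  -- total bound and contradiction
  have hQ1 : (1:ℝ≥0∞) ≤ ENNReal.ofReal q := ENNReal.one_le_ofReal.2 (by linarith)
  have htotal : eLpNorm (convOp σ f) (ENNReal.ofReal q) volume
      ≤ ENNReal.ofReal (1 - η) * A * eLpNorm f (ENNReal.ofReal p) volume := by
    calc eLpNorm (convOp σ f) (ENNReal.ofReal q) volume
        ≤ eLpNorm (fun x => (convOp σ g x + convOp σ h x) + convOp σ e x)
            (ENNReal.ofReal q) volume := eLpNorm_mono hsplit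
      _ ≤ eLpNorm (fun x => convOp σ g x + convOp σ h x) (ENNReal.ofReal q) volume
            + eLpNorm (convOp σ e) (ENNReal.ofReal q) volume :=
          eLpNorm_add_le (hTgaesm.add hThaesm) hTeaesm hQ1
      _ ≤ A * (ENNReal.ofReal (1 - 2*η) * I ^ (1/p))
            + A * (ENNReal.ofReal η * I ^ (1/p)) := add_le_add hmain herr
      _ = (ENNReal.ofReal (1 - 2*η) + ENNReal.ofReal η) * A * I ^ (1/p) := by ring
      _ = ENNReal.ofReal (1 - η) * A * eLpNorm f (ENNReal.ofReal p) volume := by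
          rw [hIsnorm, ← ENNReal.ofReal_add (by linarith) hη1.le]
          congr 2
          ring
  exact absurd (hnear.trans_le htotal) (lt_irrefl _)
end
end

section
/- Suppose σ is a compactly supported Borel probability measure on ℝ^d, 1 < p < q < ∞ is a valid pair for the convolution operator T, and f is a normalized (‖f‖_p = 1) nonnegative extremizer for T : L^p(ℝ^d) → L^q(ℝ^d). Then f satisfies the Euler–Lagrange equation f(x) = ‖T‖_{p,q}^{−q/(p−1)} ( T^*((Tf)^{q−1}) (x) )^{1/(p−1)} for almost every x ∈ ℝ^d, where T^*g(x) = ∫_{ℝ^d} g(x+y) dσ(y) is the adjoint of T. -/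
open MeasureTheory Metric Filter
open scoped ENNReal Topology

noncomputable section

namespace ELaux

variable {d : ℕ} (σ : Measure (Euc d))

/-- lintegral version of `convOp`. -/
def Tl (F : Euc d → ℝ≥0∞) (x : Euc d) : ℝ≥0∞ := ∫⁻ y, F (x - y) ∂σ

/-- lintegral version of `adjOp`. -/
def Ta (F : Euc d → ℝ≥0∞) (x : Euc d) : ℝ≥0∞ := ∫⁻ y, F (x + y) ∂σ

lemma meas_Tl [SFinite σ] {F : Euc d → ℝ≥0∞} (hF : Measurable F) : Measurable (Tl σ F) :=
  Measurable.lintegral_prod_right' (hF.comp (measurable_fst.sub measurable_snd))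

lemma meas_Ta [SFinite σ] {F : Euc d → ℝ≥0∞} (hF : Measurable F) : Measurable (Ta σ F) :=
  Measurable.lintegral_prod_right' (hF.comp (measurable_fst.add measurable_snd))

lemma lint_Tl [IsProbabilityMeasure σ] {F : Euc d → ℝ≥0∞} (hF : Measurable F) :
    ∫⁻ x, Tl σ F x = ∫⁻ x, F x := by
  unfold Tl
  have m : AEMeasurable (Function.uncurry fun x y => F (x - y))
      ((volume : Measure (Euc d)).prod σ) :=
    (hF.comp (measurable_fst.sub measurable_snd)).aemeasurable
  rw [lintegral_lintegral_swap m]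
  simp [lintegral_sub_right_eq_self F]

lemma lint_Ta [IsProbabilityMeasure σ] {F : Euc d → ℝ≥0∞} (hF : Measurable F) :
    ∫⁻ x, Ta σ F x = ∫⁻ x, F x := by
  unfold Ta
  have m : AEMeasurable (Function.uncurry fun x y => F (x + y))
      ((volume : Measure (Euc d)).prod σ) :=
    (hF.comp (measurable_fst.add measurable_snd)).aemeasurable
  rw [lintegral_lintegral_swap m]
  simp [lintegral_add_right_eq_self F]

lemma ae_null_sub [IsProbabilityMeasure σ] {N : Set (Euc d)} (hN : MeasurableSet N)
    (h0 : volume N = 0) : ∀ᵐ x : Euc d, σ {y | x - y ∈ N} = 0 := by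
  have hind : Measurable (N.indicator (1 : Euc d → ℝ≥0∞)) := measurable_one.indicator hN
  have h1 : ∫⁻ x, Tl σ (N.indicator 1) x = 0 := by
    rw [lint_Tl σ hind, lintegral_indicator_one hN, h0]
  have h2 := (lintegral_eq_zero_iff (meas_Tl σ hind)).mp h1
  filter_upwards [h2] with x hx
  simp only [Pi.zero_apply] at hx
  have hms : MeasurableSet {y : Euc d | x - y ∈ N} := (measurable_const.sub measurable_id) hN
  calc σ {y : Euc d | x - y ∈ N}
      = ∫⁻ y, ({y : Euc d | x - y ∈ N}.indicator 1 y) ∂σ := (lintegral_indicator_one hms).symm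
    _ = Tl σ (N.indicator 1) x := by
        refine lintegral_congr fun y => ?_
        by_cases h : x - y ∈ N <;> simp [Tl, Set.indicator_apply, h]
    _ = 0 := hx

lemma ae_null_add [IsProbabilityMeasure σ] {N : Set (Euc d)} (hN : MeasurableSet N)
    (h0 : volume N = 0) : ∀ᵐ x : Euc d, σ {y | x + y ∈ N} = 0 := by
  have hind : Measurable (N.indicator (1 : Euc d → ℝ≥0∞)) := measurable_one.indicator hN
  have h1 : ∫⁻ x, Ta σ (N.indicator 1) x = 0 := by
    rw [lint_Ta σ hind, lintegral_indicator_one hN, h0]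
  have h2 := (lintegral_eq_zero_iff (meas_Ta σ hind)).mp h1
  filter_upwards [h2] with x hx
  simp only [Pi.zero_apply] at hx
  have hms : MeasurableSet {y : Euc d | x + y ∈ N} := (measurable_const.add measurable_id) hN
  calc σ {y : Euc d | x + y ∈ N}
      = ∫⁻ y, ({y : Euc d | x + y ∈ N}.indicator 1 y) ∂σ := (lintegral_indicator_one hms).symm
    _ = Ta σ (N.indicator 1) x := by
        refine lintegral_congr fun y => ?_
        by_cases h : x + y ∈ N <;> simp [Ta, Set.indicator_apply, h]
    _ = 0 := hx

lemma convOp_congr [IsProbabilityMeasure σ] {f g : Euc d → ℝ} (h : f =ᵐ[volume] g) :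
    convOp σ f =ᵐ[volume] convOp σ g := by
  obtain ⟨N, hNs, hNm, hN0⟩ := exists_measurable_superset_of_null (ae_iff.mp h)
  filter_upwards [ae_null_sub σ hNm hN0] with x hx
  refine integral_congr_ae ?_
  filter_upwards [measure_eq_zero_iff_ae_notMem.mp hx] with y hy
  by_contra hne
  exact hy (hNs hne)

lemma adjOp_congr [IsProbabilityMeasure σ] {f g : Euc d → ℝ} (h : f =ᵐ[volume] g) :
    adjOp σ f =ᵐ[volume] adjOp σ g := by
  obtain ⟨N, hNs, hNm, hN0⟩ := exists_measurable_superset_of_null (ae_iff.mp h)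
  filter_upwards [ae_null_add σ hNm hN0] with x hx
  refine integral_congr_ae ?_
  filter_upwards [measure_eq_zero_iff_ae_notMem.mp hx] with y hy
  by_contra hne
  exact hy (hNs hne)

lemma Ta_congr [IsProbabilityMeasure σ] {F G : Euc d → ℝ≥0∞} (h : F =ᵐ[volume] G) :
    Ta σ F =ᵐ[volume] Ta σ G := by
  obtain ⟨N, hNs, hNm, hN0⟩ := exists_measurable_superset_of_null (ae_iff.mp h)
  filter_upwards [ae_null_add σ hNm hN0] with x hx
  refine lintegral_congr_ae ?_
  filter_upwards [measure_eq_zero_iff_ae_notMem.mp hx] with y hy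
  by_contra hne
  exact hy (hNs hne)

lemma Tl_dual [IsProbabilityMeasure σ] {F G : Euc d → ℝ≥0∞} (hF : Measurable F)
    (hG : Measurable G) :
    ∫⁻ x, Tl σ F x * G x = ∫⁻ x, F x * Ta σ G x := by
  have m1 : AEMeasurable (Function.uncurry fun x y => F (x - y) * G x)
      ((volume : Measure (Euc d)).prod σ) := by
    exact ((hF.comp (measurable_fst.sub measurable_snd)).mul (hG.comp measurable_fst)).aemeasurable
  have m2 : AEMeasurable (Function.uncurry fun y x => F x * G (x + y))
      (σ.prod (volume : Measure (Euc d))) := by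
    exact ((hF.comp measurable_snd).mul
      (hG.comp (measurable_snd.add measurable_fst))).aemeasurable
  calc ∫⁻ x, Tl σ F x * G x
      = ∫⁻ x, ∫⁻ y, F (x - y) * G x ∂σ := by
        refine lintegral_congr fun x => ?_
        exact (lintegral_mul_const _ (hF.comp (measurable_const.sub measurable_id))).symm
    _ = ∫⁻ y, ∫⁻ x, F (x - y) * G x ∂(volume : Measure (Euc d)) ∂σ :=
        lintegral_lintegral_swap m1
    _ = ∫⁻ y, ∫⁻ x, F x * G (x + y) ∂(volume : Measure (Euc d)) ∂σ := by
        refine lintegral_congr fun y => ?_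
        have h1 := lintegral_sub_right_eq_self (μ := (volume : Measure (Euc d))) (fun z => F z * G (z + y)) y
        have h2 : ∫⁻ x, F (x - y) * G (x - y + y) = ∫⁻ x, F (x - y) * G x :=
          lintegral_congr fun x => by rw [show x - y + y = x by abel]
        exact h2.symm.trans h1
    _ = ∫⁻ x, ∫⁻ y, F x * G (x + y) ∂σ ∂(volume : Measure (Euc d)) :=
        lintegral_lintegral_swap (f := fun y x => F x * G (x + y)) m2
    _ = ∫⁻ x, F x * Ta σ G x := by
        refine lintegral_congr fun x => ?_
        exact lintegral_const_mul _ (hG.comp (measurable_const.add measurable_id))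

lemma iSup_min_natCast (a : ℝ≥0∞) : (⨆ n : ℕ, min a (n : ℝ≥0∞)) = a := by
  refine le_antisymm (iSup_le fun n => min_le_left _ _) ?_
  rcases eq_or_ne a ⊤ with rfl | ha
  · calc (⊤:ℝ≥0∞) = ⨆ n : ℕ, (n : ℝ≥0∞) := ENNReal.iSup_natCast.symm
      _ ≤ ⨆ n : ℕ, min ⊤ (n:ℝ≥0∞) := iSup_mono fun n => by simp
  · obtain ⟨n, hn⟩ := ENNReal.exists_nat_gt ha
    exact le_iSup_of_le n (le_min le_rfl hn.le)

lemma iSup_rpow_mono {u : ℕ → ℝ≥0∞} (hu : Monotone u) (r : ℝ) (hr : 0 < r) :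
    (⨆ n, u n ^ r) = (⨆ n, u n) ^ r := by
  have h1 : Tendsto (fun n => u n ^ r) atTop (𝓝 ((⨆ n, u n) ^ r)) :=
    (ENNReal.continuous_rpow_const.tendsto _).comp (tendsto_atTop_iSup hu)
  have h2 : Tendsto (fun n => u n ^ r) atTop (𝓝 (⨆ n, u n ^ r)) :=
    tendsto_atTop_iSup (fun m n hmn => ENNReal.rpow_le_rpow (hu hmn) hr.le)
  exact tendsto_nhds_unique h2 h1

lemma eLpNorm_of_nonneg {g : Euc d → ℝ} (hg : ∀ x, 0 ≤ g x) {r : ℝ} (hr : 0 < r) :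
    eLpNorm g (ENNReal.ofReal r) volume = (∫⁻ x, ENNReal.ofReal (g x) ^ r) ^ (1/r) := by
  rw [eLpNorm_eq_lintegral_rpow_enorm_toReal
    (by simpa [ENNReal.ofReal_eq_zero, not_le] using hr) ENNReal.ofReal_ne_top,
    ENNReal.toReal_ofReal hr.le]
  congr 1
  refine lintegral_congr fun x => ?_
  rw [Real.enorm_eq_ofReal (hg x)]

lemma eLpNorm_complex (g : Euc d → ℝ) (r : ℝ≥0∞) :
    eLpNorm (fun x => (g x : ℂ)) r (volume : Measure (Euc d)) = eLpNorm g r volume :=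
  eLpNorm_congr_norm_ae (Filter.Eventually.of_forall fun x => by
    rw [Complex.norm_real])

lemma Tl_bound [IsProbabilityMeasure σ] {p q : ℝ} (hp : 1 < p) (hq : 1 < q)
    {F : Euc d → ℝ≥0∞} (hF : Measurable F) :
    (∫⁻ x, Tl σ F x ^ q) ^ (1/q)
      ≤ opNorm (convOp (F := ℂ) σ) (ENNReal.ofReal p) (ENNReal.ofReal q)
        * (∫⁻ x, F x ^ p) ^ (1/p) := by
  have hp0 : (0:ℝ) < p := lt_trans zero_lt_one hp
  have hq0 : (0:ℝ) < q := lt_trans zero_lt_one hq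
  set Λ := opNorm (convOp (F := ℂ) σ) (ENNReal.ofReal p) (ENNReal.ofReal q) with hΛ
  set R := Λ * (∫⁻ x, F x ^ p) ^ (1/p) with hR
  set Fn : ℕ → Euc d → ℝ≥0∞ :=
    fun n x => (closedBall (0:Euc d) n).indicator (fun x => min (F x) n) x with hFnd
  have hFnmeas : ∀ n, Measurable (Fn n) :=
    fun n => ((hF.min measurable_const).indicator measurableSet_closedBall)
  have hFnle : ∀ n x, Fn n x ≤ (n:ℝ≥0∞) := by
    intro n x
    by_cases h : x ∈ closedBall (0:Euc d) n <;>
      simp [hFnd, Set.indicator_apply, h, min_le_right]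
  have hFnne : ∀ n x, Fn n x ≠ ∞ :=
    fun n x => ((hFnle n x).trans_lt (ENNReal.natCast_lt_top n)).ne
  have hFnF : ∀ n x, Fn n x ≤ F x := by
    intro n x
    by_cases h : x ∈ closedBall (0:Euc d) n <;>
      simp [hFnd, Set.indicator_apply, h, min_le_left]
  have hmono : ∀ x, Monotone fun n => Fn n x := by
    intro x n m hnm
    by_cases h : x ∈ closedBall (0:Euc d) n
    · have h' : x ∈ closedBall (0:Euc d) m :=
        closedBall_subset_closedBall (by exact_mod_cast hnm) h
      simp only [hFnd, Set.indicator_of_mem h, Set.indicator_of_mem h']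
      exact min_le_min le_rfl (by exact_mod_cast hnm)
    · simp [hFnd, Set.indicator_of_notMem h]
  have hsup : ∀ x, (⨆ n, Fn n x) = F x := by
    intro x
    refine le_antisymm (iSup_le fun n => hFnF n x) ?_
    obtain ⟨N₀, hN₀⟩ := exists_nat_ge ‖x‖
    have hmem : ∀ n : ℕ, x ∈ closedBall (0:Euc d) ((n + N₀ : ℕ):ℝ) := by
      intro n
      simp only [mem_closedBall, dist_zero_right]
      calc ‖x‖ ≤ (N₀:ℝ) := hN₀
        _ ≤ ((n + N₀ : ℕ):ℝ) := by exact_mod_cast Nat.le_add_left _ _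
    calc F x = ⨆ n : ℕ, min (F x) n := (iSup_min_natCast (F x)).symm
      _ ≤ ⨆ n : ℕ, Fn (n + N₀) x := by
          refine iSup_mono fun n => ?_
          have : Fn (n + N₀) x = min (F x) ((n + N₀ : ℕ):ℝ≥0∞) := by
            simp only [hFnd, Set.indicator_of_mem (hmem n)]
          rw [this]
          exact min_le_min le_rfl (by exact_mod_cast Nat.le_add_right _ _)
      _ ≤ ⨆ n : ℕ, Fn n x := iSup_le fun n => le_iSup_of_le (n + N₀) le_rfl
  have key : ∀ n, (∫⁻ x, Tl σ (Fn n) x ^ q) ^ (1/q) ≤ Λ * (∫⁻ x, Fn n x ^ p) ^ (1/p) := by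
    intro n
    by_cases h0 : ∫⁻ x, Fn n x ^ p = 0
    · have hz : Fn n =ᵐ[volume] 0 := by
        have h1 := (lintegral_eq_zero_iff ((hFnmeas n).pow_const p)).mp h0
        filter_upwards [h1] with x hx
        simp only [Pi.zero_apply] at hx ⊢
        rcases ENNReal.rpow_eq_zero_iff.mp hx with ⟨h,_⟩|⟨h,_⟩
        · exact h
        · exact absurd h (hFnne n x)
      have hTl0 : ∫⁻ x, Tl σ (Fn n) x = 0 := by
        rw [lint_Tl σ (hFnmeas n), lintegral_congr_ae hz]
        simp
      have hTlz : Tl σ (Fn n) =ᵐ[volume] 0 :=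
        (lintegral_eq_zero_iff (meas_Tl σ (hFnmeas n))).mp hTl0
      have hzq : ∫⁻ x, Tl σ (Fn n) x ^ q = 0 := by
        have : (fun x => Tl σ (Fn n) x ^ q) =ᵐ[volume] 0 := by
          filter_upwards [hTlz] with x hx
          simp only [Pi.zero_apply] at hx ⊢
          rw [hx, ENNReal.zero_rpow_of_pos hq0]
        rw [lintegral_congr_ae this]; simp
      rw [hzq, ENNReal.zero_rpow_of_pos (by positivity)]
      exact zero_le
    · set fr : Euc d → ℝ := fun x => (Fn n x).toReal with hfrd
      have hfrnn : ∀ x, 0 ≤ fr x := fun x => ENNReal.toReal_nonneg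
      have hfrm : Measurable fr := (hFnmeas n).ennreal_toReal
      have hofr : ∀ x, ENNReal.ofReal (fr x) = Fn n x := fun x => ENNReal.ofReal_toReal (hFnne n x)
      have hNp : eLpNorm fr (ENNReal.ofReal p) volume = (∫⁻ x, Fn n x ^ p) ^ (1/p) := by
        rw [eLpNorm_of_nonneg hfrnn hp0]
        congr 1
        exact lintegral_congr fun x => by rw [hofr]
      have hfin : (∫⁻ x, Fn n x ^ p) ≠ ∞ := by
        have hb : ∀ x, Fn n x ^ p
            ≤ (closedBall (0:Euc d) n).indicator (fun _ => (n:ℝ≥0∞)^p) x := by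
          intro x
          by_cases h : x ∈ closedBall (0:Euc d) n
          · simp only [hFnd, Set.indicator_of_mem h]
            exact ENNReal.rpow_le_rpow (min_le_right _ _) hp0.le
          · simp [hFnd, Set.indicator_of_notMem h, ENNReal.zero_rpow_of_pos hp0]
        refine ne_of_lt (lt_of_le_of_lt (lintegral_mono hb) ?_)
        rw [lintegral_indicator measurableSet_closedBall, setLIntegral_const]
        exact ENNReal.mul_lt_top
          (ENNReal.rpow_lt_top_of_nonneg hp0.le (ENNReal.natCast_ne_top n))
          measure_closedBall_lt_top
      set fc : Euc d → ℂ := fun x => (fr x : ℂ) with hfcd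
      have hfceq : eLpNorm fc (ENNReal.ofReal p) volume = (∫⁻ x, Fn n x ^ p) ^ (1/p) := by
        rw [hfcd, eLpNorm_complex fr, hNp]
      have hmem : MemLp fc (ENNReal.ofReal p) volume := by
        constructor
        · exact (Complex.measurable_ofReal.comp hfrm).aestronglyMeasurable
        · rw [hfceq]
          exact ENNReal.rpow_lt_top_of_nonneg (by positivity) hfin
      have hne : eLpNorm fc (ENNReal.ofReal p) volume ≠ 0 := by
        rw [hfceq]
        intro hcon
        rcases ENNReal.rpow_eq_zero_iff.mp hcon with ⟨h,_⟩|⟨_,hneg⟩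
        · exact h0 h
        · have : (0:ℝ) < 1/p := by positivity
          linarith
      have hkey : eLpNorm (convOp σ fc) (ENNReal.ofReal q) volume
          / eLpNorm fc (ENNReal.ofReal p) volume ≤ Λ := by
        rw [hΛ, opNorm]
        exact le_iSup_of_le fc (le_iSup_of_le hmem (le_iSup_of_le hne le_rfl))
      have hconv : ∀ x, convOp σ fr x = (Tl σ (Fn n) x).toReal := by
        intro x
        have h1 : ∫ y, fr (x - y) ∂σ = (∫⁻ y, ENNReal.ofReal (fr (x - y)) ∂σ).toReal :=
          integral_eq_lintegral_of_nonneg_ae (Filter.Eventually.of_forall fun y => hfrnn _)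
            ((hfrm.comp (measurable_const.sub measurable_id)).aestronglyMeasurable)
        rw [convOp, h1]
        congr 1
        exact lintegral_congr fun y => by rw [hofr]
      have hconvc : convOp σ fc = fun x => ((convOp σ fr x : ℝ) : ℂ) := by
        funext x
        rw [convOp, convOp]
        exact integral_ofReal
      have hTlfin : ∀ x, Tl σ (Fn n) x ≠ ∞ := by
        intro x
        have : Tl σ (Fn n) x ≤ (n:ℝ≥0∞) := by
          calc Tl σ (Fn n) x ≤ ∫⁻ _, (n:ℝ≥0∞) ∂σ := lintegral_mono fun y => hFnle n _
            _ = (n:ℝ≥0∞) := by simp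
        exact (this.trans_lt (ENNReal.natCast_lt_top n)).ne
      have hTlq : eLpNorm (convOp σ fc) (ENNReal.ofReal q) volume
          = (∫⁻ x, Tl σ (Fn n) x ^ q) ^ (1/q) := by
        rw [hconvc, eLpNorm_complex (convOp σ fr)]
        rw [show convOp σ fr = fun x => (Tl σ (Fn n) x).toReal from funext hconv]
        rw [eLpNorm_of_nonneg (fun x => ENNReal.toReal_nonneg) hq0]
        congr 1
        exact lintegral_congr fun x => by rw [ENNReal.ofReal_toReal (hTlfin x)]
      rw [hTlq, hfceq] at hkey
      have hfin' : (∫⁻ x, Fn n x ^ p) ^ (1/p) ≠ ∞ :=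
        ENNReal.rpow_ne_top_of_nonneg (by positivity) hfin
      have hne' : (∫⁻ x, Fn n x ^ p) ^ (1/p) ≠ 0 := by
        rw [← hfceq]
        rw [hfceq]
        intro hcon
        rcases ENNReal.rpow_eq_zero_iff.mp hcon with ⟨h,_⟩|⟨_,hneg⟩
        · exact h0 h
        · have : (0:ℝ) < 1/p := by positivity
          linarith
      exact (ENNReal.div_le_iff hne' hfin').mp hkey
  have hTlsup : ∀ x, (⨆ n, Tl σ (Fn n) x) = Tl σ F x := by
    intro x
    calc (⨆ n, Tl σ (Fn n) x)
        = ∫⁻ y, ⨆ n, Fn n (x - y) ∂σ := by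
          refine (lintegral_iSup
            (fun n => (hFnmeas n).comp (measurable_const.sub measurable_id))
            (fun n m hnm => fun y => hmono _ hnm)).symm
      _ = ∫⁻ y, F (x - y) ∂σ := lintegral_congr fun y => hsup (x - y)
  have hmain : ∫⁻ x, Tl σ F x ^ q = ⨆ n, ∫⁻ x, Tl σ (Fn n) x ^ q := by
    have hptwise : (fun x => Tl σ F x ^ q) = fun x => ⨆ n, Tl σ (Fn n) x ^ q := by
      funext x
      rw [← hTlsup x]
      exact (iSup_rpow_mono (u := fun n => Tl σ (Fn n) x)
        (fun n m h => lintegral_mono fun y => hmono _ h) q hq0).symm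
    rw [hptwise]
    exact lintegral_iSup (fun n => (meas_Tl σ (hFnmeas n)).pow_const q)
      (fun n m h x => ENNReal.rpow_le_rpow (lintegral_mono fun y => hmono _ h) hq0.le)
  have hterm : ∀ n, ∫⁻ x, Tl σ (Fn n) x ^ q ≤ R ^ q := by
    intro n
    have h2 : Λ * (∫⁻ x, Fn n x ^ p) ^ (1/p) ≤ R := by
      rw [hR]
      exact mul_le_mul' le_rfl (ENNReal.rpow_le_rpow
        (lintegral_mono fun x => ENNReal.rpow_le_rpow (hFnF n x) hp0.le) (by positivity))
    have h3 : (∫⁻ x, Tl σ (Fn n) x ^ q) ^ (1/q) ≤ R := le_trans (key n) h2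
    calc ∫⁻ x, Tl σ (Fn n) x ^ q
        = ((∫⁻ x, Tl σ (Fn n) x ^ q) ^ (1/q)) ^ q := by
          rw [← ENNReal.rpow_mul, one_div, inv_mul_cancel₀ (ne_of_gt hq0), ENNReal.rpow_one]
      _ ≤ R ^ q := ENNReal.rpow_le_rpow h3 hq0.le
  calc (∫⁻ x, Tl σ F x ^ q) ^ (1/q)
      = (⨆ n, ∫⁻ x, Tl σ (Fn n) x ^ q) ^ (1/q) := by rw [hmain]
    _ ≤ (R ^ q) ^ (1/q) := ENNReal.rpow_le_rpow (iSup_le hterm) (by positivity)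
    _ = R := by rw [← ENNReal.rpow_mul, mul_one_div, div_self (ne_of_gt hq0), ENNReal.rpow_one]

lemma converse_holder {p p' : ℝ} (hp : 1 < p) (hp' : 1 < p') (hpc : (p' - 1) * p = p')
    (hsum : 1/p + 1/p' = 1) {h : Euc d → ℝ≥0∞} (hh : Measurable h) {M : ℝ≥0∞}
    (hb : ∀ φ : Euc d → ℝ≥0∞, Measurable φ →
        ∫⁻ x, φ x * h x ≤ M * (∫⁻ x, φ x ^ p) ^ (1/p)) :
    (∫⁻ x, h x ^ p') ^ (1/p') ≤ M := by
  have hp0 : (0:ℝ) < p := by linarith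
  have hp'0 : (0:ℝ) < p' := by linarith
  set hn : ℕ → Euc d → ℝ≥0∞ := fun n x => min (h x) n with hhn
  set φ : ℕ → Euc d → ℝ≥0∞ :=
    fun n x => (closedBall (0:Euc d) n).indicator (fun x => hn n x ^ (p' - 1)) x with hφ
  set G : ℕ → Euc d → ℝ≥0∞ :=
    fun n x => (closedBall (0:Euc d) n).indicator (fun x => hn n x ^ p') x with hG
  set A : ℕ → ℝ≥0∞ := fun n => ∫⁻ x, G n x with hA
  have hφm : ∀ n, Measurable (φ n) :=
    fun n => ((hh.min measurable_const).pow_const _).indicator measurableSet_closedBall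
  have hGm : ∀ n, Measurable (G n) :=
    fun n => ((hh.min measurable_const).pow_const _).indicator measurableSet_closedBall
  have hnfin : ∀ n x, hn n x ≠ ∞ :=
    fun n x => ((min_le_right _ _).trans_lt (ENNReal.natCast_lt_top n)).ne
  have hφp : ∀ n x, φ n x ^ p = G n x := by
    intro n x
    by_cases hx : x ∈ closedBall (0:Euc d) n
    · simp only [hφ, hG, Set.indicator_of_mem hx]
      rw [← ENNReal.rpow_mul, hpc]
    · simp [hφ, hG, Set.indicator_of_notMem hx, ENNReal.zero_rpow_of_pos hp0]
  have hφh : ∀ n x, G n x ≤ φ n x * h x := by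
    intro n x
    by_cases hx : x ∈ closedBall (0:Euc d) n
    · simp only [hφ, hG, Set.indicator_of_mem hx]
      rcases eq_or_ne (hn n x) 0 with h0 | h0
      · rw [h0, ENNReal.zero_rpow_of_pos hp'0]
        exact zero_le
      · calc hn n x ^ p' = hn n x ^ (p' - 1 + 1) := by norm_num
          _ = hn n x ^ (p'-1) * hn n x ^ (1:ℝ) := ENNReal.rpow_add _ _ h0 (hnfin n x)
          _ = hn n x ^ (p'-1) * hn n x := by rw [ENNReal.rpow_one]
          _ ≤ hn n x ^ (p'-1) * h x := mul_le_mul' le_rfl (min_le_left _ _)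
    · simp [hφ, hG, Set.indicator_of_notMem hx]
  have hble : ∀ n, A n ≤ M * A n ^ (1/p) := by
    intro n
    calc A n ≤ ∫⁻ x, φ n x * h x := lintegral_mono fun x => hφh n x
      _ ≤ M * (∫⁻ x, φ n x ^ p) ^ (1/p) := hb (φ n) (hφm n)
      _ = M * A n ^ (1/p) := by
          rw [hA]
          congr 2
          exact lintegral_congr fun x => hφp n x
  have hAfin : ∀ n, A n ≠ ∞ := by
    intro n
    have hb2 : ∀ x, G n x ≤ (closedBall (0:Euc d) n).indicator (fun _ => (n:ℝ≥0∞) ^ p') x := by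
      intro x
      by_cases hx : x ∈ closedBall (0:Euc d) n
      · simp only [hG, Set.indicator_of_mem hx]
        exact ENNReal.rpow_le_rpow (min_le_right _ _) hp'0.le
      · simp [hG, Set.indicator_of_notMem hx]
    refine ne_of_lt (lt_of_le_of_lt (lintegral_mono hb2) ?_)
    rw [lintegral_indicator measurableSet_closedBall, setLIntegral_const]
    exact ENNReal.mul_lt_top
      (ENNReal.rpow_lt_top_of_nonneg hp'0.le (ENNReal.natCast_ne_top n))
      measure_closedBall_lt_top
  have hAp : ∀ n, A n ^ (1/p') ≤ M := by
    intro n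
    rcases eq_or_ne (A n) 0 with h0 | h0
    · rw [h0, ENNReal.zero_rpow_of_pos (by positivity)]
      exact zero_le
    · have h1 : A n ^ (1/p) * A n ^ (1/p') = A n := by
        rw [← ENNReal.rpow_add _ _ h0 (hAfin n), hsum, ENNReal.rpow_one]
      have h2 : A n ^ (1/p') * A n ^ (1/p) ≤ M * A n ^ (1/p) := by
        rw [mul_comm, h1]
        exact hble n
      have hc0 : A n ^ (1/p) ≠ 0 := by
        intro hcon
        rcases ENNReal.rpow_eq_zero_iff.mp hcon with ⟨hz,_⟩|⟨_,hneg⟩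
        · exact h0 hz
        · have : (0:ℝ) < 1/p := by positivity
          linarith
      have hct : A n ^ (1/p) ≠ ∞ := ENNReal.rpow_ne_top_of_nonneg (by positivity) (hAfin n)
      exact (ENNReal.mul_le_mul_iff_left hc0 hct).mp h2
  have hmono3 : ∀ x, Monotone fun n => G n x := by
    intro x n m hnm
    by_cases hx : x ∈ closedBall (0:Euc d) n
    · have hx' : x ∈ closedBall (0:Euc d) m :=
        closedBall_subset_closedBall (by exact_mod_cast hnm) hx
      simp only [hG, Set.indicator_of_mem hx, Set.indicator_of_mem hx']
      exact ENNReal.rpow_le_rpow (min_le_min le_rfl (by exact_mod_cast hnm)) hp'0.le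
    · simp [hG, Set.indicator_of_notMem hx]
  have hptsup : ∀ x, (⨆ n, G n x) = h x ^ p' := by
    intro x
    refine le_antisymm (iSup_le fun n => ?_) ?_
    · by_cases hx : x ∈ closedBall (0:Euc d) n
      · simp only [hG, Set.indicator_of_mem hx]
        exact ENNReal.rpow_le_rpow (min_le_left _ _) hp'0.le
      · simp [hG, Set.indicator_of_notMem hx]
    · obtain ⟨N₀, hN₀⟩ := exists_nat_ge ‖x‖
      have hmem : ∀ n : ℕ, x ∈ closedBall (0:Euc d) ((n + N₀:ℕ):ℝ) := by
        intro n
        simp only [mem_closedBall, dist_zero_right]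
        calc ‖x‖ ≤ (N₀:ℝ) := hN₀
          _ ≤ ((n + N₀ : ℕ):ℝ) := by exact_mod_cast Nat.le_add_left _ _
      calc h x ^ p' = (⨆ n : ℕ, min (h x) n) ^ p' := by rw [iSup_min_natCast]
        _ = ⨆ n : ℕ, (min (h x) (n:ℝ≥0∞)) ^ p' := by
            refine (iSup_rpow_mono (u := fun n : ℕ => min (h x) n)
              (fun n m hnm => min_le_min le_rfl (by exact_mod_cast hnm)) p' hp'0).symm
        _ ≤ ⨆ n : ℕ, G (n + N₀) x := by
            refine iSup_mono fun n => ?_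
            have : G (n + N₀) x = min (h x) ((n + N₀:ℕ):ℝ≥0∞) ^ p' := by
              simp only [hG, hhn, Set.indicator_of_mem (hmem n)]
            rw [this]
            exact ENNReal.rpow_le_rpow
              (min_le_min le_rfl (by exact_mod_cast Nat.le_add_right _ _)) hp'0.le
        _ ≤ ⨆ n : ℕ, G n x := iSup_le fun n => le_iSup_of_le (n + N₀) le_rfl
  have hint : ∫⁻ x, h x ^ p' = ⨆ n, A n := by
    have hpt : (fun x => h x ^ p') = fun x => ⨆ n, G n x := funext fun x => (hptsup x).symm
    rw [hpt, hA]
    exact lintegral_iSup hGm (fun n m hnm x => hmono3 x hnm)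
  rw [hint]
  have hAmono : Monotone A := fun n m hnm => lintegral_mono fun x => hmono3 x hnm
  rw [← iSup_rpow_mono hAmono _ (by positivity : (0:ℝ) < 1/p')]
  exact iSup_le hAp

lemma young_eq_real {p p' : ℝ} (hp : 1 < p) (hp' : 1 < p') (hsum : 1/p + 1/p' = 1)
    {A B : ℝ} (hA : 0 ≤ A) (hB : 0 ≤ B)
    (heq : A * B = A ^ p / p + B ^ p' / p') : A ^ p = B ^ p' := by
  have hp0 : (0:ℝ) < p := by linarith
  have hp'0 : (0:ℝ) < p' := by linarith
  rcases eq_or_lt_of_le hB with hB0 | hBpos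
  · rw [← hB0] at heq ⊢
    rw [Real.zero_rpow (ne_of_gt hp'0)] at heq ⊢
    have hz : A ^ p / p = 0 := by
      rw [zero_div] at heq
      linarith
    have hApz : A = 0 := by
      field_simp at hz
      exact (Real.rpow_eq_zero hA (ne_of_gt hp0)).mp (by simpa using hz)
    rw [hApz]
    exact Real.zero_rpow (ne_of_gt hp0)
  rcases eq_or_lt_of_le hA with hA0 | hApos
  · rw [← hA0] at heq ⊢
    rw [Real.zero_rpow (ne_of_gt hp0)] at heq ⊢
    have hz : B ^ p' / p' = 0 := by
      rw [zero_div] at heq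
      linarith
    have hBpz : B = 0 := by
      field_simp at hz
      exact (Real.rpow_eq_zero hB (ne_of_gt hp'0)).mp (by simpa using hz)
    rw [hBpz]
    exact (Real.zero_rpow (ne_of_gt hp'0)).symm
  -- now A, B > 0
  set s : ℝ := A / B ^ (p'/p) with hsdef
  have hBpow : (0:ℝ) < B ^ (p'/p) := Real.rpow_pos_of_pos hBpos _
  have hspos : 0 < s := div_pos hApos hBpow
  have hApow : A = s * B ^ (p'/p) := by
    rw [hsdef, div_mul_cancel₀]
    exact ne_of_gt hBpow
  have hBp' : (0:ℝ) < B ^ p' := Real.rpow_pos_of_pos hBpos _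
  have hprod : (p'/p) * p = p' := div_mul_cancel₀ p' (ne_of_gt hp0)
  have hApBp : A ^ p = s ^ p * B ^ p' := by
    rw [hApow, Real.mul_rpow hspos.le hBpow.le, ← Real.rpow_mul hB, hprod]
  have hpne : p ≠ 0 := ne_of_gt hp0
  have hp'ne : p' ≠ 0 := ne_of_gt hp'0
  have hps : p' + p = p * p' := by
    field_simp [hpne, hp'ne] at hsum
    linear_combination hsum
  have hpp1 : p'/p + 1 = p' := by
    field_simp [hpne]
    linear_combination hps
  have hAB : A * B = s * B ^ p' := by
    have hBB : B ^ (p'/p) * B = B ^ p' := by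
      calc B ^ (p'/p) * B = B ^ (p'/p) * B ^ (1:ℝ) := by rw [Real.rpow_one]
        _ = B ^ (p'/p + 1) := (Real.rpow_add hBpos _ _).symm
        _ = B ^ p' := by rw [hpp1]
    rw [hApow, mul_assoc, hBB]
  have hseq : s = s ^ p / p + 1 / p' := by
    have h1 : s * B ^ p' = (s ^ p / p + 1 / p') * B ^ p' := by
      rw [← hAB, heq, hApBp]
      ring
    have := mul_right_cancel₀ (ne_of_gt hBp') h1
    linarith
  by_contra hne
  have hs1 : s ≠ 1 := by
    intro hcon
    apply hne
    rw [hApBp, hcon, Real.one_rpow, one_mul]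
  have hbern : 1 + p * (s - 1) < (1 + (s - 1)) ^ p :=
    one_add_mul_self_lt_rpow_one_add (by linarith) (by
      intro hcon
      apply hs1
      linarith) hp
  have hseq2 : (1:ℝ) + (s - 1) = s := by ring
  rw [hseq2] at hbern
  have hdiv : (1 + p * (s - 1)) / p < s ^ p / p := by gcongr
  have hexp : (1 + p * (s - 1)) / p = 1/p + (s - 1) := by
    field_simp
  linarith [hseq, hdiv, hexp, hsum]
lemma young_eq_enn {p p' : ℝ} (hp : 1 < p) (hp' : 1 < p') (hsum : 1/p + 1/p' = 1)
    {a b : ℝ≥0∞} (ha : a ≠ ∞) (hb : b ≠ ∞)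
    (heq : a * b = a ^ p / ENNReal.ofReal p + b ^ p' / ENNReal.ofReal p') :
    a ^ p = b ^ p' := by
  have hp0 : (0:ℝ) < p := by linarith
  have hp'0 : (0:ℝ) < p' := by linarith
  set A := a.toReal with hAdef
  set B := b.toReal with hBdef
  have hA : 0 ≤ A := ENNReal.toReal_nonneg
  have hB : 0 ≤ B := ENNReal.toReal_nonneg
  have hapfin : a ^ p ≠ ∞ := ENNReal.rpow_ne_top_of_nonneg hp0.le ha
  have hbpfin : b ^ p' ≠ ∞ := ENNReal.rpow_ne_top_of_nonneg hp'0.le hb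
  have hd1 : a ^ p / ENNReal.ofReal p ≠ ∞ :=
    (ENNReal.div_lt_top hapfin (by simp [hp0])).ne
  have hd2 : b ^ p' / ENNReal.ofReal p' ≠ ∞ :=
    (ENNReal.div_lt_top hbpfin (by simp [hp'0])).ne
  have hReq : A * B = A ^ p / p + B ^ p' / p' := by
    have h1 := congrArg ENNReal.toReal heq
    rw [ENNReal.toReal_mul, ENNReal.toReal_add hd1 hd2, ENNReal.toReal_div,
      ENNReal.toReal_div, ← ENNReal.toReal_rpow, ← ENNReal.toReal_rpow,
      ENNReal.toReal_ofReal hp0.le, ENNReal.toReal_ofReal hp'0.le] at h1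
    exact h1
  have hkey := young_eq_real hp hp' hsum hA hB hReq
  have haA : a = ENNReal.ofReal A := (ENNReal.ofReal_toReal ha).symm
  have hbB : b = ENNReal.ofReal B := (ENNReal.ofReal_toReal hb).symm
  calc a ^ p = ENNReal.ofReal (A ^ p) := by
        rw [haA, ENNReal.ofReal_rpow_of_nonneg hA hp0.le]
    _ = ENNReal.ofReal (B ^ p') := by rw [hkey]
    _ = b ^ p' := by rw [hbB, ENNReal.ofReal_rpow_of_nonneg hB hp'0.le]

lemma holder_eq {p p' : ℝ} (hp : 1 < p) (hp' : 1 < p') (hsum : 1/p + 1/p' = 1)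
    {F k : Euc d → ℝ≥0∞} (hF : Measurable F) (hk : Measurable k)
    (hF1 : ∫⁻ x, F x ^ p = 1) (hk1 : ∫⁻ x, k x ^ p' = 1) (hFk : ∫⁻ x, F x * k x = 1) :
    ∀ᵐ x ∂(volume : Measure (Euc d)), F x ^ p = k x ^ p' := by
  have hp0 : (0:ℝ) < p := by linarith
  have hp'0 : (0:ℝ) < p' := by linarith
  have hconj : p.HolderConjugate p' := Real.holderConjugate_iff.mpr ⟨hp, by
    rw [inv_eq_one_div, inv_eq_one_div]
    exact hsum⟩
  set w : Euc d → ℝ≥0∞ :=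
    fun x => F x ^ p * (ENNReal.ofReal p)⁻¹ + k x ^ p' * (ENNReal.ofReal p')⁻¹ with hw
  have hwm : Measurable w :=
    ((hF.pow_const p).mul_const _).add ((hk.pow_const p').mul_const _)
  have hyoung : ∀ x, F x * k x ≤ w x := by
    intro x
    have h1 := ENNReal.young_inequality (F x) (k x) hconj
    rw [div_eq_mul_inv, div_eq_mul_inv] at h1
    exact h1
  have hwint : ∫⁻ x, w x = 1 := by
    rw [hw]
    rw [lintegral_add_left ((hF.pow_const p).mul_const _)]
    rw [lintegral_mul_const _ (hF.pow_const p), lintegral_mul_const _ (hk.pow_const p'),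
      hF1, hk1, one_mul, one_mul]
    rw [← ENNReal.ofReal_inv_of_pos hp0, ← ENNReal.ofReal_inv_of_pos hp'0,
      ← ENNReal.ofReal_add (by positivity) (by positivity)]
    rw [show p⁻¹ + p'⁻¹ = 1 by
      rw [inv_eq_one_div, inv_eq_one_div]
      exact hsum]
    exact ENNReal.ofReal_one
  have hsub : ∫⁻ x, (w x - F x * k x) = 0 := by
    rw [lintegral_sub (g := fun x => F x * k x) (hF.mul hk) (by rw [hFk]; exact ENNReal.one_ne_top)
      (Filter.Eventually.of_forall hyoung), hwint, hFk, tsub_self]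
  have hae := (lintegral_eq_zero_iff (hwm.sub (hF.mul hk))).mp hsub
  have hFfin : ∀ᵐ x ∂(volume : Measure (Euc d)), F x ≠ ∞ := by
    have h1 : ∫⁻ x, F x ^ p ≠ ∞ := by rw [hF1]; exact ENNReal.one_ne_top
    filter_upwards [ae_lt_top (hF.pow_const p) h1] with x hx
    intro hcon
    rw [hcon, ENNReal.top_rpow_of_pos hp0] at hx
    exact absurd hx (lt_irrefl _)
  have hkfin : ∀ᵐ x ∂(volume : Measure (Euc d)), k x ≠ ∞ := by
    have h1 : ∫⁻ x, k x ^ p' ≠ ∞ := by rw [hk1]; exact ENNReal.one_ne_top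
    filter_upwards [ae_lt_top (hk.pow_const p') h1] with x hx
    intro hcon
    rw [hcon, ENNReal.top_rpow_of_pos hp'0] at hx
    exact absurd hx (lt_irrefl _)
  filter_upwards [hae, hFfin, hkfin] with x hx hxF hxk
  simp only [Pi.zero_apply] at hx
  have hle : w x ≤ F x * k x := by
    rwa [← tsub_eq_zero_iff_le]
  have heqx : F x * k x = w x := le_antisymm (hyoung x) hle
  refine young_eq_enn hp hp' hsum hxF hxk ?_
  rw [heqx, hw]
  simp only [div_eq_mul_inv]

end ELaux

open ELaux in
/-- The Euler–Lagrange equation for normalized nonnegative extremizers. -/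
theorem euler_lagrange_equation
    (d : ℕ) (hd : 1 ≤ d)
    (σ : Measure (Euc d)) [IsProbabilityMeasure σ]
    (hcpt : ∃ K : Set (Euc d), IsCompact K ∧ σ Kᶜ = 0)
    (p q : ℝ) (hp : 1 < p) (hpq : p < q)
    (hvalid : opNorm (convOp (F := ℂ) σ) (ENNReal.ofReal p) (ENNReal.ofReal q) < ⊤)
    (f : Euc d → ℝ) (hfpos : ∀ x, 0 ≤ f x)
    (hf : MemLp f (ENNReal.ofReal p) volume)
    (hnorm : eLpNorm f (ENNReal.ofReal p) volume = 1)
    (hext : eLpNorm (convOp σ f) (ENNReal.ofReal q) volume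
      = opNorm (convOp (F := ℂ) σ) (ENNReal.ofReal p) (ENNReal.ofReal q)
        * eLpNorm f (ENNReal.ofReal p) volume) :
    ∀ᵐ x ∂(volume : Measure (Euc d)),
      f x = (opNorm (convOp (F := ℂ) σ) (ENNReal.ofReal p) (ENNReal.ofReal q)).toReal
              ^ (-(q / (p - 1)))
            * (adjOp σ (fun y => (convOp σ f y) ^ (q - 1)) x) ^ (1 / (p - 1)) := by
  classical
  have hq : 1 < q := hp.trans hpq
  have hp0 : (0:ℝ) < p := by linarith
  have hq0 : (0:ℝ) < q := by linarith
  set Λ := opNorm (convOp (F := ℂ) σ) (ENNReal.ofReal p) (ENNReal.ofReal q) with hΛdef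
  set f₀ : Euc d → ℝ := fun x => max (hf.1.mk f x) 0 with hf₀def
  have hf₀m : Measurable f₀ := hf.1.stronglyMeasurable_mk.measurable.max measurable_const
  have hff₀ : f =ᵐ[volume] f₀ := by
    filter_upwards [hf.1.ae_eq_mk] with x hx
    rw [hf₀def]
    simp only [← hx]
    exact (max_eq_left (hfpos x)).symm
  have hf₀nn : ∀ x, 0 ≤ f₀ x := fun x => le_max_right _ _
  set F : Euc d → ℝ≥0∞ := fun x => ENNReal.ofReal (f₀ x) with hFdef
  have hFm : Measurable F := ENNReal.measurable_ofReal.comp hf₀m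
  have hnorm₀ : eLpNorm f₀ (ENNReal.ofReal p) volume = 1 := by
    rw [← eLpNorm_congr_ae hff₀]
    exact hnorm
  have hF1 : ∫⁻ x, F x ^ p = 1 := by
    have h1 : eLpNorm f₀ (ENNReal.ofReal p) volume = (∫⁻ x, F x ^ p) ^ (1/p) :=
      eLpNorm_of_nonneg hf₀nn hp0
    rw [hnorm₀] at h1
    have h2 := congrArg (fun t => t ^ p) h1
    rw [← ENNReal.rpow_mul, one_div, inv_mul_cancel₀ (ne_of_gt hp0), ENNReal.rpow_one,
      ENNReal.one_rpow] at h2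
    exact h2.symm
  have hbound' : (∫⁻ x, Tl σ F x ^ q) ^ (1/q) ≤ Λ := by
    have hbound := Tl_bound σ hp hq hFm
    rw [hF1, ENNReal.one_rpow, mul_one] at hbound
    exact hbound
  have hconv₀ : ∀ x, convOp σ f₀ x = (Tl σ F x).toReal := by
    intro x
    have h1 : ∫ y, f₀ (x - y) ∂σ = (∫⁻ y, ENNReal.ofReal (f₀ (x - y)) ∂σ).toReal :=
      integral_eq_lintegral_of_nonneg_ae (Filter.Eventually.of_forall fun y => hf₀nn _)
        ((hf₀m.comp (measurable_const.sub measurable_id)).aestronglyMeasurable)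
    rw [convOp, h1]
    rfl
  have hconvae : convOp σ f =ᵐ[volume] fun x => (Tl σ F x).toReal := by
    filter_upwards [convOp_congr σ hff₀] with x hx
    rw [hx, hconv₀ x]
  have hextΛ : eLpNorm (convOp σ f) (ENNReal.ofReal q) volume = Λ := by
    rw [hext, hnorm, mul_one]
  have heq3 : (∫⁻ x, ENNReal.ofReal ((Tl σ F x).toReal) ^ q) ^ (1/q) = Λ := by
    rw [← eLpNorm_of_nonneg (fun x : Euc d => ENNReal.toReal_nonneg) hq0,
      ← eLpNorm_congr_ae hconvae]
    exact hextΛ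
  have hintq_le : ∫⁻ x, Tl σ F x ^ q ≤ Λ ^ q := by
    calc ∫⁻ x, Tl σ F x ^ q = ((∫⁻ x, Tl σ F x ^ q) ^ (1/q)) ^ q := by
          rw [← ENNReal.rpow_mul, one_div, inv_mul_cancel₀ (ne_of_gt hq0), ENNReal.rpow_one]
      _ ≤ Λ ^ q := ENNReal.rpow_le_rpow hbound' hq0.le
  have hTlfin : ∀ᵐ x ∂(volume : Measure (Euc d)), Tl σ F x ≠ ∞ := by
    have h1 : ∫⁻ x, Tl σ F x ^ q ≠ ∞ :=
      ne_of_lt (lt_of_le_of_lt hintq_le (ENNReal.rpow_lt_top_of_nonneg hq0.le hvalid.ne))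
    filter_upwards [ae_lt_top ((meas_Tl σ hFm).pow_const q) h1] with x hx
    intro hcon
    rw [hcon, ENNReal.top_rpow_of_pos hq0] at hx
    exact absurd hx (lt_irrefl _)
  have hintq : ∫⁻ x, Tl σ F x ^ q = Λ ^ q := by
    have h1 : (fun x => ENNReal.ofReal ((Tl σ F x).toReal) ^ q)
        =ᵐ[volume] fun x => Tl σ F x ^ q := by
      filter_upwards [hTlfin] with x hx
      rw [ENNReal.ofReal_toReal hx]
    rw [← lintegral_congr_ae h1]
    have h2 := congrArg (fun t => t ^ q) heq3
    rw [← ENNReal.rpow_mul, one_div, inv_mul_cancel₀ (ne_of_gt hq0), ENNReal.rpow_one] at h2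
    exact h2
  have hΛ0 : Λ ≠ 0 := by
    intro hcon
    have h1 : ∫⁻ x, Tl σ F x ^ q = 0 := by
      rw [hintq, hcon, ENNReal.zero_rpow_of_pos hq0]
    have h2 : Tl σ F =ᵐ[volume] 0 := by
      have h3 := (lintegral_eq_zero_iff ((meas_Tl σ hFm).pow_const q)).mp h1
      filter_upwards [h3] with x hx
      simp only [Pi.zero_apply] at hx ⊢
      rcases ENNReal.rpow_eq_zero_iff.mp hx with ⟨hz,_⟩|⟨_,hneg⟩
      · exact hz
      · linarith
    have h4 : ∫⁻ x, F x = 0 := by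
      rw [← lint_Tl σ hFm, lintegral_congr_ae h2]
      simp
    have h5 : F =ᵐ[volume] 0 := (lintegral_eq_zero_iff hFm).mp h4
    have h6 : ∫⁻ x, F x ^ p = 0 := by
      have h7 : (fun x => F x ^ p) =ᵐ[volume] 0 := by
        filter_upwards [h5] with x hx
        simp only [Pi.zero_apply] at hx ⊢
        rw [hx, ENNReal.zero_rpow_of_pos hp0]
      rw [lintegral_congr_ae h7]
      simp
    rw [hF1] at h6
    exact one_ne_zero h6
  have hΛt : Λ ≠ ⊤ := hvalid.ne
  set p' : ℝ := p / (p - 1) with hp'def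
  set q' : ℝ := q / (q - 1) with hq'def
  have hpm1 : (0:ℝ) < p - 1 := by linarith
  have hqm1 : (0:ℝ) < q - 1 := by linarith
  have hp'1 : 1 < p' := by
    rw [hp'def, lt_div_iff₀ hpm1]
    linarith
  have hq'1 : 1 < q' := by
    rw [hq'def, lt_div_iff₀ hqm1]
    linarith
  have hp'0 : (0:ℝ) < p' := by linarith
  have hq'0 : (0:ℝ) < q' := by linarith
  have hpsum : 1/p + 1/p' = 1 := by
    rw [hp'def]
    field_simp
    ring
  have hqsum : 1/q + 1/q' = 1 := by
    rw [hq'def]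
    field_simp
    ring
  have hppc : (p' - 1) * p = p' := by
    rw [hp'def]
    field_simp
    ring
  set G : Euc d → ℝ≥0∞ := fun x => Tl σ F x ^ (q - 1) with hGdef
  have hGm : Measurable G := (meas_Tl σ hFm).pow_const _
  set H : Euc d → ℝ≥0∞ := Ta σ G with hHdef
  have hHm : Measurable H := meas_Ta σ hGm
  have hq'mul : (q - 1) * q' = q := by
    rw [hq'def]
    field_simp
  have hGq' : ∫⁻ x, G x ^ q' = Λ ^ q := by
    rw [← hintq]
    refine lintegral_congr fun x => ?_
    rw [hGdef, ← ENNReal.rpow_mul, hq'mul]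
  have hΛq0 : Λ ^ q ≠ 0 := by
    intro hcon
    rcases ENNReal.rpow_eq_zero_iff.mp hcon with ⟨hz,_⟩|⟨_,hneg⟩
    · exact hΛ0 hz
    · linarith
  have hΛqt : Λ ^ q ≠ ∞ := ENNReal.rpow_ne_top_of_nonneg hq0.le hΛt
  have hqq' : (1:ℝ) + q * (1/q') = q := by
    rw [hq'def, one_div_div]
    field_simp
    ring
  have hHb : ∀ φ : Euc d → ℝ≥0∞, Measurable φ →
      ∫⁻ x, φ x * H x ≤ (Λ ^ q) * (∫⁻ x, φ x ^ p) ^ (1/p) := by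
    intro φ hφm
    have hdual := Tl_dual σ hφm hGm
    have hconjq : q.HolderConjugate q' := Real.holderConjugate_iff.mpr ⟨hq, by
      rw [inv_eq_one_div, inv_eq_one_div]
      exact hqsum⟩
    have hhold := ENNReal.lintegral_mul_le_Lp_mul_Lq volume hconjq
      (meas_Tl σ hφm).aemeasurable hGm.aemeasurable
    have hΛcomb : Λ * (Λ ^ q) ^ (1/q') = Λ ^ q := by
      calc Λ * (Λ ^ q) ^ (1/q') = Λ ^ (1:ℝ) * Λ ^ (q * (1/q')) := by
            rw [ENNReal.rpow_one, ← ENNReal.rpow_mul]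
        _ = Λ ^ (1 + q * (1/q')) := (ENNReal.rpow_add _ _ hΛ0 hΛt).symm
        _ = Λ ^ q := by rw [hqq']
    calc ∫⁻ x, φ x * H x = ∫⁻ x, Tl σ φ x * G x := hdual.symm
      _ ≤ (∫⁻ x, Tl σ φ x ^ q) ^ (1/q) * (∫⁻ x, G x ^ q') ^ (1/q') := hhold
      _ ≤ (Λ * (∫⁻ x, φ x ^ p) ^ (1/p)) * (Λ ^ q) ^ (1/q') := by
          refine mul_le_mul' (Tl_bound σ hp hq hφm) ?_
          rw [hGq']
      _ = (Λ ^ q) * (∫⁻ x, φ x ^ p) ^ (1/p) := by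
          rw [mul_right_comm, hΛcomb]
  have hHp' : (∫⁻ x, H x ^ p') ^ (1/p') ≤ Λ ^ q :=
    converse_holder hp hp'1 hppc hpsum hHm hHb
  have hsplit : ∫⁻ x, Tl σ F x ^ q = ∫⁻ x, Tl σ F x * G x := by
    refine lintegral_congr fun x => ?_
    simp only [hGdef]
    rcases eq_or_ne (Tl σ F x) 0 with h0 | h0
    · rw [h0, ENNReal.zero_rpow_of_pos hq0, zero_mul]
    rcases eq_or_ne (Tl σ F x) ∞ with ht | ht
    · have hq10 : (0:ℝ) < q - 1 := by linarith
      rw [ht]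
      rw [ENNReal.top_rpow_of_pos hq0, ENNReal.top_rpow_of_pos hq10, ENNReal.top_mul_top]
    · calc Tl σ F x ^ q = Tl σ F x ^ (1 + (q-1)) := by norm_num
        _ = Tl σ F x ^ (1:ℝ) * Tl σ F x ^ (q-1) := ENNReal.rpow_add _ _ h0 ht
        _ = Tl σ F x * Tl σ F x ^ (q-1) := by rw [ENNReal.rpow_one]
  have hFH : ∫⁻ x, F x * H x = Λ ^ q := by
    rw [hHdef, ← Tl_dual σ hFm hGm, ← hsplit, hintq]
  have hconjp : p.HolderConjugate p' := Real.holderConjugate_iff.mpr ⟨hp, by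
    rw [inv_eq_one_div, inv_eq_one_div]
    exact hpsum⟩
  have hHolder := ENNReal.lintegral_mul_le_Lp_mul_Lq volume hconjp
    hFm.aemeasurable hHm.aemeasurable
  have hHeq : (∫⁻ x, H x ^ p') ^ (1/p') = Λ ^ q := by
    refine le_antisymm hHp' ?_
    calc Λ ^ q = ∫⁻ x, F x * H x := hFH.symm
      _ ≤ (∫⁻ x, F x ^ p) ^ (1/p) * (∫⁻ x, H x ^ p') ^ (1/p') := hHolder
      _ = (∫⁻ x, H x ^ p') ^ (1/p') := by rw [hF1, ENNReal.one_rpow, one_mul]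
  have hintHp' : ∫⁻ x, H x ^ p' = (Λ ^ q) ^ p' := by
    have h2 := congrArg (fun t => t ^ p') hHeq
    rw [← ENNReal.rpow_mul, one_div, inv_mul_cancel₀ (ne_of_gt hp'0), ENNReal.rpow_one] at h2
    exact h2
  set k : Euc d → ℝ≥0∞ := fun x => H x * (Λ ^ q)⁻¹ with hkdef
  have hkm : Measurable k := hHm.mul_const _
  have hΛqp0 : (Λ ^ q) ^ p' ≠ 0 := by
    intro hcon
    rcases ENNReal.rpow_eq_zero_iff.mp hcon with ⟨hz,_⟩|⟨_,hneg⟩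
    · exact hΛq0 hz
    · linarith
  have hΛqpt : (Λ ^ q) ^ p' ≠ ∞ := ENNReal.rpow_ne_top_of_nonneg hp'0.le hΛqt
  have hk1 : ∫⁻ x, k x ^ p' = 1 := by
    have hpt : ∀ x, k x ^ p' = H x ^ p' * ((Λ ^ q) ^ p')⁻¹ := by
      intro x
      rw [hkdef]
      rw [ENNReal.mul_rpow_of_nonneg _ _ hp'0.le, ENNReal.inv_rpow]
    rw [lintegral_congr hpt, lintegral_mul_const _ (hHm.pow_const p'), hintHp',
      ENNReal.mul_inv_cancel hΛqp0 hΛqpt]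
  have hFk1 : ∫⁻ x, F x * k x = 1 := by
    have hpt : ∀ x, F x * k x = F x * H x * (Λ ^ q)⁻¹ := by
      intro x
      rw [hkdef, mul_assoc]
    rw [lintegral_congr hpt, lintegral_mul_const (f := fun x => F x * H x) _ (hFm.mul hHm), hFH,
      ENNReal.mul_inv_cancel hΛq0 hΛqt]
  have hkey := holder_eq hp hp'1 hpsum hFm hkm hF1 hk1 hFk1
  -- identify adjOp with H
  have hgae : (fun y => convOp σ f y ^ (q - 1))
      =ᵐ[volume] fun y => ((Tl σ F y).toReal) ^ (q - 1) := by
    filter_upwards [hconvae] with y hy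
    rw [hy]
  have hadjae := adjOp_congr σ hgae
  have hg₀m : Measurable fun y => ((Tl σ F y).toReal) ^ (q - 1) :=
    ((meas_Tl σ hFm).ennreal_toReal).pow_const _
  have hadj₀ : ∀ x, adjOp σ (fun y => ((Tl σ F y).toReal) ^ (q - 1)) x
      = (Ta σ (fun y => ENNReal.ofReal (((Tl σ F y).toReal) ^ (q - 1))) x).toReal := by
    intro x
    have h1 : ∫ y, ((Tl σ F (x + y)).toReal) ^ (q-1) ∂σ
        = (∫⁻ y, ENNReal.ofReal (((Tl σ F (x + y)).toReal) ^ (q-1)) ∂σ).toReal :=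
      integral_eq_lintegral_of_nonneg_ae
        (Filter.Eventually.of_forall fun y => Real.rpow_nonneg ENNReal.toReal_nonneg _)
        ((hg₀m.comp (measurable_const.add measurable_id)).aestronglyMeasurable)
    rw [adjOp, h1]
    rfl
  have hofg : (fun y => ENNReal.ofReal (((Tl σ F y).toReal) ^ (q - 1))) =ᵐ[volume] G := by
    filter_upwards [hTlfin] with y hy
    rw [hGdef, ENNReal.toReal_rpow,
      ENNReal.ofReal_toReal (ENNReal.rpow_ne_top_of_nonneg (by linarith) hy)]
  have hTaae : Ta σ (fun y => ENNReal.ofReal (((Tl σ F y).toReal) ^ (q - 1)))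
      =ᵐ[volume] H := Ta_congr σ hofg
  have hHfin : ∀ᵐ x ∂(volume : Measure (Euc d)), H x ≠ ∞ := by
    have h1 : ∫⁻ x, H x ^ p' ≠ ∞ := by
      rw [hintHp']
      exact hΛqpt
    filter_upwards [ae_lt_top (hHm.pow_const p') h1] with x hx
    intro hcon
    rw [hcon, ENNReal.top_rpow_of_pos hp'0] at hx
    exact absurd hx (lt_irrefl _)
  have hpp' : p * (1/p') = p - 1 := by
    rw [hp'def, one_div_div]
    field_simp
  filter_upwards [hff₀, hkey, hadjae, hTaae, hHfin] with x hx₀ hxk hxadj hxta hxH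
  rw [hxadj, hadj₀ x, hxta]
  have hkx : k x = F x ^ (p - 1) := by
    have h1 : (k x ^ p') ^ (1/p') = k x := by
      rw [← ENNReal.rpow_mul, mul_one_div, div_self (ne_of_gt hp'0), ENNReal.rpow_one]
    rw [← h1, ← hxk, ← ENNReal.rpow_mul, hpp']
  have hHx : H x = Λ ^ q * F x ^ (p - 1) := by
    have h1 : k x * (Λ ^ q) = H x := by
      rw [hkdef, mul_assoc, ENNReal.inv_mul_cancel hΛq0 hΛqt, mul_one]
    rw [← h1, hkx, mul_comm]
  have hFx : (F x).toReal = f x := by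
    rw [hFdef, ENNReal.toReal_ofReal (hf₀nn x)]
    exact hx₀.symm
  have hr0 : 0 < Λ.toReal := ENNReal.toReal_pos hΛ0 hΛt
  have hHtoReal : (H x).toReal = Λ.toReal ^ q * f x ^ (p - 1) := by
    rw [hHx, ENNReal.toReal_mul, ← ENNReal.toReal_rpow, ← ENNReal.toReal_rpow, hFx]
  rw [hHtoReal]
  have hfx0 : 0 ≤ f x := hfpos x
  rw [Real.mul_rpow (by positivity) (by positivity), ← Real.rpow_mul hr0.le,
    ← Real.rpow_mul hfx0, show (p-1) * (1/(p-1)) = 1 by field_simp, Real.rpow_one,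
    ← mul_assoc, ← Real.rpow_add hr0,
    show -(q/(p-1)) + q * (1/(p-1)) = 0 by rw [mul_one_div]; ring,
    Real.rpow_zero, one_mul]
end
end

section
/- Suppose σ is a compactly supported Borel probability measure on ℝ^d, 2 ≤ q, 1 < p < q < ∞ is a valid pair for the convolution operator T, and f is a normalized (‖f‖_p = 1) nonnegative extremizer for T : L^p(ℝ^d) → L^q(ℝ^d). Then for every N ∈ ℕ there exists a constant c_N > 0 such that f(x) ≥ c_N · ( (T^*T)^N f (x) )^{((q−1)/(p−1))^N} for almost every x ∈ ℝ^d, where (T^*T)^N denotes the N-fold composition of T^*T and T^*g(x) = ∫_{ℝ^d} g(x+y) dσ(y). -/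
open MeasureTheory Metric Filter
open scoped ENNReal Topology

noncomputable section

set_option linter.unusedSectionVars false
set_option linter.unusedVariables false
set_option maxHeartbeats 1000000


set_option linter.unusedSectionVars false
set_option linter.unusedVariables false
variable {d : ℕ} (σ : Measure (Euc d)) [IsProbabilityMeasure σ]

/-- lintegral convolution -/
def eAx_Tl (F : Euc d → ℝ≥0∞) (x : Euc d) : ℝ≥0∞ := ∫⁻ y, F (x - y) ∂σ

/-- lintegral adjoint -/
def eAx_Sl (F : Euc d → ℝ≥0∞) (x : Euc d) : ℝ≥0∞ := ∫⁻ y, F (x + y) ∂σ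

/-- lintegral T*T -/
def eAx_Gl (F : Euc d → ℝ≥0∞) : Euc d → ℝ≥0∞ := eAx_Sl σ (eAx_Tl σ F)

lemma eAx_measurable_Tl {F : Euc d → ℝ≥0∞} (hF : Measurable F) : Measurable (eAx_Tl σ F) :=
  Measurable.lintegral_prod_right (hF.comp (measurable_fst.sub measurable_snd))

lemma eAx_measurable_Sl {F : Euc d → ℝ≥0∞} (hF : Measurable F) : Measurable (eAx_Sl σ F) :=
  Measurable.lintegral_prod_right (hF.comp (measurable_fst.add measurable_snd))

lemma eAx_measurable_Gl {F : Euc d → ℝ≥0∞} (hF : Measurable F) : Measurable (eAx_Gl σ F) :=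
  eAx_measurable_Sl σ (eAx_measurable_Tl σ hF)

lemma eAx_Tl_mono {u v : Euc d → ℝ≥0∞} (h : ∀ z, u z ≤ v z) : ∀ x, eAx_Tl σ u x ≤ eAx_Tl σ v x :=
  fun _ => lintegral_mono fun y => h _

lemma eAx_Sl_mono {u v : Euc d → ℝ≥0∞} (h : ∀ z, u z ≤ v z) : ∀ x, eAx_Sl σ u x ≤ eAx_Sl σ v x :=
  fun _ => lintegral_mono fun y => h _

lemma eAx_Gl_mono {u v : Euc d → ℝ≥0∞} (h : ∀ z, u z ≤ v z) : ∀ x, eAx_Gl σ u x ≤ eAx_Gl σ v x :=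
  eAx_Sl_mono σ (eAx_Tl_mono σ h)

/-- a.e. property transfers to `x - y` for a.e. x, σ-a.e. y. -/
lemma eAx_ae_comp_sub {Pr : Euc d → Prop} (h : ∀ᵐ z ∂(volume : Measure (Euc d)), Pr z) :
    ∀ᵐ x ∂(volume : Measure (Euc d)), ∀ᵐ y ∂σ, Pr (x - y) := by
  set s := {z : Euc d | ¬ Pr z} with hs_def
  have hs : (volume : Measure (Euc d)) s = 0 := h
  set N := toMeasurable (volume : Measure (Euc d)) s with hN
  have hNmeas : MeasurableSet N := measurableSet_toMeasurable _ _
  have hNnull : (volume : Measure (Euc d)) N = 0 := by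
    rw [hN, measure_toMeasurable]; exact hs
  have hker : Measurable (fun z : Euc d => N.indicator (fun _ => (1:ℝ≥0∞)) z) :=
    measurable_one.indicator hNmeas
  have hvolN : ∫⁻ b, N.indicator (fun _ => (1:ℝ≥0∞)) b = 0 := by
    rw [lintegral_indicator hNmeas]
    simp [hNnull]
  have eAx_key : ∫⁻ x, (∫⁻ y, N.indicator (fun _ => (1:ℝ≥0∞)) (x - y) ∂σ) = 0 := by
    rw [lintegral_lintegral_swap (μ := (volume : Measure (Euc d))) (ν := σ)
      (f := fun x y => N.indicator (fun _ => (1:ℝ≥0∞)) (x - y))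
      ((hker.comp (measurable_fst.sub measurable_snd)).aemeasurable)]
    have inner : ∀ y : Euc d,
        ∫⁻ x, N.indicator (fun _ => (1:ℝ≥0∞)) (x - y) = 0 := by
      intro y
      have hmp := (measurePreserving_add_right (volume : Measure (Euc d)) (-y)).lintegral_comp hker
      simp only [sub_eq_add_neg]
      rw [hmp, hvolN]
    simp [inner]
  have hmeas_out : Measurable fun x => ∫⁻ y, N.indicator (fun _ => (1:ℝ≥0∞)) (x - y) ∂σ :=
    Measurable.lintegral_prod_right (hker.comp (measurable_fst.sub measurable_snd))
  have h2 : ∀ᵐ x ∂(volume : Measure (Euc d)),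
      (∫⁻ y, N.indicator (fun _ => (1:ℝ≥0∞)) (x - y) ∂σ) = 0 :=
    (lintegral_eq_zero_iff hmeas_out).mp eAx_key
  filter_upwards [h2] with x hx
  have h3 : ∀ᵐ y ∂σ, N.indicator (fun _ => (1:ℝ≥0∞)) (x - y) = 0 :=
    (lintegral_eq_zero_iff (hker.comp (measurable_const.sub measurable_id))).mp hx
  filter_upwards [h3] with y hy
  by_contra hPr
  have hmem : x - y ∈ N := subset_toMeasurable _ _ hPr
  simp [Set.indicator_of_mem hmem] at hy

lemma eAx_ae_comp_add {Pr : Euc d → Prop} (h : ∀ᵐ z ∂(volume : Measure (Euc d)), Pr z) :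
    ∀ᵐ x ∂(volume : Measure (Euc d)), ∀ᵐ y ∂σ, Pr (x + y) := by
  set s := {z : Euc d | ¬ Pr z} with hs_def
  have hs : (volume : Measure (Euc d)) s = 0 := h
  set N := toMeasurable (volume : Measure (Euc d)) s with hN
  have hNmeas : MeasurableSet N := measurableSet_toMeasurable _ _
  have hNnull : (volume : Measure (Euc d)) N = 0 := by
    rw [hN, measure_toMeasurable]; exact hs
  have hker : Measurable (fun z : Euc d => N.indicator (fun _ => (1:ℝ≥0∞)) z) :=
    measurable_one.indicator hNmeas
  have hvolN : ∫⁻ b, N.indicator (fun _ => (1:ℝ≥0∞)) b = 0 := by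
    rw [lintegral_indicator hNmeas]
    simp [hNnull]
  have eAx_key : ∫⁻ x, (∫⁻ y, N.indicator (fun _ => (1:ℝ≥0∞)) (x + y) ∂σ) = 0 := by
    rw [lintegral_lintegral_swap (μ := (volume : Measure (Euc d))) (ν := σ)
      (f := fun x y => N.indicator (fun _ => (1:ℝ≥0∞)) (x + y))
      ((hker.comp (measurable_fst.add measurable_snd)).aemeasurable)]
    have inner : ∀ y : Euc d,
        ∫⁻ x, N.indicator (fun _ => (1:ℝ≥0∞)) (x + y) = 0 := by
      intro y
      have hmp := (measurePreserving_add_right (volume : Measure (Euc d)) y).lintegral_comp hker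
      rw [hmp, hvolN]
    simp [inner]
  have hmeas_out : Measurable fun x => ∫⁻ y, N.indicator (fun _ => (1:ℝ≥0∞)) (x + y) ∂σ :=
    Measurable.lintegral_prod_right (hker.comp (measurable_fst.add measurable_snd))
  have h2 : ∀ᵐ x ∂(volume : Measure (Euc d)),
      (∫⁻ y, N.indicator (fun _ => (1:ℝ≥0∞)) (x + y) ∂σ) = 0 :=
    (lintegral_eq_zero_iff hmeas_out).mp eAx_key
  filter_upwards [h2] with x hx
  have h3 : ∀ᵐ y ∂σ, N.indicator (fun _ => (1:ℝ≥0∞)) (x + y) = 0 :=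
    (lintegral_eq_zero_iff (hker.comp (measurable_const.add measurable_id))).mp hx
  filter_upwards [h3] with y hy
  by_contra hPr
  have hmem : x + y ∈ N := subset_toMeasurable _ _ hPr
  simp [Set.indicator_of_mem hmem] at hy

lemma eAx_Tl_mono_ae {u v : Euc d → ℝ≥0∞} (h : u ≤ᵐ[(volume : Measure (Euc d))] v) :
    eAx_Tl σ u ≤ᵐ[(volume : Measure (Euc d))] eAx_Tl σ v := by
  filter_upwards [eAx_ae_comp_sub σ h] with x hx
  exact lintegral_mono_ae hx

lemma eAx_Sl_mono_ae {u v : Euc d → ℝ≥0∞} (h : u ≤ᵐ[(volume : Measure (Euc d))] v) :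
    eAx_Sl σ u ≤ᵐ[(volume : Measure (Euc d))] eAx_Sl σ v := by
  filter_upwards [eAx_ae_comp_add σ h] with x hx
  exact lintegral_mono_ae hx

lemma eAx_Gl_mono_ae {u v : Euc d → ℝ≥0∞} (h : u ≤ᵐ[(volume : Measure (Euc d))] v) :
    eAx_Gl σ u ≤ᵐ[(volume : Measure (Euc d))] eAx_Gl σ v :=
  eAx_Sl_mono_ae σ (eAx_Tl_mono_ae σ h)

/-- adjoint identity -/
lemma eAx_adj {u w : Euc d → ℝ≥0∞} (hu : Measurable u) (hw : Measurable w) :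
    ∫⁻ x, u x * eAx_Sl σ w x = ∫⁻ x, eAx_Tl σ u x * w x := by
  have step1 : ∀ x, u x * eAx_Sl σ w x = ∫⁻ y, u x * w (x + y) ∂σ := by
    intro x
    exact (lintegral_const_mul (u x) (hw.comp (measurable_const.add measurable_id))).symm
  have step2 : ∀ x, eAx_Tl σ u x * w x = ∫⁻ y, u (x - y) * w x ∂σ := by
    intro x
    exact (lintegral_mul_const (w x) (hu.comp (measurable_const.sub measurable_id))).symm
  have hL : ∫⁻ x, u x * eAx_Sl σ w x
      = ∫⁻ y, ∫⁻ x, u x * w (x + y) ∂(volume : Measure (Euc d)) ∂σ := by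
    simp only [step1]
    exact lintegral_lintegral_swap (μ := (volume : Measure (Euc d))) (ν := σ)
      (f := fun x y => u x * w (x + y))
      ((hu.comp measurable_fst).mul (hw.comp (measurable_fst.add measurable_snd))).aemeasurable
  have hR : ∫⁻ x, eAx_Tl σ u x * w x
      = ∫⁻ y, ∫⁻ x, u (x - y) * w x ∂(volume : Measure (Euc d)) ∂σ := by
    simp only [step2]
    exact lintegral_lintegral_swap (μ := (volume : Measure (Euc d))) (ν := σ)
      (f := fun x y => u (x - y) * w x)
      ((hu.comp (measurable_fst.sub measurable_snd)).mul (hw.comp measurable_fst)).aemeasurable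
  rw [hL, hR]
  refine lintegral_congr fun y => ?_
  have hg : Measurable fun z => u (z - y) * w z :=
    (hu.comp (measurable_id.sub measurable_const)).mul hw
  have hmp := (measurePreserving_add_right (volume : Measure (Euc d)) y).lintegral_comp hg
  calc ∫⁻ x, u x * w (x + y) = ∫⁻ x, u ((x + y) - y) * w (x + y) := by simp
    _ = ∫⁻ z, u (z - y) * w z := hmp


/-- Jensen for a probability measure via Hölder. -/
lemma eAx_pow_lintegral_le {α : Type*} [MeasurableSpace α] (ν : Measure α) [IsProbabilityMeasure ν]
    {u : α → ℝ≥0∞} (hu : Measurable u) {s : ℝ} (hs : 1 ≤ s) :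
    (∫⁻ y, u y ∂ν) ^ s ≤ ∫⁻ y, u y ^ s ∂ν := by
  rcases eq_or_lt_of_le hs with h1 | h1
  · simp [← h1]
  · have hconj : s.HolderConjugate (s / (s - 1)) := Real.HolderConjugate.conjExponent h1
    have hhold := ENNReal.lintegral_mul_le_Lp_mul_Lq ν hconj hu.aemeasurable
      (measurable_const (a := (1:ℝ≥0∞))).aemeasurable
    simp only [Pi.mul_apply, mul_one, ENNReal.one_rpow, lintegral_const,
      measure_univ, mul_one, one_mul] at hhold
    have hs0 : s ≠ 0 := by positivity
    calc (∫⁻ y, u y ∂ν) ^ s ≤ ((∫⁻ y, u y ^ s ∂ν) ^ (1 / s)) ^ s := by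
          exact ENNReal.rpow_le_rpow hhold (le_of_lt (lt_of_lt_of_le one_pos hs))
      _ = ∫⁻ y, u y ^ s ∂ν := by
          rw [← ENNReal.rpow_mul, one_div, inv_mul_cancel₀ hs0, ENNReal.rpow_one]

lemma eAx_Tl_jensen {u : Euc d → ℝ≥0∞} (hu : Measurable u) {s : ℝ} (hs : 1 ≤ s) :
    ∀ x, (eAx_Tl σ u x) ^ s ≤ eAx_Tl σ (fun z => u z ^ s) x := by
  intro x
  exact eAx_pow_lintegral_le σ (hu.comp (measurable_const.sub measurable_id)) hs

lemma eAx_Sl_jensen {u : Euc d → ℝ≥0∞} (hu : Measurable u) {s : ℝ} (hs : 1 ≤ s) :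
    ∀ x, (eAx_Sl σ u x) ^ s ≤ eAx_Sl σ (fun z => u z ^ s) x := by
  intro x
  exact eAx_pow_lintegral_le σ (hu.comp (measurable_const.add measurable_id)) hs

lemma eAx_Gl_jensen {u : Euc d → ℝ≥0∞} (hu : Measurable u) {s : ℝ} (hs : 1 ≤ s) :
    ∀ x, (eAx_Gl σ u x) ^ s ≤ eAx_Gl σ (fun z => u z ^ s) x := by
  intro x
  calc (eAx_Gl σ u x) ^ s ≤ eAx_Sl σ (fun z => eAx_Tl σ u z ^ s) x :=
        eAx_Sl_jensen σ (eAx_measurable_Tl σ hu) hs x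
    _ ≤ eAx_Gl σ (fun z => u z ^ s) x :=
        eAx_Sl_mono σ (fun z => eAx_Tl_jensen σ hu hs z) x

/-- truncation -/
def eAx_trunc (u : Euc d → ℝ≥0∞) (n : ℕ) : Euc d → ℝ≥0∞ :=
  fun x => if ‖x‖ ≤ (n : ℝ) then min (u x) n else 0

lemma eAx_trunc_meas {u : Euc d → ℝ≥0∞} (hu : Measurable u) (n : ℕ) :
    Measurable (eAx_trunc u n) := by
  unfold eAx_trunc
  exact Measurable.ite (measurableSet_le measurable_norm measurable_const)
    (hu.min measurable_const) measurable_const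

lemma eAx_trunc_le (u : Euc d → ℝ≥0∞) (n : ℕ) : ∀ x, eAx_trunc u n x ≤ u x := by
  intro x
  unfold eAx_trunc
  split <;> simp [min_le_left]

lemma eAx_trunc_mono (u : Euc d → ℝ≥0∞) : Monotone fun n => eAx_trunc u n := by
  intro m n hmn x
  simp only [eAx_trunc]
  split
  · rename_i hx
    have : ‖x‖ ≤ (n : ℝ) := le_trans hx (by exact_mod_cast hmn)
    simp only [this, if_true]
    exact min_le_min le_rfl (by exact_mod_cast Nat.cast_le.mpr hmn)
  · simp

lemma eAx_iSup_trunc (u : Euc d → ℝ≥0∞) (x : Euc d) : ⨆ n, eAx_trunc u n x = u x := by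
  apply le_antisymm
  · exact iSup_le fun n => eAx_trunc_le u n x
  · obtain ⟨n₀, hn₀⟩ := exists_nat_ge ‖x‖
    rcases eq_or_ne (u x) ⊤ with htop | htop
    · have hle : ∀ n : ℕ, ((n : ℝ≥0∞)) ≤ ⨆ m, eAx_trunc u m x := by
        intro n
        have hx : ‖x‖ ≤ ((n₀ + n : ℕ) : ℝ) := le_trans hn₀ (by exact_mod_cast Nat.le_add_right _ _)
        have htr : eAx_trunc u (n₀ + n) x = min (u x) (((n₀ + n : ℕ) : ℝ≥0∞)) := by
          unfold eAx_trunc; rw [if_pos hx]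
        calc ((n : ℝ≥0∞)) ≤ min (u x) ((n₀ + n : ℕ)) :=
              le_min (htop ▸ le_top) (by exact_mod_cast Nat.le_add_left _ _)
          _ = eAx_trunc u (n₀ + n) x := htr.symm
          _ ≤ ⨆ m, eAx_trunc u m x := le_iSup (fun m => eAx_trunc u m x) (n₀ + n)
      have : (⊤ : ℝ≥0∞) ≤ ⨆ m, eAx_trunc u m x := by
        rw [← ENNReal.iSup_natCast]
        exact iSup_le hle
      rw [htop]; exact this
    · obtain ⟨m, hm⟩ := ENNReal.exists_nat_gt htop
      set n := max m n₀ with hn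
      have hx : ‖x‖ ≤ (n : ℝ) := le_trans hn₀ (by exact_mod_cast le_max_right _ _)
      have hun : u x ≤ (n : ℝ≥0∞) := le_trans hm.le (by exact_mod_cast le_max_left _ _)
      have htr : eAx_trunc u n x = u x := by
        unfold eAx_trunc; rw [if_pos hx, min_eq_left hun]
      rw [← htr]
      exact le_iSup (fun m => eAx_trunc u m x) n

lemma eAx_trunc_lt_top (u : Euc d → ℝ≥0∞) (n : ℕ) (x : Euc d) : eAx_trunc u n x < ⊤ := by
  unfold eAx_trunc
  split
  · exact lt_of_le_of_lt (min_le_right _ _) (ENNReal.natCast_lt_top n)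
  · simp

lemma eAx_trunc_le_nat (u : Euc d → ℝ≥0∞) (n : ℕ) (x : Euc d) : eAx_trunc u n x ≤ (n : ℝ≥0∞) := by
  unfold eAx_trunc
  split
  · exact min_le_right _ _
  · simp

/-- integral of a power of a truncation is finite -/
lemma eAx_lintegral_trunc_rpow_lt_top (u : Euc d → ℝ≥0∞) (n : ℕ) {t : ℝ} (ht : 0 < t) :
    ∫⁻ x, eAx_trunc u n x ^ t ∂(volume : Measure (Euc d)) < ⊤ := by
  have hb : ∀ x, eAx_trunc u n x ^ t ≤
      (Metric.closedBall (0 : Euc d) n).indicator (fun _ => (n : ℝ≥0∞) ^ t) x := by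
    intro x
    unfold eAx_trunc
    split
    · rename_i hx
      have hmem : x ∈ Metric.closedBall (0 : Euc d) n := by
        simpa [Metric.mem_closedBall, dist_zero_right] using hx
      rw [Set.indicator_of_mem hmem]
      exact ENNReal.rpow_le_rpow (min_le_right _ _) ht.le
    · simp [ENNReal.zero_rpow_of_pos ht]
  calc ∫⁻ x, eAx_trunc u n x ^ t ∂(volume : Measure (Euc d))
      ≤ ∫⁻ x, (Metric.closedBall (0 : Euc d) n).indicator (fun _ => (n : ℝ≥0∞) ^ t) x := lintegral_mono hb
    _ = (n : ℝ≥0∞) ^ t * volume (Metric.closedBall (0 : Euc d) n) := by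
        rw [lintegral_indicator measurableSet_closedBall]
        simp [Measure.restrict_apply]
    _ < ⊤ := by
        apply ENNReal.mul_lt_top
        · exact ENNReal.rpow_lt_top_of_nonneg ht.le (ENNReal.natCast_ne_top n)
        · exact (isCompact_closedBall _ _).measure_lt_top


lemma eAx_rpow_rpow_inv {x : ℝ≥0∞} {t : ℝ} (ht : t ≠ 0) : (x ^ t) ^ (1/t) = x := by
  rw [← ENNReal.rpow_mul, mul_one_div, div_self ht, ENNReal.rpow_one]

lemma eAx_rpow_inv_rpow {x : ℝ≥0∞} {t : ℝ} (ht : t ≠ 0) : (x ^ (1/t)) ^ t = x := by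
  rw [← ENNReal.rpow_mul, one_div, inv_mul_cancel₀ ht, ENNReal.rpow_one]

lemma eAx_iSup_rpow {g : ℕ → ℝ≥0∞} {t : ℝ} (ht : 0 < t) : (⨆ n, g n) ^ t = ⨆ n, g n ^ t := by
  refine le_antisymm ?_ (iSup_le fun n => ENNReal.rpow_le_rpow (le_iSup g n) ht.le)
  have h1 : ∀ n, g n ≤ (⨆ m, g m ^ t) ^ (1/t) := by
    intro n
    have h := ENNReal.rpow_le_rpow (le_iSup (fun m => g m ^ t) n)
      (by positivity : (0:ℝ) ≤ 1/t)
    rwa [eAx_rpow_rpow_inv ht.ne'] at h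
  have h3 := ENNReal.rpow_le_rpow (iSup_le h1) ht.le
  rwa [eAx_rpow_inv_rpow ht.ne'] at h3

lemma eAx_nnnorm_complex_ofReal (r : ℝ) : ‖(r : ℂ)‖₊ = ‖r‖₊ :=
  NNReal.coe_inj.mp (by rw [coe_nnnorm, coe_nnnorm, Complex.norm_real])

lemma eAx_eLpNorm_ofReal {E : Type*} [NormedAddCommGroup E] (g : Euc d → E) {t : ℝ} (ht : 0 < t) :
    eLpNorm g (ENNReal.ofReal t) volume
      = (∫⁻ x, (‖g x‖₊ : ℝ≥0∞) ^ t ∂(volume : Measure (Euc d))) ^ (1/t) := by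
  rw [eLpNorm_eq_lintegral_rpow_enorm_toReal (by simp [ENNReal.ofReal_eq_zero, not_le, ht])
    ENNReal.ofReal_ne_top, ENNReal.toReal_ofReal ht.le]
  rfl

lemma eAx_le_opNorm {g : Euc d → ℂ} (hg : MemLp g (ENNReal.ofReal p') volume)
    (hg0 : eLpNorm g (ENNReal.ofReal p') volume ≠ 0) (q' : ℝ) :
    eLpNorm (convOp σ g) (ENNReal.ofReal q') volume
      ≤ opNorm (convOp (F := ℂ) σ) (ENNReal.ofReal p') (ENNReal.ofReal q')
        * eLpNorm g (ENNReal.ofReal p') volume := by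
  have h1 : eLpNorm (convOp σ g) (ENNReal.ofReal q') volume
      / eLpNorm g (ENNReal.ofReal p') volume
      ≤ opNorm (convOp (F := ℂ) σ) (ENNReal.ofReal p') (ENNReal.ofReal q') :=
    le_iSup_of_le g (le_iSup_of_le hg (le_iSup_of_le hg0 le_rfl))
  exact (ENNReal.div_le_iff hg0 hg.2.ne).mp h1

/-- main operator bound in the lintegral world -/
lemma eAx_OB {p q : ℝ} (hp : 0 < p) (hq : 0 < q)
    {φ : Euc d → ℝ≥0∞} (hφ : Measurable φ) :
    (∫⁻ x, eAx_Tl σ φ x ^ q ∂(volume : Measure (Euc d))) ^ (1/q)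
      ≤ opNorm (convOp (F := ℂ) σ) (ENNReal.ofReal p) (ENNReal.ofReal q)
        * (∫⁻ x, φ x ^ p ∂(volume : Measure (Euc d))) ^ (1/p) := by
  set A := opNorm (convOp (F := ℂ) σ) (ENNReal.ofReal p) (ENNReal.ofReal q) with hA
  set B := A * (∫⁻ x, φ x ^ p ∂(volume : Measure (Euc d))) ^ (1/p) with hB
  have pern : ∀ n : ℕ,
      ∫⁻ x, eAx_Tl σ (eAx_trunc φ n) x ^ q ∂(volume : Measure (Euc d)) ≤ B ^ q := by
    intro n
    set ψ := eAx_trunc φ n with hψ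
    have hψm : Measurable ψ := eAx_trunc_meas hφ n
    set v : Euc d → ℝ := fun x => (ψ x).toReal with hv
    have hvm : Measurable v := hψm.ennreal_toReal
    set vc : Euc d → ℂ := fun x => (v x : ℂ) with hvc
    have hvcm : Measurable vc := Complex.measurable_ofReal.comp hvm
    have henorm : ∀ z, (‖vc z‖₊ : ℝ≥0∞) = ψ z := by
      intro z
      rw [show ‖vc z‖₊ = ‖v z‖₊ from eAx_nnnorm_complex_ofReal (v z), ← enorm_eq_nnnorm,
        Real.enorm_eq_ofReal ENNReal.toReal_nonneg,
        ENNReal.ofReal_toReal (eAx_trunc_lt_top φ n z).ne]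
    have hvle : ∀ z, v z ≤ (n : ℝ) := by
      intro z
      calc v z ≤ ((n : ℝ≥0∞)).toReal :=
            ENNReal.toReal_mono (ENNReal.natCast_ne_top n) (eAx_trunc_le_nat φ n z)
        _ = (n : ℝ) := by simp
    have hkey : ∀ x, (‖convOp σ vc x‖₊ : ℝ≥0∞) = eAx_Tl σ ψ x := by
      intro x
      have hint : Integrable (fun y => v (x - y)) σ := by
        refine Integrable.mono' (integrable_const (n : ℝ)) ?_ ?_
        · exact (hvm.comp (measurable_const.sub measurable_id)).aestronglyMeasurable
        · refine Filter.Eventually.of_forall fun y => ?_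
          rw [Real.norm_of_nonneg ENNReal.toReal_nonneg]; exact hvle _
      have h1 : convOp σ vc x = ((∫ y, v (x - y) ∂σ : ℝ) : ℂ) := integral_ofReal
      have h2 : (0:ℝ) ≤ ∫ y, v (x - y) ∂σ :=
        integral_nonneg fun y => ENNReal.toReal_nonneg
      rw [h1, show (‖((∫ y, v (x - y) ∂σ : ℝ) : ℂ)‖₊ : ℝ≥0∞) = (‖(∫ y, v (x - y) ∂σ : ℝ)‖₊ : ℝ≥0∞)
        from congrArg _ (eAx_nnnorm_complex_ofReal _), ← enorm_eq_nnnorm, Real.enorm_eq_ofReal h2,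
        ofReal_integral_eq_lintegral_ofReal hint
          (Filter.Eventually.of_forall fun y => ENNReal.toReal_nonneg)]
      refine lintegral_congr fun y => ?_
      exact ENNReal.ofReal_toReal (eAx_trunc_lt_top φ n (x - y)).ne
    have hsnorm : eLpNorm vc (ENNReal.ofReal p) volume
        = (∫⁻ x, ψ x ^ p ∂(volume : Measure (Euc d))) ^ (1/p) := by
      rw [eAx_eLpNorm_ofReal vc hp]
      congr 1
      refine lintegral_congr fun z => ?_
      rw [henorm z]
    have hsle : eLpNorm vc (ENNReal.ofReal p) volume
        ≤ (∫⁻ x, φ x ^ p ∂(volume : Measure (Euc d))) ^ (1/p) := by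
      rw [hsnorm]
      exact ENNReal.rpow_le_rpow
        (lintegral_mono fun z => ENNReal.rpow_le_rpow (eAx_trunc_le φ n z) hp.le)
        (by positivity)
    have hmem : MemLp vc (ENNReal.ofReal p) volume := by
      refine ⟨hvcm.aestronglyMeasurable, ?_⟩
      rw [hsnorm]
      exact ENNReal.rpow_lt_top_of_nonneg (by positivity)
        (eAx_lintegral_trunc_rpow_lt_top φ n hp).ne
    by_cases h0 : eLpNorm vc (ENNReal.ofReal p) volume = 0
    · have hψ0 : ψ ≤ᵐ[(volume : Measure (Euc d))] (fun _ => 0) := by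
        rw [hsnorm] at h0
        have h0' : ∫⁻ x, ψ x ^ p ∂(volume : Measure (Euc d)) = 0 := by
          rcases (ENNReal.rpow_eq_zero_iff).mp h0 with ⟨h, _⟩ | ⟨_, h⟩
          · exact h
          · exact absurd h (by positivity : (0:ℝ) < 1/p).not_gt
        have := (lintegral_eq_zero_iff (hψm.pow_const p)).mp h0'
        filter_upwards [this] with z hz
        simp only [Pi.zero_apply] at hz
        rcases (ENNReal.rpow_eq_zero_iff).mp hz with ⟨h, _⟩ | ⟨_, h⟩
        · exact h.le
        · exact absurd h hp.not_gt
      have hT0 : eAx_Tl σ ψ ≤ᵐ[(volume : Measure (Euc d))] (fun _ => 0) := by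
        have := eAx_Tl_mono_ae σ hψ0
        have hTz : eAx_Tl σ (fun _ => (0:ℝ≥0∞)) = fun _ => 0 := by
          funext x; simp [eAx_Tl]
        rwa [hTz] at this
      have : ∫⁻ x, eAx_Tl σ ψ x ^ q ∂(volume : Measure (Euc d)) = 0 := by
        rw [← lintegral_zero]
        refine lintegral_congr_ae ?_
        filter_upwards [hT0] with x hx
        have : eAx_Tl σ ψ x = 0 := le_antisymm hx zero_le
        simp [this, ENNReal.zero_rpow_of_pos hq]
      simp [this]
    · have hob := eAx_le_opNorm σ hmem h0 q
      have hcv : eLpNorm (convOp σ vc) (ENNReal.ofReal q) volume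
          = (∫⁻ x, eAx_Tl σ ψ x ^ q ∂(volume : Measure (Euc d))) ^ (1/q) := by
        rw [eAx_eLpNorm_ofReal _ hq]
        congr 1
        refine lintegral_congr fun x => ?_
        rw [hkey x]
      have hBB : (∫⁻ x, eAx_Tl σ ψ x ^ q ∂(volume : Measure (Euc d))) ^ (1/q) ≤ B := by
        rw [← hcv]
        calc eLpNorm (convOp σ vc) (ENNReal.ofReal q) volume
            ≤ A * eLpNorm vc (ENNReal.ofReal p) volume := hob
          _ ≤ B := by rw [hB]; exact mul_le_mul_right hsle A
      calc ∫⁻ x, eAx_Tl σ ψ x ^ q ∂(volume : Measure (Euc d))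
          = ((∫⁻ x, eAx_Tl σ ψ x ^ q ∂(volume : Measure (Euc d))) ^ (1/q)) ^ q :=
            (eAx_rpow_inv_rpow hq.ne').symm
        _ ≤ B ^ q := ENNReal.rpow_le_rpow hBB hq.le
  -- pass to the limit
  have hmeasT : ∀ n : ℕ, Measurable fun x => eAx_Tl σ (eAx_trunc φ n) x ^ q :=
    fun n => (eAx_measurable_Tl σ (eAx_trunc_meas hφ n)).pow_const q
  have hmonoT : Monotone fun n : ℕ => fun x => eAx_Tl σ (eAx_trunc φ n) x ^ q := by
    intro m n hmn
    intro x
    exact ENNReal.rpow_le_rpow (lintegral_mono fun y => eAx_trunc_mono φ hmn _) hq.le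
  have hsupT : ∀ x, (⨆ n, eAx_Tl σ (eAx_trunc φ n) x ^ q) = eAx_Tl σ φ x ^ q := by
    intro x
    rw [← eAx_iSup_rpow hq]
    congr 1
    calc ⨆ n, eAx_Tl σ (eAx_trunc φ n) x
        = ∫⁻ y, ⨆ n, eAx_trunc φ n (x - y) ∂σ :=
          (lintegral_iSup (μ := σ) (f := fun n y => eAx_trunc φ n (x - y))
            (fun n => (eAx_trunc_meas hφ n).comp (measurable_const.sub measurable_id))
            (fun m n hmn y => eAx_trunc_mono φ hmn _)).symm
      _ = eAx_Tl σ φ x := lintegral_congr fun y => eAx_iSup_trunc φ (x - y)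
  have hlim : ∫⁻ x, eAx_Tl σ φ x ^ q ∂(volume : Measure (Euc d))
      = ⨆ n, ∫⁻ x, eAx_Tl σ (eAx_trunc φ n) x ^ q ∂(volume : Measure (Euc d)) := by
    rw [← lintegral_iSup hmeasT hmonoT]
    exact lintegral_congr fun x => (hsupT x).symm
  have hle : ∫⁻ x, eAx_Tl σ φ x ^ q ∂(volume : Measure (Euc d)) ≤ B ^ q := by
    rw [hlim]; exact iSup_le pern
  calc (∫⁻ x, eAx_Tl σ φ x ^ q ∂(volume : Measure (Euc d))) ^ (1/q)
      ≤ (B ^ q) ^ (1/q) := ENNReal.rpow_le_rpow hle (by positivity)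
    _ = B := eAx_rpow_rpow_inv hq.ne'


lemma eAx_conj_sub_one_mul {p p' : ℝ} (hpc : p.HolderConjugate p') : (p' - 1) * p = p' := by
  have h := hpc.inv_add_inv_eq_one
  have hp0 : p ≠ 0 := hpc.pos.ne'
  have hp'0 : p' ≠ 0 := hpc.symm.pos.ne'
  field_simp at h
  nlinarith [h]

/-- adjoint operator bound -/
lemma eAx_AB {p q p' q' : ℝ} (hpc : p.HolderConjugate p') (hqc : q.HolderConjugate q')
    {w : Euc d → ℝ≥0∞} (hw : Measurable w) :
    (∫⁻ x, eAx_Sl σ w x ^ p' ∂(volume : Measure (Euc d))) ^ (1/p')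
      ≤ opNorm (convOp (F := ℂ) σ) (ENNReal.ofReal p) (ENNReal.ofReal q)
        * (∫⁻ x, w x ^ q' ∂(volume : Measure (Euc d))) ^ (1/q') := by
  set A := opNorm (convOp (F := ℂ) σ) (ENNReal.ofReal p) (ENNReal.ofReal q) with hA
  set K := (∫⁻ x, w x ^ q' ∂(volume : Measure (Euc d))) ^ (1/q') with hK
  set S := eAx_Sl σ w with hS
  have hSm : Measurable S := eAx_measurable_Sl σ hw
  have hp'1 : 1 < p' := hpc.symm.lt
  have hp'0 : 0 < p' := hpc.symm.pos
  have hp0 : 0 < p := hpc.pos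
  have hpp' : (p' - 1) * p = p' := eAx_conj_sub_one_mul hpc
  have pern : ∀ n : ℕ,
      (∫⁻ x, eAx_trunc S n x ^ p' ∂(volume : Measure (Euc d))) ^ (1/p') ≤ A * K := by
    intro n
    set J := ∫⁻ x, eAx_trunc S n x ^ p' ∂(volume : Measure (Euc d)) with hJ
    have hJfin : J < ⊤ := eAx_lintegral_trunc_rpow_lt_top S n hp'0
    set ψ : Euc d → ℝ≥0∞ := fun x => eAx_trunc S n x ^ (p' - 1) with hψ
    have hψm : Measurable ψ := (eAx_trunc_meas hSm n).pow_const _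
    have hJ1 : J ≤ ∫⁻ x, ψ x * S x ∂(volume : Measure (Euc d)) := by
      refine lintegral_mono fun x => ?_
      have h1 : eAx_trunc S n x ^ p' = ψ x * eAx_trunc S n x := by
        rw [hψ]
        have := ENNReal.rpow_add_of_nonneg (x := eAx_trunc S n x) (p' - 1) 1
          (by linarith) zero_le_one
        rw [show p' - 1 + 1 = p' by ring] at this
        rw [this, ENNReal.rpow_one]
      rw [h1]
      exact mul_le_mul_right (eAx_trunc_le S n x) _
    have hadj : ∫⁻ x, ψ x * S x ∂(volume : Measure (Euc d))
        = ∫⁻ x, eAx_Tl σ ψ x * w x ∂(volume : Measure (Euc d)) := eAx_adj σ hψm hw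
    have hhold : ∫⁻ x, eAx_Tl σ ψ x * w x ∂(volume : Measure (Euc d))
        ≤ (∫⁻ x, eAx_Tl σ ψ x ^ q ∂(volume : Measure (Euc d))) ^ (1/q) * K := by
      rw [hK]
      exact ENNReal.lintegral_mul_le_Lp_mul_Lq _ hqc
        (eAx_measurable_Tl σ hψm).aemeasurable hw.aemeasurable
    have hOB : (∫⁻ x, eAx_Tl σ ψ x ^ q ∂(volume : Measure (Euc d))) ^ (1/q)
        ≤ A * J ^ (1/p) := by
      have h := eAx_OB σ hp0 hqc.pos hψm
      have hψp : ∫⁻ x, ψ x ^ p ∂(volume : Measure (Euc d)) = J := by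
        rw [hJ]
        refine lintegral_congr fun x => ?_
        rw [hψ, ← ENNReal.rpow_mul, hpp']
      rwa [hψp] at h
    have hchain : J ≤ J ^ (1/p) * (A * K) := by
      calc J ≤ ∫⁻ x, ψ x * S x ∂(volume : Measure (Euc d)) := hJ1
        _ = ∫⁻ x, eAx_Tl σ ψ x * w x ∂(volume : Measure (Euc d)) := hadj
        _ ≤ (∫⁻ x, eAx_Tl σ ψ x ^ q ∂(volume : Measure (Euc d))) ^ (1/q) * K := hhold
        _ ≤ A * J ^ (1/p) * K := mul_le_mul_left hOB K
        _ = J ^ (1/p) * (A * K) := by rw [mul_comm A, mul_assoc]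
    by_cases hJ0 : J = 0
    · rw [hJ0, ENNReal.zero_rpow_of_pos (by positivity)]
      exact zero_le
    · have hsplit : J = J ^ (1/p) * J ^ (1/p') := by
        rw [← ENNReal.rpow_add_of_nonneg _ _ (by positivity) (by positivity)]
        rw [show 1/p + 1/p' = 1 by
          have := hpc.inv_add_inv_eq_one
          rw [one_div, one_div]; exact this]
        exact (ENNReal.rpow_one J).symm
      have hcl : J ^ (1/p) * J ^ (1/p') ≤ J ^ (1/p) * (A * K) := by
        rw [← hsplit]; exact hchain
      have h0 : J ^ (1/p) ≠ 0 := by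
        simp only [ne_eq, ENNReal.rpow_eq_zero_iff, not_or]
        constructor
        · rintro ⟨h, _⟩; exact hJ0 h
        · rintro ⟨h, _⟩; exact hJfin.ne h
      have ht : J ^ (1/p) ≠ ⊤ := by
        exact (ENNReal.rpow_lt_top_of_nonneg (by positivity) hJfin.ne).ne
      exact (ENNReal.mul_le_mul_iff_right h0 ht).mp hcl
  -- limit
  have hmeasJ : ∀ n : ℕ, Measurable fun x => eAx_trunc S n x ^ p' :=
    fun n => (eAx_trunc_meas hSm n).pow_const _
  have hmonoJ : Monotone fun n : ℕ => fun x => eAx_trunc S n x ^ p' :=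
    fun m n hmn x => ENNReal.rpow_le_rpow (eAx_trunc_mono S hmn x) hp'0.le
  have hlim : ∫⁻ x, S x ^ p' ∂(volume : Measure (Euc d))
      = ⨆ n, ∫⁻ x, eAx_trunc S n x ^ p' ∂(volume : Measure (Euc d)) := by
    rw [← lintegral_iSup hmeasJ hmonoJ]
    refine lintegral_congr fun x => ?_
    rw [← eAx_iSup_rpow hp'0]
    rw [eAx_iSup_trunc S x]
  have hfin : ∫⁻ x, S x ^ p' ∂(volume : Measure (Euc d)) ≤ (A * K) ^ p' := by
    rw [hlim]
    refine iSup_le fun n => ?_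
    have h := ENNReal.rpow_le_rpow (pern n) hp'0.le
    rwa [eAx_rpow_inv_rpow hp'0.ne'] at h
  calc (∫⁻ x, S x ^ p' ∂(volume : Measure (Euc d))) ^ (1/p')
      ≤ ((A * K) ^ p') ^ (1/p') := ENNReal.rpow_le_rpow hfin (by positivity)
    _ = A * K := eAx_rpow_rpow_inv hp'0.ne'


lemma eAx_real_young_eq {p p' : ℝ} (hpc : p.HolderConjugate p') {x y : ℝ} (hx : 0 ≤ x) (hy : 0 ≤ y)
    (h : x * y = x ^ p / p + y ^ p' / p') : x ^ p = y ^ p' := by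
  have hp : 0 < p := hpc.pos
  have hp' : 0 < p' := hpc.symm.pos
  rcases hx.eq_or_lt with hx0 | hx0
  · rw [← hx0] at h ⊢
    rw [Real.zero_rpow hp.ne'] at h ⊢
    rw [zero_mul, zero_div, zero_add] at h
    have : y ^ p' = 0 := by
      have := h.symm
      rwa [div_eq_zero_iff, or_iff_left hp'.ne'] at this
    rw [this]
  rcases hy.eq_or_lt with hy0 | hy0
  · rw [← hy0] at h ⊢
    rw [Real.zero_rpow hp'.ne'] at h ⊢
    rw [mul_zero, zero_div, add_zero] at h
    have : x ^ p = 0 := by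
      have := h.symm
      rwa [div_eq_zero_iff, or_iff_left hp.ne'] at this
    rw [this]
  set t := x ^ p with ht_def
  set s := y ^ p' with hs_def
  have ht : 0 < t := Real.rpow_pos_of_pos hx0 p
  have hs : 0 < s := Real.rpow_pos_of_pos hy0 p'
  by_contra hne
  have hconc := strictConcaveOn_log_Ioi.2 (Set.mem_Ioi.mpr ht) (Set.mem_Ioi.mpr hs)
    hne (by positivity : (0:ℝ) < 1/p) (by positivity : (0:ℝ) < 1/p')
    (by rw [one_div, one_div]; exact hpc.inv_add_inv_eq_one)
  simp only [smul_eq_mul] at hconc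
  have harg : 1/p * t + 1/p' * s = x * y := by
    rw [h]; ring
  have hlt : Real.log t / p + Real.log s / p' < Real.log (x * y) := by
    rw [← harg]
    calc Real.log t / p + Real.log s / p'
        = 1/p * Real.log t + 1/p' * Real.log s := by ring
      _ < Real.log (1/p * t + 1/p' * s) := hconc
  have hlogt : Real.log t = p * Real.log x := Real.log_rpow hx0 p
  have hlogs : Real.log s = p' * Real.log y := Real.log_rpow hy0 p'
  rw [Real.log_mul hx0.ne' hy0.ne', hlogt, hlogs] at hlt
  rw [mul_div_cancel_left₀ _ hp.ne', mul_div_cancel_left₀ _ hp'.ne'] at hlt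
  exact lt_irrefl _ hlt

lemma eAx_young_eq {p p' : ℝ} (hpc : p.HolderConjugate p') {u v : ℝ≥0∞} (hu : u ≠ ⊤) (hv : v ≠ ⊤)
    (h : u * v = u ^ p / ENNReal.ofReal p + v ^ p' / ENNReal.ofReal p') : u ^ p = v ^ p' := by
  have hp : 0 < p := hpc.pos
  have hp' : 0 < p' := hpc.symm.pos
  have hupfin : u ^ p ≠ ⊤ := (ENNReal.rpow_lt_top_of_nonneg hp.le hu).ne
  have hvpfin : v ^ p' ≠ ⊤ := (ENNReal.rpow_lt_top_of_nonneg hp'.le hv).ne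
  have h1fin : u ^ p / ENNReal.ofReal p ≠ ⊤ :=
    (ENNReal.div_lt_top hupfin (by simp [ENNReal.ofReal_eq_zero, not_le, hp])).ne
  have h2fin : v ^ p' / ENNReal.ofReal p' ≠ ⊤ :=
    (ENNReal.div_lt_top hvpfin (by simp [ENNReal.ofReal_eq_zero, not_le, hp'])).ne
  have hreal : u.toReal * v.toReal = u.toReal ^ p / p + v.toReal ^ p' / p' := by
    have := congrArg ENNReal.toReal h
    rw [ENNReal.toReal_mul, ENNReal.toReal_add h1fin h2fin,
      ENNReal.toReal_div, ENNReal.toReal_div,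
      ← ENNReal.toReal_rpow, ← ENNReal.toReal_rpow,
      ENNReal.toReal_ofReal hp.le, ENNReal.toReal_ofReal hp'.le] at this
    exact this
  have hres := eAx_real_young_eq hpc ENNReal.toReal_nonneg ENNReal.toReal_nonneg hreal
  have : (u ^ p).toReal = (v ^ p').toReal := by
    rw [← ENNReal.toReal_rpow, ← ENNReal.toReal_rpow]
    exact hres
  exact (ENNReal.toReal_eq_toReal_iff' hupfin hvpfin).mp this

/-- equality in Hölder forces proportionality -/
lemma eAx_hoelder_eq {p p' : ℝ} (hpc : p.HolderConjugate p') {F H : Euc d → ℝ≥0∞}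
    (hFm : Measurable F) (hHm : Measurable H)
    (hF1 : ∫⁻ x, F x ^ p ∂(volume : Measure (Euc d)) = 1)
    (hD0 : ∫⁻ x, H x ^ p' ∂(volume : Measure (Euc d)) ≠ 0)
    (hDt : ∫⁻ x, H x ^ p' ∂(volume : Measure (Euc d)) ≠ ⊤)
    (heq : ∫⁻ x, F x * H x ∂(volume : Measure (Euc d))
      = (∫⁻ x, H x ^ p' ∂(volume : Measure (Euc d))) ^ (1/p')) :
    ∀ᵐ x ∂(volume : Measure (Euc d)),
      H x ^ p' = (∫⁻ z, H z ^ p' ∂(volume : Measure (Euc d))) * F x ^ p := by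
  have hp : 0 < p := hpc.pos
  have hp' : 0 < p' := hpc.symm.pos
  set D := ∫⁻ x, H x ^ p' ∂(volume : Measure (Euc d)) with hD
  have hDr0 : D ^ (1/p') ≠ 0 := by
    intro hcon
    rcases ENNReal.rpow_eq_zero_iff.mp hcon with ⟨h1, _⟩ | ⟨_, hneg⟩
    · exact hD0 h1
    · exact absurd hneg (by positivity : (0:ℝ) < 1/p').not_gt
  have hDrt : D ^ (1/p') ≠ ⊤ := (ENNReal.rpow_lt_top_of_nonneg (by positivity) hDt).ne
  set c := (D ^ (1/p'))⁻¹ with hc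
  have hc0 : c ≠ 0 := ENNReal.inv_ne_zero.mpr hDrt
  have hct : c ≠ ⊤ := ENNReal.inv_ne_top.mpr hDr0
  set b : Euc d → ℝ≥0∞ := fun x => c * H x with hb
  have hbm : Measurable b := measurable_const.mul hHm
  have hcp' : c ^ p' = D⁻¹ := by
    rw [hc, ← ENNReal.inv_rpow, ← ENNReal.rpow_mul]
    rw [one_div, inv_mul_cancel₀ hp'.ne', ENNReal.rpow_one]
  have hb1 : ∫⁻ x, b x ^ p' ∂(volume : Measure (Euc d)) = 1 := by
    have : ∀ x, b x ^ p' = c ^ p' * H x ^ p' := by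
      intro x
      rw [hb, ENNReal.mul_rpow_of_nonneg _ _ hp'.le]
    simp only [this]
    rw [lintegral_const_mul _ (hHm.pow_const p'), hcp', ← hD]
    exact ENNReal.inv_mul_cancel hD0 hDt
  have hab : ∫⁻ x, F x * b x ∂(volume : Measure (Euc d)) = 1 := by
    have : ∀ x, F x * b x = c * (F x * H x) := by
      intro x; rw [hb]; ring
    simp only [this]
    rw [lintegral_const_mul (f := fun x => F x * H x) _ (hFm.mul hHm), heq]
    exact ENNReal.inv_mul_cancel hDr0 hDrt
  set h : Euc d → ℝ≥0∞ :=
    fun x => F x ^ p / ENNReal.ofReal p + b x ^ p' / ENNReal.ofReal p' with hh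
  have hhm : Measurable h :=
    ((hFm.pow_const p).div_const _).add ((hbm.pow_const p').div_const _)
  have hint : ∫⁻ x, h x ∂(volume : Measure (Euc d)) = 1 := by
    rw [hh]
    simp only []
    rw [lintegral_add_left ((hFm.pow_const p).div_const _)]
    simp only [div_eq_mul_inv]
    rw [lintegral_mul_const _ (hFm.pow_const p), lintegral_mul_const _ (hbm.pow_const p'),
      hF1, hb1, one_mul, one_mul,
      ← ENNReal.ofReal_inv_of_pos hp, ← ENNReal.ofReal_inv_of_pos hp',
      ← ENNReal.ofReal_add (by positivity) (by positivity)]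
    rw [show p⁻¹ + p'⁻¹ = 1 from hpc.inv_add_inv_eq_one]
    exact ENNReal.ofReal_one
  have hy : ∀ x, F x * b x ≤ h x := fun x => ENNReal.young_inequality (F x) (b x) hpc
  have hsub : ∫⁻ x, (h x - F x * b x) ∂(volume : Measure (Euc d)) = 0 := by
    rw [lintegral_sub (g := fun x => F x * b x) (hFm.mul hbm) (by rw [hab]; exact ENNReal.one_ne_top)
      (Filter.Eventually.of_forall hy), hint, hab, tsub_self]
  have hae := (lintegral_eq_zero_iff (hhm.sub (hFm.mul hbm))).mp hsub
  have hFfin : ∀ᵐ x ∂(volume : Measure (Euc d)), F x < ⊤ := by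
    have h1 : ∀ᵐ x ∂(volume : Measure (Euc d)), F x ^ p < ⊤ :=
      ae_lt_top (hFm.pow_const p) (by rw [hF1]; exact ENNReal.one_ne_top)
    filter_upwards [h1] with x hx
    by_contra hcon
    push_neg at hcon
    have : F x = ⊤ := top_le_iff.mp hcon
    rw [this, ENNReal.top_rpow_of_pos hp] at hx
    exact absurd hx (lt_irrefl _)
  have hbfin : ∀ᵐ x ∂(volume : Measure (Euc d)), b x < ⊤ := by
    have h1 : ∀ᵐ x ∂(volume : Measure (Euc d)), b x ^ p' < ⊤ :=
      ae_lt_top (hbm.pow_const p') (by rw [hb1]; exact ENNReal.one_ne_top)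
    filter_upwards [h1] with x hx
    by_contra hcon
    push_neg at hcon
    have : b x = ⊤ := top_le_iff.mp hcon
    rw [this, ENNReal.top_rpow_of_pos hp'] at hx
    exact absurd hx (lt_irrefl _)
  filter_upwards [hae, hFfin, hbfin] with x hx hF hb'
  have heqx : F x * b x = h x := by
    simp only [Pi.zero_apply] at hx
    have hle : h x ≤ F x * b x := tsub_eq_zero_iff_le.mp hx
    exact le_antisymm (hy x) hle
  have hkey := eAx_young_eq hpc hF.ne hb'.ne heqx
  have hbp : b x ^ p' = D⁻¹ * H x ^ p' := by
    rw [hb, ENNReal.mul_rpow_of_nonneg _ _ hp'.le, hcp']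
  rw [hbp] at hkey
  calc H x ^ p' = (D * D⁻¹) * H x ^ p' := by
        rw [ENNReal.mul_inv_cancel hD0 hDt, one_mul]
    _ = D * (D⁻¹ * H x ^ p') := by rw [mul_assoc]
    _ = D * F x ^ p := by rw [← hkey]


lemma eAx_Gl_zero : eAx_Gl σ (fun _ => (0:ℝ≥0∞)) = fun _ => (0:ℝ≥0∞) := by
  funext x
  have h1 : eAx_Tl σ (fun _ => (0:ℝ≥0∞)) = fun _ => (0:ℝ≥0∞) := by
    funext z; simp [eAx_Tl]
  simp [eAx_Gl, h1, eAx_Sl]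

lemma eAx_measurable_Gl_iter {F : Euc d → ℝ≥0∞} (hF : Measurable F) :
    ∀ n, Measurable ((eAx_Gl σ)^[n] F) := by
  intro n
  induction n with
  | zero => exact hF
  | succ n ih => rw [Function.iterate_succ_apply']; exact eAx_measurable_Gl σ ih

lemma eAx_Gl_const_mul {c : ℝ≥0∞} {u : Euc d → ℝ≥0∞} (hu : Measurable u) :
    eAx_Gl σ (fun x => c * u x) = fun x => c * eAx_Gl σ u x := by
  have h1 : ∀ z, eAx_Tl σ (fun w => c * u w) z = c * eAx_Tl σ u z := fun z =>
    lintegral_const_mul c (hu.comp (measurable_const.sub measurable_id))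
  funext x
  show eAx_Sl σ (eAx_Tl σ fun w => c * u w) x = c * eAx_Sl σ (eAx_Tl σ u) x
  unfold eAx_Sl
  simp only [h1]
  exact lintegral_const_mul c ((eAx_measurable_Tl σ hu).comp (measurable_const.add measurable_id))

lemma eAx_Gl_iter_const_mul (n : ℕ) {u : Euc d → ℝ≥0∞} (hu : Measurable u) (c : ℝ≥0∞) :
    (eAx_Gl σ)^[n] (fun x => c * u x) = fun x => c * (eAx_Gl σ)^[n] u x := by
  induction n generalizing u with
  | zero => rfl
  | succ n ih =>
    rw [Function.iterate_succ_apply, Function.iterate_succ_apply, eAx_Gl_const_mul σ hu,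
      ih (eAx_measurable_Gl σ hu)]

lemma eAx_Gl_iter_mono_pt (n : ℕ) {u v : Euc d → ℝ≥0∞} (h : ∀ z, u z ≤ v z) :
    ∀ x, (eAx_Gl σ)^[n] u x ≤ (eAx_Gl σ)^[n] v x := by
  induction n generalizing u v with
  | zero => exact h
  | succ n ih =>
    rw [Function.iterate_succ_apply, Function.iterate_succ_apply]
    exact ih (eAx_Gl_mono σ h)

lemma eAx_Gl_iter_mono_ae (n : ℕ) {u v : Euc d → ℝ≥0∞}
    (h : u ≤ᵐ[(volume : Measure (Euc d))] v) :
    (eAx_Gl σ)^[n] u ≤ᵐ[(volume : Measure (Euc d))] (eAx_Gl σ)^[n] v := by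
  induction n generalizing u v with
  | zero => exact h
  | succ n ih =>
    rw [Function.iterate_succ_apply, Function.iterate_succ_apply]
    exact ih (eAx_Gl_mono_ae σ h)

lemma eAx_Gl_iter_jensen (n : ℕ) {u : Euc d → ℝ≥0∞} (hu : Measurable u) {s : ℝ} (hs : 1 ≤ s) :
    ∀ x, ((eAx_Gl σ)^[n] u x) ^ s ≤ (eAx_Gl σ)^[n] (fun z => u z ^ s) x := by
  induction n generalizing u with
  | zero => exact fun x => le_rfl
  | succ n ih =>
    intro x
    rw [Function.iterate_succ_apply, Function.iterate_succ_apply]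
    calc ((eAx_Gl σ)^[n] (eAx_Gl σ u) x) ^ s ≤ (eAx_Gl σ)^[n] (fun z => eAx_Gl σ u z ^ s) x :=
          ih (eAx_measurable_Gl σ hu) x
      _ ≤ (eAx_Gl σ)^[n] (eAx_Gl σ fun z => u z ^ s) x :=
          eAx_Gl_iter_mono_pt σ n (eAx_Gl_jensen σ hu hs) x

lemma eAx_mul_rpow_self (t : ℝ≥0∞) {s : ℝ} (hs : 0 ≤ s) : t * t ^ s = t ^ (1 + s) := by
  rw [ENNReal.rpow_add_of_nonneg 1 s zero_le_one hs, ENNReal.rpow_one]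

/-- The eAx_key pointwise lower bound, in the lintegral world. -/
lemma eAx_key {p q : ℝ} (hp : 1 < p) (hpq : p < q) (hq2 : 2 ≤ q)
    (hvalid : opNorm (convOp (F := ℂ) σ) (ENNReal.ofReal p) (ENNReal.ofReal q) ≠ ⊤)
    {F : Euc d → ℝ≥0∞} (hFm : Measurable F)
    (hFp : ∫⁻ x, F x ^ p ∂(volume : Measure (Euc d)) = 1)
    (hAM : opNorm (convOp (F := ℂ) σ) (ENNReal.ofReal p) (ENNReal.ofReal q)
      ≤ (∫⁻ x, eAx_Tl σ F x ^ q ∂(volume : Measure (Euc d))) ^ (1/q)) :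
    ∀ N : ℕ, ∃ c : ℝ≥0∞, c ≠ 0 ∧ c ≠ ⊤ ∧
      ∀ᵐ x ∂(volume : Measure (Euc d)),
        c * ((eAx_Gl σ)^[N] F x) ^ (((q - 1)/(p - 1)) ^ N) ≤ F x := by
  have hq1 : 1 < q := lt_trans hp hpq
  have hp0 : 0 < p := lt_trans one_pos hp
  have hq0 : 0 < q := lt_trans one_pos hq1
  have hp1 : (0:ℝ) < p - 1 := by linarith
  have hq1' : (0:ℝ) < q - 1 := by linarith
  set r : ℝ := (q - 1)/(p - 1) with hr
  have hr1 : 1 ≤ r := by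
    rw [hr, le_div_iff₀ hp1]; linarith
  have hr0 : 0 < r := lt_of_lt_of_le one_pos hr1
  set A := opNorm (convOp (F := ℂ) σ) (ENNReal.ofReal p) (ENNReal.ofReal q) with hA
  set M := (∫⁻ x, eAx_Tl σ F x ^ q ∂(volume : Measure (Euc d))) ^ (1/q) with hM
  have hMA : M ≤ A := by
    have h := eAx_OB σ hp0 hq0 hFm
    rwa [hFp, ENNReal.one_rpow, mul_one] at h
  have hMeq : M = A := le_antisymm hMA hAM
  by_cases hA0 : A = 0
  · -- degenerate case
    have hM0 : ∫⁻ x, eAx_Tl σ F x ^ q ∂(volume : Measure (Euc d)) = 0 := by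
      have : M = 0 := by rw [hMeq, hA0]
      rw [hM] at this
      rcases ENNReal.rpow_eq_zero_iff.mp this with ⟨h1, _⟩ | ⟨_, hneg⟩
      · exact h1
      · exact absurd hneg (by positivity : (0:ℝ) < 1/q).not_gt
    have hT0 : ∀ᵐ x ∂(volume : Measure (Euc d)), eAx_Tl σ F x = 0 := by
      have := (lintegral_eq_zero_iff ((eAx_measurable_Tl σ hFm).pow_const q)).mp hM0
      filter_upwards [this] with x hx
      simp only [Pi.zero_apply] at hx
      rcases ENNReal.rpow_eq_zero_iff.mp hx with ⟨h1, _⟩ | ⟨_, hneg⟩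
      · exact h1
      · exact absurd hneg hq0.not_gt
    have hG0 : eAx_Gl σ F ≤ᵐ[(volume : Measure (Euc d))] (fun _ => (0:ℝ≥0∞)) := by
      have h1 : eAx_Tl σ F ≤ᵐ[(volume : Measure (Euc d))] (fun _ => (0:ℝ≥0∞)) := by
        filter_upwards [hT0] with x hx; exact hx.le
      have h2 := eAx_Sl_mono_ae σ h1
      have h3 : eAx_Sl σ (fun _ => (0:ℝ≥0∞)) = fun _ => (0:ℝ≥0∞) := by
        funext z; simp [eAx_Sl]
      rwa [h3] at h2
    intro N
    match N with
    | 0 =>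
      refine ⟨1, one_ne_zero, ENNReal.one_ne_top, ?_⟩
      refine Filter.Eventually.of_forall fun x => ?_
      simp [Function.iterate_zero, pow_zero, ENNReal.rpow_one]
    | Nat.succ n =>
      refine ⟨1, one_ne_zero, ENNReal.one_ne_top, ?_⟩
      have hzf : (eAx_Gl σ)^[n] (fun _ => (0:ℝ≥0∞)) = fun _ => (0:ℝ≥0∞) := by
        induction n with
        | zero => rfl
        | succ m ih => rw [Function.iterate_succ_apply, eAx_Gl_zero σ, ih]
      have h4 : (eAx_Gl σ)^[n + 1] F ≤ᵐ[(volume : Measure (Euc d))] (fun _ => (0:ℝ≥0∞)) := by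
        rw [Function.iterate_succ_apply]
        have := eAx_Gl_iter_mono_ae σ n hG0
        rwa [hzf] at this
      filter_upwards [h4] with x hx
      have hx0 : (eAx_Gl σ)^[n + 1] F x = 0 := le_antisymm hx zero_le
      rw [hx0, ENNReal.zero_rpow_of_pos (by positivity), mul_zero]
      exact zero_le
  · -- nondegenerate case
    set p' := Real.conjExponent p with hp'def
    set q' := Real.conjExponent q with hq'def
    have hpc : p.HolderConjugate p' := Real.HolderConjugate.conjExponent hp
    have hqc : q.HolderConjugate q' := Real.HolderConjugate.conjExponent hq1
    have hp'0 : 0 < p' := hpc.symm.pos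
    have hq'0 : 0 < q' := hqc.symm.pos
    have hAq0 : A ^ q ≠ 0 := by
      intro hcon
      rcases ENNReal.rpow_eq_zero_iff.mp hcon with ⟨h1, _⟩ | ⟨_, hneg⟩
      · exact hA0 h1
      · exact absurd hneg hq0.not_gt
    have hAqt : A ^ q ≠ ⊤ := (ENNReal.rpow_lt_top_of_nonneg hq0.le hvalid).ne
    set W : Euc d → ℝ≥0∞ := fun x => eAx_Tl σ F x ^ (q - 1) with hW
    have hWm : Measurable W := (eAx_measurable_Tl σ hFm).pow_const _
    set H := eAx_Sl σ W with hH
    have hHm : Measurable H := eAx_measurable_Sl σ hWm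
    have hMq : ∫⁻ x, eAx_Tl σ F x ^ q ∂(volume : Measure (Euc d)) = A ^ q := by
      have h1 : ((∫⁻ x, eAx_Tl σ F x ^ q ∂(volume : Measure (Euc d))) ^ (1/q)) ^ q
          = A ^ q := by rw [← hM, hMeq]
      rwa [eAx_rpow_inv_rpow hq0.ne'] at h1
    have hFH : ∫⁻ x, F x * H x ∂(volume : Measure (Euc d)) = A ^ q := by
      rw [hH, eAx_adj σ hFm hWm, ← hMq]
      refine lintegral_congr fun x => ?_
      have h1 : eAx_Tl σ F x * W x = eAx_Tl σ F x ^ (1 + (q - 1)) :=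
        eAx_mul_rpow_self _ (by linarith : (0:ℝ) ≤ q - 1)
      rw [h1, show 1 + (q - 1) = q by ring]
    have hWq' : ∫⁻ x, W x ^ q' ∂(volume : Measure (Euc d)) = A ^ q := by
      rw [← hMq]
      refine lintegral_congr fun x => ?_
      have h1 : W x ^ q' = eAx_Tl σ F x ^ ((q - 1) * q') := by
        rw [hW, ← ENNReal.rpow_mul]
      rw [h1, eAx_conj_sub_one_mul hqc.symm]
    have hexp : q * (1/q') = q - 1 := by
      have h2 : (q - 1) * q' = q := eAx_conj_sub_one_mul hqc.symm
      rw [mul_one_div, div_eq_iff hq'0.ne']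
      linarith [h2]
    have hABound : (∫⁻ x, H x ^ p' ∂(volume : Measure (Euc d))) ^ (1/p') ≤ A ^ q := by
      have h := eAx_AB σ hpc hqc hWm
      rw [hWq'] at h
      calc (∫⁻ x, H x ^ p' ∂(volume : Measure (Euc d))) ^ (1/p')
          ≤ A * (A ^ q) ^ (1/q') := h
        _ = A * A ^ (q - 1) := by rw [← ENNReal.rpow_mul, hexp]
        _ = A ^ (1 + (q - 1)) := by
            rw [ENNReal.rpow_add_of_nonneg 1 (q - 1) zero_le_one (by linarith),
              ENNReal.rpow_one]
        _ = A ^ q := by rw [show 1 + (q - 1) = q by ring]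
    have hHolder : A ^ q ≤ (∫⁻ x, H x ^ p' ∂(volume : Measure (Euc d))) ^ (1/p') := by
      have h := ENNReal.lintegral_mul_le_Lp_mul_Lq (volume : Measure (Euc d)) hpc
        hFm.aemeasurable hHm.aemeasurable
      simp only [Pi.mul_apply] at h
      rw [hFp, ENNReal.one_rpow, one_mul, hFH] at h
      exact h
    have hDr : (∫⁻ x, H x ^ p' ∂(volume : Measure (Euc d))) ^ (1/p') = A ^ q :=
      le_antisymm hABound hHolder
    have hD0 : ∫⁻ x, H x ^ p' ∂(volume : Measure (Euc d)) ≠ 0 := by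
      intro hcon
      rw [hcon, ENNReal.zero_rpow_of_pos (by positivity)] at hDr
      exact hAq0 hDr.symm
    have hDt : ∫⁻ x, H x ^ p' ∂(volume : Measure (Euc d)) ≠ ⊤ := by
      intro hcon
      rw [hcon, ENNReal.top_rpow_of_pos (by positivity)] at hDr
      exact hAqt hDr.symm
    have heqFH : ∫⁻ x, F x * H x ∂(volume : Measure (Euc d))
        = (∫⁻ x, H x ^ p' ∂(volume : Measure (Euc d))) ^ (1/p') := by
      rw [hDr, hFH]
    have hprop := eAx_hoelder_eq hpc hFm hHm hFp hD0 hDt heqFH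
    have hDval : ∫⁻ z, H z ^ p' ∂(volume : Measure (Euc d)) = (A ^ q) ^ p' := by
      have h := congrArg (fun t => t ^ p') hDr
      rwa [eAx_rpow_inv_rpow hp'0.ne'] at h
    have hHval : ∀ᵐ x ∂(volume : Measure (Euc d)), H x = A ^ q * F x ^ (p - 1) := by
      filter_upwards [hprop] with x hx
      have h1 := congrArg (fun t => t ^ (1/p')) hx
      rw [eAx_rpow_rpow_inv hp'0.ne'] at h1
      rw [h1, ENNReal.mul_rpow_of_nonneg _ _ (by positivity), hDval,
        eAx_rpow_rpow_inv hp'0.ne', ← ENNReal.rpow_mul]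
      congr 1
      have h2 : (p - 1) * p' = p := eAx_conj_sub_one_mul hpc.symm
      rw [mul_one_div, show p / p' = p - 1 from by rw [div_eq_iff hp'0.ne']; linarith [h2]]
    have hjen : ∀ x, (eAx_Gl σ F x) ^ (q - 1) ≤ H x := fun x =>
      eAx_Sl_jensen σ (eAx_measurable_Tl σ hFm) (by linarith : (1:ℝ) ≤ q - 1) x
    set κ := ((A ^ q)⁻¹) ^ (1/(p - 1)) with hκ
    have hκ0 : κ ≠ 0 := by
      intro hcon
      rcases ENNReal.rpow_eq_zero_iff.mp hcon with ⟨h1, _⟩ | ⟨_, hneg⟩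
      · exact hAqt (ENNReal.inv_eq_zero.mp h1)
      · exact absurd hneg (by positivity : (0:ℝ) < 1/(p - 1)).not_gt
    have hκt : κ ≠ ⊤ :=
      (ENNReal.rpow_lt_top_of_nonneg (by positivity) (ENNReal.inv_ne_top.mpr hAq0)).ne
    have hbase : ∀ᵐ x ∂(volume : Measure (Euc d)), κ * (eAx_Gl σ F x) ^ r ≤ F x := by
      filter_upwards [hHval] with x hx
      have h1 : (eAx_Gl σ F x) ^ (q - 1) ≤ A ^ q * F x ^ (p - 1) := by
        rw [← hx]; exact hjen x
      have h2 := ENNReal.rpow_le_rpow h1 (by positivity : (0:ℝ) ≤ 1/(p - 1))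
      rw [← ENNReal.rpow_mul, ENNReal.mul_rpow_of_nonneg _ _ (by positivity),
        ← ENNReal.rpow_mul (F x)] at h2
      have e1 : (q - 1) * (1/(p - 1)) = r := by rw [hr]; field_simp
      have e2 : (p - 1) * (1/(p - 1)) = 1 := by field_simp
      rw [e1, e2, ENNReal.rpow_one] at h2
      calc κ * eAx_Gl σ F x ^ r ≤ κ * ((A ^ q) ^ (1/(p - 1)) * F x) := mul_le_mul_right h2 κ
        _ = (κ * (A ^ q) ^ (1/(p - 1))) * F x := by rw [mul_assoc]
        _ = F x := by
            rw [hκ, ← ENNReal.mul_rpow_of_nonneg _ _ (by positivity),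
              ENNReal.inv_mul_cancel hAq0 hAqt, ENNReal.one_rpow, one_mul]
    intro N
    induction N with
    | zero =>
      refine ⟨1, one_ne_zero, ENNReal.one_ne_top, ?_⟩
      refine Filter.Eventually.of_forall fun x => ?_
      simp [pow_zero, ENNReal.rpow_one]
    | succ n ih =>
      obtain ⟨c, hc0, hct, hcN⟩ := ih
      have hmono := eAx_Gl_iter_mono_ae σ n hbase
      have hscal : (eAx_Gl σ)^[n] (fun z => κ * (eAx_Gl σ F z) ^ r)
          = fun x => κ * (eAx_Gl σ)^[n] (fun z => (eAx_Gl σ F z) ^ r) x :=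
        eAx_Gl_iter_const_mul σ n ((eAx_measurable_Gl σ hFm).pow_const r) κ
      have hstep : ∀ᵐ x ∂(volume : Measure (Euc d)),
          κ * ((eAx_Gl σ)^[n+1] F x) ^ r ≤ (eAx_Gl σ)^[n] F x := by
        filter_upwards [hmono] with x hx
        rw [hscal] at hx
        refine le_trans ?_ hx
        have hj : ((eAx_Gl σ)^[n] (eAx_Gl σ F) x) ^ r ≤ (eAx_Gl σ)^[n] (fun z => (eAx_Gl σ F z) ^ r) x :=
          eAx_Gl_iter_jensen σ n (eAx_measurable_Gl σ hFm) hr1 x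
        rw [Function.iterate_succ_apply]
        exact mul_le_mul_right hj κ
      refine ⟨c * κ ^ (r ^ n), ?_, ?_, ?_⟩
      · refine mul_ne_zero hc0 ?_
        intro hcon
        rcases ENNReal.rpow_eq_zero_iff.mp hcon with ⟨h1, _⟩ | ⟨_, hneg⟩
        · exact hκ0 h1
        · exact absurd hneg (by positivity : (0:ℝ) < r ^ n).not_gt
      · exact ENNReal.mul_ne_top hct (ENNReal.rpow_lt_top_of_nonneg (by positivity) hκt).ne
      · filter_upwards [hstep, hcN] with x hx hN
        have h1 := ENNReal.rpow_le_rpow hx (by positivity : (0:ℝ) ≤ r ^ n)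
        rw [ENNReal.mul_rpow_of_nonneg _ _ (by positivity),
          ← ENNReal.rpow_mul ((eAx_Gl σ)^[n+1] F x),
          show r * r ^ n = r ^ (n + 1) from (pow_succ' r n).symm] at h1
        calc c * κ ^ (r ^ n) * ((eAx_Gl σ)^[n+1] F x) ^ (r ^ (n + 1))
            = c * (κ ^ (r ^ n) * ((eAx_Gl σ)^[n+1] F x) ^ (r ^ (n + 1))) := by rw [mul_assoc]
          _ ≤ c * ((eAx_Gl σ)^[n] F x) ^ (r ^ n) := mul_le_mul_right h1 c
          _ ≤ F x := hN


lemma eAx_ofReal_convOp_le (v : Euc d → ℝ) (hv : ∀ z, 0 ≤ v z) (x : Euc d) :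
    ENNReal.ofReal (convOp σ v x) ≤ eAx_Tl σ (fun z => ENNReal.ofReal (v z)) x := by
  by_cases hint : Integrable (fun y => v (x - y)) σ
  · rw [show convOp σ v x = ∫ y, v (x - y) ∂σ from rfl,
      ofReal_integral_eq_lintegral_ofReal hint (Filter.Eventually.of_forall fun y => hv _)]
    exact le_rfl
  · rw [show convOp σ v x = ∫ y, v (x - y) ∂σ from rfl, integral_undef hint]
    simp

lemma eAx_ofReal_adjOp_le (v : Euc d → ℝ) (hv : ∀ z, 0 ≤ v z) (x : Euc d) :
    ENNReal.ofReal (adjOp σ v x) ≤ eAx_Sl σ (fun z => ENNReal.ofReal (v z)) x := by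
  by_cases hint : Integrable (fun y => v (x + y)) σ
  · rw [show adjOp σ v x = ∫ y, v (x + y) ∂σ from rfl,
      ofReal_integral_eq_lintegral_ofReal hint (Filter.Eventually.of_forall fun y => hv _)]
    exact le_rfl
  · rw [show adjOp σ v x = ∫ y, v (x + y) ∂σ from rfl, integral_undef hint]
    simp

lemma eAx_iter_nonneg (f : Euc d → ℝ) (hf : ∀ x, 0 ≤ f x) :
    ∀ N x, 0 ≤ ((fun g : Euc d → ℝ => adjOp σ (convOp σ g))^[N] f) x := by
  intro N
  induction N with
  | zero => exact hf
  | succ n ih =>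
    intro x
    rw [Function.iterate_succ_apply']
    refine integral_nonneg fun y => ?_
    exact integral_nonneg fun z => ih _

lemma eAx_transfer {f : Euc d → ℝ} (hf : ∀ x, 0 ≤ f x) {F : Euc d → ℝ≥0∞}
    (hFf : (fun x => ENNReal.ofReal (f x)) ≤ᵐ[(volume : Measure (Euc d))] F) :
    ∀ N, (fun x => ENNReal.ofReal
        (((fun g : Euc d → ℝ => adjOp σ (convOp σ g))^[N] f) x))
      ≤ᵐ[(volume : Measure (Euc d))] (eAx_Gl σ)^[N] F := by
  intro N
  induction N with
  | zero => exact hFf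
  | succ n ih =>
    set u := (fun g : Euc d → ℝ => adjOp σ (convOp σ g))^[n] f with hu
    have hun : ∀ z, 0 ≤ u z := eAx_iter_nonneg σ f hf n
    have h1 : (fun x => ENNReal.ofReal (convOp σ u x))
        ≤ᵐ[(volume : Measure (Euc d))] eAx_Tl σ ((eAx_Gl σ)^[n] F) := by
      filter_upwards [eAx_Tl_mono_ae σ ih] with x hx
      exact le_trans (eAx_ofReal_convOp_le σ u hun x) hx
    have hcn : ∀ z, 0 ≤ convOp σ u z := fun z => integral_nonneg fun y => hun _
    have h2 : (fun x => ENNReal.ofReal (adjOp σ (convOp σ u) x))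
        ≤ᵐ[(volume : Measure (Euc d))] eAx_Sl σ (eAx_Tl σ ((eAx_Gl σ)^[n] F)) := by
      filter_upwards [eAx_Sl_mono_ae σ h1] with x hx
      exact le_trans (eAx_ofReal_adjOp_le σ _ hcn x) hx
    have e1 : (fun g : Euc d → ℝ => adjOp σ (convOp σ g))^[n+1] f
        = adjOp σ (convOp σ u) := by
      rw [Function.iterate_succ_apply']
    have e2 : (eAx_Gl σ)^[n+1] F = eAx_Sl σ (eAx_Tl σ ((eAx_Gl σ)^[n] F)) := by
      rw [Function.iterate_succ_apply']
      rfl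
    rw [e1, e2]
    exact h2


/-- Pointwise lower bound for extremizers in terms of iterates of `T^*T`. -/
theorem extremizer_lower_bound_iterates
    (d : ℕ) (hd : 1 ≤ d)
    (σ : Measure (Euc d)) [IsProbabilityMeasure σ]
    (hcpt : ∃ K : Set (Euc d), IsCompact K ∧ σ Kᶜ = 0)
    (p q : ℝ) (hp : 1 < p) (hpq : p < q) (hq2 : 2 ≤ q)
    (hvalid : opNorm (convOp (F := ℂ) σ) (ENNReal.ofReal p) (ENNReal.ofReal q) < ⊤)
    (f : Euc d → ℝ) (hfpos : ∀ x, 0 ≤ f x)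
    (hf : MemLp f (ENNReal.ofReal p) volume)
    (hnorm : eLpNorm f (ENNReal.ofReal p) volume = 1)
    (hext : eLpNorm (convOp σ f) (ENNReal.ofReal q) volume
      = opNorm (convOp (F := ℂ) σ) (ENNReal.ofReal p) (ENNReal.ofReal q)
        * eLpNorm f (ENNReal.ofReal p) volume) :
    ∀ N : ℕ, ∃ c : ℝ, 0 < c ∧
      ∀ᵐ x ∂(volume : Measure (Euc d)),
        c * (((fun g : Euc d → ℝ => adjOp σ (convOp σ g))^[N] f) x)
              ^ (((q - 1) / (p - 1)) ^ N)
          ≤ f x := by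
  intro N
  have hp0 : (0:ℝ) < p := lt_trans one_pos hp
  have hq0 : (0:ℝ) < q := by linarith
  obtain ⟨fs, hfs_sm, hffs⟩ := hf.1
  set F : Euc d → ℝ≥0∞ := fun x => (‖fs x‖₊ : ℝ≥0∞) with hFdef
  have hFm : Measurable F := hfs_sm.measurable.enorm
  have hFf_eq : (fun x => ENNReal.ofReal (f x)) =ᵐ[(volume : Measure (Euc d))] F := by
    filter_upwards [hffs] with x hx
    rw [hFdef]
    simp only []
    rw [← hx, ← enorm_eq_nnnorm, Real.enorm_eq_ofReal (hfpos x)]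
  have hFnn : (fun x => (‖f x‖₊ : ℝ≥0∞)) =ᵐ[(volume : Measure (Euc d))] F := by
    filter_upwards [hFf_eq] with x hx
    rw [← hx, ← enorm_eq_nnnorm, Real.enorm_eq_ofReal (hfpos x)]
  have hFp : ∫⁻ x, F x ^ p ∂(volume : Measure (Euc d)) = 1 := by
    have h1 : (∫⁻ x, (‖f x‖₊ : ℝ≥0∞) ^ p ∂(volume : Measure (Euc d))) ^ (1/p) = 1 := by
      rw [← eAx_eLpNorm_ofReal f hp0]
      exact hnorm
    have h2 : ∫⁻ x, (‖f x‖₊ : ℝ≥0∞) ^ p ∂(volume : Measure (Euc d)) = 1 := by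
      have := congrArg (fun t => t ^ p) h1
      rwa [eAx_rpow_inv_rpow hp0.ne', ENNReal.one_rpow] at this
    rw [← h2]
    refine lintegral_congr_ae ?_
    filter_upwards [hFnn] with x hx
    rw [hx]
  have hAM : opNorm (convOp (F := ℂ) σ) (ENNReal.ofReal p) (ENNReal.ofReal q)
      ≤ (∫⁻ x, eAx_Tl σ F x ^ q ∂(volume : Measure (Euc d))) ^ (1/q) := by
    have hA_eq : eLpNorm (convOp σ f) (ENNReal.ofReal q) volume
        = opNorm (convOp (F := ℂ) σ) (ENNReal.ofReal p) (ENNReal.ofReal q) := by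
      rw [hext, hnorm, mul_one]
    rw [← hA_eq, eAx_eLpNorm_ofReal _ hq0]
    have hTle : eAx_Tl σ (fun z => (‖f z‖₊ : ℝ≥0∞))
        ≤ᵐ[(volume : Measure (Euc d))] eAx_Tl σ F := by
      refine eAx_Tl_mono_ae σ ?_
      filter_upwards [hFnn] with z hz
      exact hz.le
    have hpt : ∀ᵐ x ∂(volume : Measure (Euc d)),
        (‖convOp σ f x‖₊ : ℝ≥0∞) ≤ eAx_Tl σ F x := by
      filter_upwards [hTle] with x hx
      refine le_trans ?_ hx
      exact enorm_integral_le_lintegral_enorm _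
    refine ENNReal.rpow_le_rpow (lintegral_mono_ae ?_) (by positivity)
    filter_upwards [hpt] with x hx
    exact ENNReal.rpow_le_rpow hx hq0.le
  obtain ⟨c, hc0, hct, hcae⟩ := eAx_key σ hp hpq hq2 hvalid.ne hFm hFp hAM N
  have htr := eAx_transfer σ hfpos hFf_eq.le N
  refine ⟨c.toReal, ENNReal.toReal_pos hc0 hct, ?_⟩
  filter_upwards [hcae, htr, hFf_eq] with x hc ht he
  have hr0 : (0:ℝ) < (q - 1)/(p - 1) := div_pos (by linarith) (by linarith)
  have hρ0 : (0:ℝ) ≤ ((q - 1)/(p - 1)) ^ N := (pow_pos hr0 N).le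
  have hun : 0 ≤ ((fun g : Euc d → ℝ => adjOp σ (convOp σ g))^[N] f) x :=
    eAx_iter_nonneg σ f hfpos N x
  have h1 : ENNReal.ofReal (((fun g : Euc d → ℝ => adjOp σ (convOp σ g))^[N] f) x)
        ^ (((q - 1)/(p - 1)) ^ N)
      ≤ ((eAx_Gl σ)^[N] F x) ^ (((q - 1)/(p - 1)) ^ N) :=
    ENNReal.rpow_le_rpow ht hρ0
  have h2 : c * ENNReal.ofReal
      ((((fun g : Euc d → ℝ => adjOp σ (convOp σ g))^[N] f) x) ^ (((q - 1)/(p - 1)) ^ N))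
      ≤ ENNReal.ofReal (f x) := by
    rw [← ENNReal.ofReal_rpow_of_nonneg hun hρ0]
    calc c * ENNReal.ofReal (((fun g : Euc d → ℝ => adjOp σ (convOp σ g))^[N] f) x)
          ^ (((q - 1)/(p - 1)) ^ N)
        ≤ c * ((eAx_Gl σ)^[N] F x) ^ (((q - 1)/(p - 1)) ^ N) := mul_le_mul_right h1 c
      _ ≤ F x := hc
      _ = ENNReal.ofReal (f x) := he.symm
  have h3 := ENNReal.toReal_mono ENNReal.ofReal_ne_top h2
  rw [ENNReal.toReal_mul, ENNReal.toReal_ofReal (Real.rpow_nonneg hun _),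
    ENNReal.toReal_ofReal (hfpos x)] at h3
  exact h3
end
end
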